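/- arXiv:1907.00848 — 7 statements merged into one kernel-verified Lean document; each statement's English description precedes it below -/
import Mathlib

section
/- Let R > 0 and consider the ring weight E(R) = [R^2, R^2 + 1/π], whose Daubechies-operator eigenvalues are λ_k(R) = ∫_{πR^2}^{πR^2+1} (r^k/k!) e^{-r} dr for k = 0,1,2,…. If m is a natural number with m ≤ πR^2 ≤ m+1, then the eigenvalues satisfy the ordering λ_0(R) ≤ λ_1(R) ≤ … ≤ λ_m(R), and λ_{m+1}(R) ≥ λ_{m+2}(R) ≥ λ_{m+3}(R) ≥ …. -/
open Real MeasureTheory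

/-- Eigenvalues of the Daubechies localization operator on the ring
`E(R) = [R², R² + 1/π]`: `λ_k(R) = ∫_{πR²}^{πR²+1} (r^k/k!) e^{-r} dr`. -/
noncomputable def ringEigenvalue (k : ℕ) (R : ℝ) : ℝ :=
  ∫ r in (π * R ^ 2)..(π * R ^ 2 + 1), r ^ k / (Nat.factorial k) * Real.exp (-r)

lemma ring_integrand_step (k : ℕ) (r : ℝ) (hr : 0 ≤ r) :
    r ^ (k + 1) / (Nat.factorial (k + 1)) = r ^ k / (Nat.factorial k) * (r / ((k : ℝ) + 1)) := by
  rw [pow_succ, Nat.factorial_succ]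
  push_cast
  have h1 : (Nat.factorial k : ℝ) ≠ 0 := Nat.cast_ne_zero.mpr (Nat.factorial_ne_zero k)
  have h2 : ((k : ℝ) + 1) ≠ 0 := by positivity
  field_simp

lemma ring_intble (k : ℕ) (a b : ℝ) :
    IntervalIntegrable (fun r => r ^ k / (Nat.factorial k) * Real.exp (-r)) volume a b :=
  (((continuous_pow k).div_const _).mul (Real.continuous_exp.comp continuous_neg)).intervalIntegrable a b

/-- If `m ≤ πR² ≤ m+1`, then `λ_0(R) ≤ λ_1(R) ≤ … ≤ λ_m(R)` and
`λ_{m+1}(R) ≥ λ_{m+2}(R) ≥ …`. -/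
theorem ring_eigenvalue_ordering (R : ℝ) (hR : 0 < R) (m : ℕ)
    (hm₁ : (m : ℝ) ≤ π * R ^ 2) (hm₂ : π * R ^ 2 ≤ (m : ℝ) + 1) :
    (∀ k : ℕ, k < m → ringEigenvalue k R ≤ ringEigenvalue (k + 1) R) ∧
    (∀ k : ℕ, m + 1 ≤ k → ringEigenvalue (k + 1) R ≤ ringEigenvalue k R) := by
  set a := π * R ^ 2 with ha
  have hab : a ≤ a + 1 := by linarith
  constructor
  · intro k hk
    have hkm : ((k : ℝ) + 1) ≤ (m : ℝ) := by exact_mod_cast hk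
    apply intervalIntegral.integral_mono_on hab (ring_intble k a (a + 1))
      (ring_intble (k + 1) a (a + 1))
    intro r hr
    have hr1 : ((k : ℝ) + 1) ≤ r := le_trans (le_trans hkm hm₁) hr.1
    have hr0 : 0 ≤ r := le_trans (by positivity) hr1
    have hexp : 0 < Real.exp (-r) := Real.exp_pos _
    have hpow : 0 ≤ r ^ k / (Nat.factorial k : ℝ) := by positivity
    rw [ring_integrand_step k r hr0]
    have hq : (1 : ℝ) ≤ r / ((k : ℝ) + 1) := by
      rw [le_div_iff₀ (by positivity)]; linarith
    exact mul_le_mul_of_nonneg_right (le_mul_of_one_le_right hpow hq) hexp.le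
  · intro k hk
    have hkm : (m : ℝ) + 1 ≤ (k : ℝ) := by exact_mod_cast hk
    apply intervalIntegral.integral_mono_on hab (ring_intble (k + 1) a (a + 1))
      (ring_intble k a (a + 1))
    intro r hr
    have hr0 : 0 ≤ r := le_trans (le_trans (Nat.cast_nonneg m) hm₁) hr.1
    have hr1 : r ≤ (k : ℝ) + 1 := by
      have := hr.2; linarith
    have hexp : 0 < Real.exp (-r) := Real.exp_pos _
    have hpow : 0 ≤ r ^ k / (Nat.factorial k : ℝ) := by positivity
    rw [ring_integrand_step k r hr0]
    have hq : r / ((k : ℝ) + 1) ≤ 1 := by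
      rw [div_le_one (by positivity)]; linarith
    exact mul_le_mul_of_nonneg_right (mul_le_of_le_one_right hpow hq) hexp.le
end

section
/- There exist constants C > 0 and R_0 > 0 such that for all R ≥ R_0, | sup_{k∈ℕ} ∫_{πR^2}^{πR^2+1} (r^k/k!) e^{-r} dr − 1/(π√2 · R) | ≤ C·R^{-3}. In other words, the operator norm of the Daubechies localization operator on the ring [R^2, R^2 + 1/π] equals (π√2)^{-1} R^{-1} + O(R^{-3}) as R → ∞. -/
open Real MeasureTheory

open Filter Topology Stirling
open scoped Nat

section Aux
lemma sqrtpi_le_stirlingSeq (n : ℕ) : √π ≤ stirlingSeq (n + 1) := by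
  have ht : Tendsto (stirlingSeq ∘ Nat.succ) atTop (𝓝 (√π)) :=
    tendsto_stirlingSeq_sqrt_pi.comp (tendsto_add_atTop_nat 1)
  exact stirlingSeq'_antitone.le_of_tendsto ht n

lemma stirlingSeq_le (n : ℕ) (hn : 1 ≤ n) :
    stirlingSeq (n + 1) ≤ √π * Real.exp (1 / (4 * n)) := by
  have hn' : (1:ℝ) ≤ n := by exact_mod_cast hn
  have key : ∀ m : ℕ, Real.log (stirlingSeq (n + 1)) - (1 / (4 * n) - 1 / (4 * (n + m))) ≤
      Real.log (stirlingSeq (n + m + 1)) := by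
    intro m
    induction m with
    | zero => simp
    | succ m ih =>
      have step := log_stirlingSeq_sub_log_stirlingSeq_succ (n + m + 1)
      have harith : 1 / (4 * (↑(n + m) + 1 : ℝ) ^ 2) ≤ 1 / (4 * ((n:ℝ) + m)) - 1 / (4 * ((n:ℝ) + (m+1))) := by
        push_cast
        rw [div_sub_div _ _ (by positivity) (by positivity)]
        rw [div_le_div_iff₀ (by positivity) (by positivity)]
        have hm : (0:ℝ) ≤ m := Nat.cast_nonneg m
        nlinarith [sq_nonneg ((n:ℝ) + m)]
      have hidx : n + (m + 1) + 1 = n + m + 2 := by omega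
      rw [hidx]
      push_cast at step harith ih ⊢
      linarith
  have hpos : (0:ℝ) < stirlingSeq (n + 1) := stirlingSeq'_pos n
  have hlim : Tendsto (fun m : ℕ => Real.log (stirlingSeq (n + m + 1))) atTop (𝓝 (Real.log (√π))) := by
    have h1 : Tendsto (fun m : ℕ => stirlingSeq (n + m + 1)) atTop (𝓝 (√π)) := by
      have := tendsto_stirlingSeq_sqrt_pi.comp (tendsto_add_atTop_nat (n + 1))
      refine this.congr fun m => by simp [Function.comp]; ring_nf
    exact ((Real.continuousAt_log (by positivity)).tendsto.comp h1)
  have hlog : Real.log (stirlingSeq (n + 1)) - 1 / (4 * n) ≤ Real.log (√π) := by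
    refine ge_of_tendsto hlim (Filter.Eventually.of_forall fun m => ?_)
    have h0 : (0:ℝ) ≤ 1 / (4 * ((n:ℝ) + m)) := by positivity
    have := key m
    push_cast at this
    linarith
  calc stirlingSeq (n + 1) = Real.exp (Real.log (stirlingSeq (n + 1))) := (Real.exp_log hpos).symm
    _ ≤ Real.exp (Real.log (√π) + 1 / (4 * n)) := by apply Real.exp_le_exp.2; linarith
    _ = √π * Real.exp (1 / (4 * n)) := by
        rw [Real.exp_add, Real.exp_log (by positivity)]

lemma stirling_expand (k : ℕ) (hk : 1 ≤ k) :
    (k ! : ℝ) = stirlingSeq k * (√2 * √k) * ((k:ℝ) ^ k * Real.exp (-(k:ℝ))) := by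
  have hk0 : (0:ℝ) < k := by exact_mod_cast hk
  rw [stirlingSeq]
  have h1 : ((k:ℝ) / Real.exp 1) ^ k = (k:ℝ) ^ k * Real.exp (-(k:ℝ)) := by
    rw [div_pow, Real.exp_one_pow, Real.exp_neg, div_eq_mul_inv]
  have h2 : √(2 * k : ℝ) = √2 * √k := Real.sqrt_mul (by norm_num) _
  rw [h1, h2]
  field_simp

lemma fkk_le (k : ℕ) (hk : 1 ≤ k) :
    (k:ℝ) ^ k * Real.exp (-(k:ℝ)) / (k ! : ℝ) ≤ 1 / (√(2*π) * √k) := by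
  obtain ⟨n, rfl⟩ : ∃ n, k = n + 1 := ⟨k - 1, by omega⟩
  have hs := sqrtpi_le_stirlingSeq n
  have hkk : (0:ℝ) < (↑(n+1):ℝ) ^ (n+1) * Real.exp (-(↑(n+1):ℝ)) := by positivity
  have hfac : (0:ℝ) < ((n+1)! : ℝ) := by exact_mod_cast Nat.factorial_pos (n+1)
  have hge : √π * (√2 * √(↑(n+1):ℝ)) * ((↑(n+1):ℝ) ^ (n+1) * Real.exp (-(↑(n+1):ℝ))) ≤ ((n+1)! : ℝ) := by
    rw [stirling_expand (n+1) (by omega)]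
    have h2 : (0:ℝ) ≤ √2 * √(↑(n+1):ℝ) := by positivity
    exact mul_le_mul_of_nonneg_right (mul_le_mul_of_nonneg_right hs h2) hkk.le
  rw [div_le_div_iff₀ (by positivity) (by positivity)]
  have h2 : √(2*π) = √2 * √π := Real.sqrt_mul (by norm_num) _
  rw [h2]
  have heq : (↑(n+1):ℝ) ^ (n+1) * Real.exp (-(↑(n+1):ℝ)) * (√2 * √π * √(↑(n+1):ℝ))
      = √π * (√2 * √(↑(n+1):ℝ)) * ((↑(n+1):ℝ) ^ (n+1) * Real.exp (-(↑(n+1):ℝ))) := by ring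
  rw [heq, one_mul]
  exact hge

lemma le_fkk (k : ℕ) (hk : 2 ≤ k) :
    Real.exp (-(1 / (2*(k:ℝ)))) / (√(2*π) * √k) ≤ (k:ℝ) ^ k * Real.exp (-(k:ℝ)) / (k ! : ℝ) := by
  obtain ⟨n, rfl⟩ : ∃ n, k = n + 1 := ⟨k - 1, by omega⟩
  have hn1 : 1 ≤ n := by omega
  have hs := stirlingSeq_le n hn1
  have hcast : (1:ℝ) ≤ n := by exact_mod_cast hn1
  have hee : Real.exp (1 / (4 * (n:ℝ))) ≤ Real.exp (1 / (2 * (↑(n+1):ℝ))) := by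
    apply Real.exp_le_exp.2
    rw [div_le_div_iff₀ (by positivity) (by positivity)]
    push_cast; linarith
  have hfac : (0:ℝ) < ((n+1)! : ℝ) := by exact_mod_cast Nat.factorial_pos (n+1)
  have hkk : (0:ℝ) < (↑(n+1):ℝ) ^ (n+1) * Real.exp (-(↑(n+1):ℝ)) := by positivity
  have h1 : stirlingSeq (n+1) ≤ √π * Real.exp (1 / (2 * (↑(n+1):ℝ))) := by
    refine hs.trans ?_
    exact mul_le_mul_of_nonneg_left hee (Real.sqrt_nonneg π)
  have h2 : (0:ℝ) ≤ √2 * √(↑(n+1):ℝ) := by positivity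
  have hfacle : ((n+1)! : ℝ) ≤ √π * Real.exp (1 / (2 * (↑(n+1):ℝ))) * (√2 * √(↑(n+1):ℝ)) * ((↑(n+1):ℝ) ^ (n+1) * Real.exp (-(↑(n+1):ℝ))) := by
    rw [stirling_expand (n+1) (by omega)]
    exact mul_le_mul_of_nonneg_right (mul_le_mul_of_nonneg_right h1 h2) hkk.le
  rw [div_le_div_iff₀ (by positivity) hfac]
  have h2' : √(2*π) = √2 * √π := Real.sqrt_mul (by norm_num) _
  have hexpinv : Real.exp (-(1 / (2 * (↑(n+1):ℝ)))) * Real.exp (1 / (2 * (↑(n+1):ℝ))) = 1 := by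
    rw [← Real.exp_add]; simp
  have hstep : Real.exp (-(1 / (2*(↑(n+1):ℝ)))) * ((n+1)! : ℝ)
      ≤ Real.exp (-(1 / (2*(↑(n+1):ℝ)))) * (√π * Real.exp (1 / (2 * (↑(n+1):ℝ))) * (√2 * √(↑(n+1):ℝ)) * ((↑(n+1):ℝ) ^ (n+1) * Real.exp (-(↑(n+1):ℝ)))) :=
    mul_le_mul_of_nonneg_left hfacle (Real.exp_pos _).le
  have hfin : Real.exp (-(1 / (2*(↑(n+1):ℝ)))) * (√π * Real.exp (1 / (2 * (↑(n+1):ℝ))) * (√2 * √(↑(n+1):ℝ)) * ((↑(n+1):ℝ) ^ (n+1) * Real.exp (-(↑(n+1):ℝ))))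
      = (↑(n+1):ℝ) ^ (n+1) * Real.exp (-(↑(n+1):ℝ)) * (√(2*π) * √(↑(n+1):ℝ)) := by
    rw [h2']
    linear_combination (√π * (√2 * √(↑(n+1):ℝ)) * ((↑(n+1):ℝ) ^ (n+1) * Real.exp (-(↑(n+1):ℝ)))) * hexpinv
  linarith

lemma exp_form (k : ℕ) {r : ℝ} (hr : 0 < r) :
    r ^ k * Real.exp (-r) = Real.exp ((k:ℝ) * Real.log r - r) := by
  rw [Real.exp_sub, Real.exp_nat_mul, Real.exp_log hr, Real.exp_neg, div_eq_mul_inv]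

-- (A)
lemma peak_bound (k : ℕ) (hk : 1 ≤ k) {r : ℝ} (hr : 0 < r) :
    r ^ k * Real.exp (-r) ≤ (k:ℝ) ^ k * Real.exp (-(k:ℝ)) := by
  have hk0 : (0:ℝ) < k := by exact_mod_cast hk
  rw [exp_form k hr, exp_form k hk0]
  apply Real.exp_le_exp.2
  have hlog : Real.log (r / k) ≤ r / k - 1 := Real.log_le_sub_one_of_pos (by positivity)
  rw [Real.log_div hr.ne' hk0.ne'] at hlog
  have := mul_le_mul_of_nonneg_left hlog hk0.le
  have hdiv : (k:ℝ) * (r / k - 1) = r - k := by field_simp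
  nlinarith

-- (B)
lemma left_mono (k : ℕ) {a r : ℝ} (ha : 0 < a) (hra : a ≤ r) (hka : (k:ℝ) ≤ a) :
    r ^ k * Real.exp (-r) ≤ a ^ k * Real.exp (-a) := by
  have hr : (0:ℝ) < r := lt_of_lt_of_le ha hra
  rw [exp_form k hr, exp_form k ha]
  apply Real.exp_le_exp.2
  have hlog : Real.log (r / a) ≤ r / a - 1 := Real.log_le_sub_one_of_pos (by positivity)
  rw [Real.log_div hr.ne' ha.ne'] at hlog
  have hk0 : (0:ℝ) ≤ k := Nat.cast_nonneg k
  have h1 : (k:ℝ) * (Real.log r - Real.log a) ≤ (k:ℝ) * (r / a - 1) :=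
    mul_le_mul_of_nonneg_left hlog hk0
  have h2 : (k:ℝ) * (r / a - 1) ≤ r - a := by
    rw [div_sub_one ha.ne', ← mul_div_assoc, div_le_iff₀ ha]
    nlinarith
  linarith

-- (C)
lemma peak_lower (k : ℕ) (hk : 1 ≤ k) {r : ℝ} (hr : 0 < r) :
    (k:ℝ) ^ k * Real.exp (-(k:ℝ)) * Real.exp (-((r - k) ^ 2 / r)) ≤ r ^ k * Real.exp (-r) := by
  have hk0 : (0:ℝ) < k := by exact_mod_cast hk
  rw [exp_form k hr, exp_form k hk0, ← Real.exp_add]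
  apply Real.exp_le_exp.2
  have hlog : Real.log ((k:ℝ) / r) ≤ (k:ℝ) / r - 1 := Real.log_le_sub_one_of_pos (by positivity)
  rw [Real.log_div hk0.ne' hr.ne'] at hlog
  have h1 : (k:ℝ) * (Real.log k - Real.log r) ≤ (k:ℝ) * ((k:ℝ) / r - 1) :=
    mul_le_mul_of_nonneg_left hlog hk0.le
  have h2 : (k:ℝ) * ((k:ℝ) / r - 1) = (k:ℝ) - r + (r - k) ^ 2 / r - (r - k)^2 / r + ((k:ℝ)^2/r - 2*k + r) := by
    field_simp; ring
  have h3 : (k:ℝ)^2/r - 2*(k:ℝ) + r = (r - k)^2 / r := by field_simp; ring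
  nlinarith

-- (D)
lemma ratio_mono (j k : ℕ) (hjk : j ≤ k) {a : ℝ} (hka : (k:ℝ) ≤ a) (ha : 0 < a) :
    a ^ j / (j ! : ℝ) ≤ a ^ k / (k ! : ℝ) := by
  induction k with
  | zero => interval_cases j; simp
  | succ k ih =>
    rcases Nat.lt_or_ge j (k+1) with h | h
    · have hk' : (k:ℝ) ≤ a := le_trans (by push_cast; linarith) hka
      refine (ih (by omega) hk').trans ?_
      have hfacpos : (0:ℝ) < (k ! : ℝ) := by exact_mod_cast Nat.factorial_pos k
      have hka' : ((k:ℝ)+1) ≤ a := by push_cast at hka; linarith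
      have h1 : (1:ℝ) ≤ a / ((k:ℝ)+1) := (one_le_div (by positivity)).2 hka'
      have heq : a^(k+1)/(((k+1))! : ℝ) = (a^k/(k ! : ℝ)) * (a/((k:ℝ)+1)) := by
        rw [Nat.factorial_succ, pow_succ]
        push_cast
        field_simp
      rw [heq]
      exact le_mul_of_one_le_right (by positivity) h1
    · have : j = k + 1 := by omega
      subst this; exact le_rfl

-- pointwise upper bound on the integrand
lemma integrand_le (k : ℕ) {a r : ℝ} (ha : 12 ≤ a) (hr : r ∈ Set.Icc a (a+1)) :
    r ^ k / (k ! : ℝ) * Real.exp (-r) ≤ 1 / (√(2*π) * √(a-1)) := by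
  obtain ⟨hr1, hr2⟩ := hr
  have ha0 : (0:ℝ) < a := by linarith
  have hrpos : (0:ℝ) < r := by linarith
  set m : ℕ := ⌊a⌋₊ with hm
  have hm1 : 1 ≤ m := Nat.le_floor (by exact_mod_cast (by linarith : (1:ℝ) ≤ a))
  have hma : (m:ℝ) ≤ a := Nat.floor_le ha0.le
  have hma' : a - 1 < m := Nat.sub_one_lt_floor a
  have hfac : (0:ℝ) < (k ! : ℝ) := by exact_mod_cast Nat.factorial_pos k
  have hsqrtle : √(a-1) ≤ √(m:ℝ) := Real.sqrt_le_sqrt (by linarith)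
  have hfin : ∀ j : ℕ, 1 ≤ j → (a:ℝ) - 1 ≤ j →
      (j:ℝ) ^ j * Real.exp (-(j:ℝ)) / (j ! : ℝ) ≤ 1 / (√(2*π) * √(a-1)) := by
    intro j hj hja
    refine (fkk_le j hj).trans ?_
    have h1 : √(a-1) ≤ √(j:ℝ) := Real.sqrt_le_sqrt (by linarith)
    have h2 : (0:ℝ) < √(2*π) := by positivity
    have h3 : (0:ℝ) < √(a-1) := Real.sqrt_pos.2 (by linarith)
    apply one_div_le_one_div_of_le (by positivity)
    exact mul_le_mul_of_nonneg_left h1 h2.le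
  rcases le_or_gt k m with hkm | hkm
  · -- k ≤ m
    have hka : (k:ℝ) ≤ a := le_trans (by exact_mod_cast hkm) hma
    have step1 : r ^ k * Real.exp (-r) ≤ a ^ k * Real.exp (-a) := left_mono k ha0 hr1 hka
    have step2 : a ^ k / (k ! : ℝ) ≤ a ^ m / (m ! : ℝ) := ratio_mono k m hkm hma ha0
    have step3 : a ^ m * Real.exp (-a) ≤ (m:ℝ) ^ m * Real.exp (-(m:ℝ)) := peak_bound m hm1 ha0
    have hfacm : (0:ℝ) < (m ! : ℝ) := by exact_mod_cast Nat.factorial_pos m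
    have c1 : r ^ k / (k ! : ℝ) * Real.exp (-r) ≤ a ^ k / (k ! : ℝ) * Real.exp (-a) := by
      rw [div_mul_eq_mul_div, div_mul_eq_mul_div, div_le_div_iff₀ hfac hfac]
      nlinarith [step1, hfac]
    have c2 : a ^ k / (k ! : ℝ) * Real.exp (-a) ≤ a ^ m / (m ! : ℝ) * Real.exp (-a) :=
      mul_le_mul_of_nonneg_right step2 (Real.exp_pos _).le
    have c3 : a ^ m / (m ! : ℝ) * Real.exp (-a) ≤ (m:ℝ) ^ m * Real.exp (-(m:ℝ)) / (m ! : ℝ) := by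
      rw [div_mul_eq_mul_div, div_le_div_iff₀ hfacm hfacm]
      nlinarith [step3, hfacm]
    exact le_trans (le_trans (le_trans c1 c2) c3) (hfin m hm1 (by linarith))
  · -- k > m
    have hk1 : 1 ≤ k := by omega
    have hak : a - 1 ≤ (k:ℝ) := by
      have : a < (m:ℝ) + 1 := Nat.lt_floor_add_one a
      have hmk : (m:ℝ) + 1 ≤ k := by exact_mod_cast hkm
      linarith
    have step1 : r ^ k * Real.exp (-r) ≤ (k:ℝ) ^ k * Real.exp (-(k:ℝ)) := peak_bound k hk1 hrpos
    have c1 : r ^ k / (k ! : ℝ) * Real.exp (-r) ≤ (k:ℝ) ^ k * Real.exp (-(k:ℝ)) / (k ! : ℝ) := by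
      rw [div_mul_eq_mul_div, div_le_div_iff₀ hfac hfac]
      nlinarith [step1, hfac]
    exact c1.trans (hfin k hk1 hak)

-- pointwise lower bound for k₀ = ⌈a⌉₊
lemma integrand_ge {a r : ℝ} (ha : 12 ≤ a) (hr : r ∈ Set.Icc a (a+1)) :
    Real.exp (-(2/a)) / (√(2*π) * √(a+1)) ≤
      r ^ (⌈a⌉₊) / ((⌈a⌉₊)! : ℝ) * Real.exp (-r) := by
  obtain ⟨hr1, hr2⟩ := hr
  have ha0 : (0:ℝ) < a := by linarith
  have hrpos : (0:ℝ) < r := by linarith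
  set k : ℕ := ⌈a⌉₊ with hk
  have hak : a ≤ (k:ℝ) := Nat.le_ceil a
  have hka : (k:ℝ) < a + 1 := Nat.ceil_lt_add_one ha0.le
  have hk2 : 2 ≤ k := by
    have h2a : (2:ℝ) ≤ (k:ℝ) := le_trans (by linarith) hak
    exact_mod_cast h2a
  have hk1 : 1 ≤ k := by omega
  have hfac : (0:ℝ) < (k ! : ℝ) := by exact_mod_cast Nat.factorial_pos k
  -- step 1 : exp(-(r-k)^2/r) ≥ exp(-(1/a))
  have hsq : (r - k) ^ 2 ≤ 1 := by nlinarith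
  have hratio : (r - k) ^ 2 / r ≤ 1 / a :=
    div_le_div₀ zero_le_one hsq ha0 hr1
  have e1 : Real.exp (-(1/a)) ≤ Real.exp (-((r - k) ^ 2 / r)) :=
    Real.exp_le_exp.2 (by linarith)
  have step1 : (k:ℝ) ^ k * Real.exp (-(k:ℝ)) / (k ! : ℝ) * Real.exp (-(1/a)) ≤
      r ^ k / (k ! : ℝ) * Real.exp (-r) := by
    have hP := peak_lower k hk1 hrpos
    have hkknn : (0:ℝ) ≤ (k:ℝ) ^ k * Real.exp (-(k:ℝ)) := by positivity
    have h2 : (k:ℝ) ^ k * Real.exp (-(k:ℝ)) * Real.exp (-(1/a)) ≤ r ^ k * Real.exp (-r) :=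
      le_trans (mul_le_mul_of_nonneg_left e1 hkknn) hP
    rw [div_mul_eq_mul_div, div_mul_eq_mul_div, div_le_div_iff₀ hfac hfac]
    nlinarith [h2, hfac]
  have step2 : Real.exp (-(1 / (2*(k:ℝ)))) / (√(2*π) * √(k:ℝ)) * Real.exp (-(1/a)) ≤
      (k:ℝ) ^ k * Real.exp (-(k:ℝ)) / (k ! : ℝ) * Real.exp (-(1/a)) :=
    mul_le_mul_of_nonneg_right (le_fkk k hk2) (Real.exp_pos _).le
  have step3 : Real.exp (-(2/a)) / (√(2*π) * √(a+1)) ≤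
      Real.exp (-(1 / (2*(k:ℝ)))) / (√(2*π) * √(k:ℝ)) * Real.exp (-(1/a)) := by
    have hkpos : (0:ℝ) < (k:ℝ) := by positivity
    have hnum : Real.exp (-(2/a)) ≤ Real.exp (-(1 / (2*(k:ℝ)))) * Real.exp (-(1/a)) := by
      rw [← Real.exp_add]
      apply Real.exp_le_exp.2
      have h1 : 1 / (2*(k:ℝ)) ≤ 1 / a := by
        apply one_div_le_one_div_of_le ha0
        linarith
      have h0 : -(2/a) = -(1/a) + -(1/a) := by ring
      rw [h0]
      linarith
    have hden : √(2*π) * √(k:ℝ) ≤ √(2*π) * √(a+1) :=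
      mul_le_mul_of_nonneg_left (Real.sqrt_le_sqrt (by linarith)) (Real.sqrt_nonneg _)
    have hdpos : (0:ℝ) < √(2*π) * √(k:ℝ) := by positivity
    calc Real.exp (-(2/a)) / (√(2*π) * √(a+1))
        ≤ (Real.exp (-(1 / (2*(k:ℝ)))) * Real.exp (-(1/a))) / (√(2*π) * √(k:ℝ)) :=
          div_le_div₀ (by positivity) hnum hdpos hden
      _ = Real.exp (-(1 / (2*(k:ℝ)))) / (√(2*π) * √(k:ℝ)) * Real.exp (-(1/a)) := by ring
  exact le_trans (le_trans step3 step2) step1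

lemma eig_cont (k : ℕ) : Continuous (fun r : ℝ => r ^ k / (Nat.factorial k : ℝ) * Real.exp (-r)) := by
  fun_prop

lemma eig_le (k : ℕ) {R : ℝ} (hR : 12 ≤ π * R ^ 2) :
    ringEigenvalue k R ≤ 1 / (√(2*π) * √(π * R ^ 2 - 1)) := by
  set a := π * R ^ 2
  have hab : a ≤ a + 1 := by linarith
  have h := intervalIntegral.integral_mono_on (μ := volume) hab
    ((eig_cont k).intervalIntegrable a (a+1))
    ((continuous_const : Continuous fun _ : ℝ => _).intervalIntegrable _ _)
    (fun r hr => integrand_le k hR hr)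
  simpa [ringEigenvalue] using h

lemma le_eig {R : ℝ} (hR : 12 ≤ π * R ^ 2) :
    Real.exp (-(2/(π * R ^ 2))) / (√(2*π) * √(π * R ^ 2 + 1)) ≤
      ringEigenvalue (⌈π * R ^ 2⌉₊) R := by
  set a := π * R ^ 2
  have hab : a ≤ a + 1 := by linarith
  have h := intervalIntegral.integral_mono_on (μ := volume) hab
    ((continuous_const : Continuous fun _ : ℝ => _).intervalIntegrable _ _)
    ((eig_cont ⌈a⌉₊).intervalIntegrable a (a+1))
    (fun r hr => integrand_ge hR hr)
  simpa [ringEigenvalue] using h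

lemma sup_bounds {R : ℝ} (hR : 12 ≤ π * R ^ 2) :
    Real.exp (-(2/(π * R ^ 2))) / (√(2*π) * √(π * R ^ 2 + 1)) ≤ (⨆ k : ℕ, ringEigenvalue k R) ∧
    (⨆ k : ℕ, ringEigenvalue k R) ≤ 1 / (√(2*π) * √(π * R ^ 2 - 1)) := by
  have hbdd : BddAbove (Set.range fun k : ℕ => ringEigenvalue k R) := by
    refine ⟨1 / (√(2*π) * √(π * R ^ 2 - 1)), ?_⟩
    rintro x ⟨k, rfl⟩
    exact eig_le k hR
  constructor
  · exact le_trans (le_eig hR) (le_ciSup hbdd _)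
  · exact ciSup_le fun k => eig_le k hR

lemma upper_numeric {R s t c : ℝ} (hR : 10 ≤ R) (hs17 : 17 ≤ s) (hsRlb : 1.7 * R ≤ s)
    (ht0 : 0 < t) (hts : t ≤ s) (hst : s ^ 2 - t ^ 2 = 1) (hc2 : 2 ≤ c) :
    1 / (c * t) - 1 / (c * s) ≤ 1 / R ^ 3 := by
  have hR0 : (0:ℝ) < R := by linarith
  have hs0 : (0:ℝ) < s := by linarith
  have hc0 : (0:ℝ) < c := by linarith
  have hR3 : (0:ℝ) < R ^ 3 := by positivity
  have heq : 1 / (c * t) - 1 / (c * s) = (s - t) / (c * (t * s)) := by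
    field_simp
  rw [heq, div_le_div_iff₀ (by positivity) hR3]
  have hst2 : (s - t) * s ≤ 1 := by nlinarith
  have h09 : 0.9 * s ≤ t := by nlinarith
  have hc3 : 4.913 * R ^ 3 ≤ s ^ 3 := by
    calc (4.913:ℝ) * R ^ 3 = (1.7 * R) ^ 3 := by ring
      _ ≤ s ^ 3 := pow_le_pow_left₀ (by positivity) hsRlb 3
  have e1 : 2 * (0.9 * s) * s ^ 2 ≤ c * t * s ^ 2 :=
    mul_le_mul_of_nonneg_right
      (mul_le_mul hc2 h09 (by positivity) (by linarith)) (sq_nonneg s)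
  have h3 : R ^ 3 ≤ c * t * s ^ 2 := by nlinarith
  rw [one_mul, ← mul_le_mul_iff_of_pos_right hs0]
  calc (s - t) * R ^ 3 * s = ((s - t) * s) * R ^ 3 := by ring
    _ ≤ 1 * R ^ 3 := by nlinarith
    _ ≤ c * t * s ^ 2 := by linarith
    _ = c * (t * s) * s := by ring

lemma lower_numeric {R s u c e : ℝ} (hR : 10 ≤ R) (hs17 : 17 ≤ s) (hsRlb : 1.7 * R ≤ s)
    (hsu : s ≤ u) (hus : u ^ 2 = s ^ 2 + 1) (hc2 : 2 ≤ c)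
    (hes : s ^ 2 - 2 ≤ e * s ^ 2) :
    1 / (c * s) - e / (c * u) ≤ 1 / R ^ 3 := by
  have hR0 : (0:ℝ) < R := by linarith
  have hs0 : (0:ℝ) < s := by linarith
  have hu0 : (0:ℝ) < u := by linarith
  have hc0 : (0:ℝ) < c := by linarith
  have hR3 : (0:ℝ) < R ^ 3 := by positivity
  have heq : 1 / (c * s) - e / (c * u) = (u - e * s) / (c * (s * u)) := by
    field_simp
  rw [heq, div_le_div_iff₀ (by positivity) hR3]
  have h2su : 2 * s * u ≤ 2 * s ^ 2 + 1 := by nlinarith [sq_nonneg (u - s)]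
  have h5 : (u - e * s) * (2 * s) ≤ 5 := by nlinarith
  have hc3 : 4.913 * R ^ 3 ≤ s ^ 3 := by
    calc (4.913:ℝ) * R ^ 3 = (1.7 * R) ^ 3 := by ring
      _ ≤ s ^ 3 := pow_le_pow_left₀ (by positivity) hsRlb 3
  have i1 : s * s ≤ s * u := mul_le_mul_of_nonneg_left hsu hs0.le
  have i2 : 2 * (s * s) ≤ c * (s * u) := mul_le_mul hc2 i1 (by positivity) (by linarith)
  have e1 : 2 * (2 * (s * s)) * s ≤ 2 * (c * (s * u)) * s := by
    nlinarith [mul_le_mul_of_nonneg_right i2 hs0.le]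
  have h6 : 5 * R ^ 3 ≤ 2 * (c * (s * u)) * s := by nlinarith
  rw [one_mul, ← mul_le_mul_iff_of_pos_right (by positivity : (0:ℝ) < 2 * s)]
  calc (u - e * s) * R ^ 3 * (2 * s) = ((u - e * s) * (2 * s)) * R ^ 3 := by ring
    _ ≤ 5 * R ^ 3 := by nlinarith
    _ ≤ 2 * (c * (s * u)) * s := h6
    _ = c * (s * u) * (2 * s) := by ring

end Aux

/-- The operator norm of the Daubechies localization operator on the ring
`[R², R² + 1/π]` equals `(π√2)⁻¹ R⁻¹ + O(R⁻³)` as `R → ∞`. -/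
theorem ring_operator_norm_asymptotics :
    ∃ C > (0 : ℝ), ∃ R₀ > (0 : ℝ), ∀ R : ℝ, R₀ ≤ R →
      |(⨆ k : ℕ, ringEigenvalue k R) - 1 / (π * Real.sqrt 2 * R)| ≤ C * R ^ (-3 : ℤ) := by
  refine ⟨1, one_pos, 10, by norm_num, fun R hR => ?_⟩
  have hpi3 : (3:ℝ) ≤ π := by linarith [Real.pi_gt_three]
  have hR0 : (0:ℝ) < R := by linarith
  have ha12 : (12:ℝ) ≤ π * R ^ 2 := by nlinarith
  obtain ⟨hlow, hup⟩ := sup_bounds ha12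
  set X : ℝ := ⨆ k : ℕ, ringEigenvalue k R with hX
  set a : ℝ := π * R ^ 2 with hadef
  have ha300 : (300:ℝ) ≤ a := by nlinarith
  have hs2 : (√a) ^ 2 = a := Real.sq_sqrt (by linarith)
  have ht2 : (√(a-1)) ^ 2 = a - 1 := Real.sq_sqrt (by linarith)
  have hu2 : (√(a+1)) ^ 2 = a + 1 := Real.sq_sqrt (by linarith)
  have hc2 : (√(2*π)) ^ 2 = 2 * π := Real.sq_sqrt (by linarith)
  have ht0 : 0 < √(a-1) := Real.sqrt_pos.2 (by linarith)
  have hc2' : (2:ℝ) ≤ √(2*π) := by nlinarith [Real.sqrt_nonneg (2*π)]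
  have hsR : √a = Real.sqrt π * R := by
    rw [hadef, Real.sqrt_mul Real.pi_pos.le, Real.sqrt_sq hR0.le]
  have hsqpi : (1.7:ℝ) ≤ Real.sqrt π := by
    nlinarith [Real.sq_sqrt Real.pi_pos.le, Real.sqrt_nonneg π]
  have hs17 : 17 ≤ √a := by rw [hsR]; nlinarith
  have hsRlb : 1.7 * R ≤ √a := by rw [hsR]; nlinarith
  have hts : √(a-1) ≤ √a := Real.sqrt_le_sqrt (by linarith)
  have hsu : √a ≤ √(a+1) := Real.sqrt_le_sqrt (by linarith)
  have hT : 1 / (π * Real.sqrt 2 * R) = 1 / (√(2*π) * √a) := by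
    have h1 : √(2*π) = Real.sqrt 2 * Real.sqrt π := Real.sqrt_mul (by norm_num) _
    have h2 : Real.sqrt π * Real.sqrt π = π := Real.mul_self_sqrt Real.pi_pos.le
    have h3 : π * Real.sqrt 2 * R = √(2*π) * √a := by
      rw [h1, hsR]
      linear_combination (-(Real.sqrt 2 * R)) * h2
    rw [h3]
  have hE : (1:ℝ) * R ^ (-3 : ℤ) = 1 / R ^ 3 := by
    rw [one_mul, zpow_neg, one_div]
    norm_cast
  rw [hT, hE, abs_sub_le_iff]
  have hes : (√a) ^ 2 - 2 ≤ Real.exp (-(2/a)) * (√a) ^ 2 := by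
    have he : 1 - 2 / a ≤ Real.exp (-(2/a)) := by
      have := Real.add_one_le_exp (-(2/a))
      linarith
    have h1 : (1 - 2 / a) * (√a) ^ 2 = (√a) ^ 2 - 2 := by
      rw [hs2]; field_simp
    nlinarith [sq_nonneg (√a)]
  constructor
  · have key := upper_numeric hR hs17 hsRlb ht0 hts (by rw [hs2, ht2]; ring) hc2'
    linarith
  · have key := lower_numeric hR hs17 hsRlb hsu (by rw [hs2, hu2]) hc2' hes
    linarith
end

section
/- Let E(s) = ⋃_{n=0}^∞ (1/π)·[n, n+s] for s ∈ [0,1], so that the eigenvalues of the associated Daubechies localization operator are λ_k(s) = Σ_{n=0}^∞ ∫_n^{n+s} (r^k/k!) e^{-r} dr. Then with C = e/(e−1), for all s ∈ [0,1]: (1 − e^{-s})·C ≤ sup_{k∈ℕ} λ_k(s) ≤ min{C·s, 1}. -/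
open Real MeasureTheory

namespace EquidistantAux
open Set Filter

/-- The integrand `f_k(r) = r^k e^{-r} / k!`. -/
noncomputable def f (k : ℕ) (r : ℝ) : ℝ := r ^ k / (Nat.factorial k) * Real.exp (-r)

lemma f_cont (k : ℕ) : Continuous (f k) := by unfold f; fun_prop

lemma f_nonneg (k : ℕ) {r : ℝ} (hr : 0 ≤ r) : 0 ≤ f k r := by unfold f; positivity

lemma f_intervalIntegrable (k : ℕ) (a b : ℝ) : IntervalIntegrable (f k) volume a b :=
  (f_cont k).intervalIntegrable a b

lemma f_exp_form (k : ℕ) {r : ℝ} (hr : 0 < r) :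
    f k r = Real.exp ((k : ℝ) * Real.log r - r) / (Nat.factorial k) := by
  unfold f
  rw [Real.exp_sub, Real.exp_nat_mul, Real.exp_log hr, Real.exp_neg]
  field_simp

/-- Monotone on `[0, k]`. -/
lemma f_mono (k : ℕ) {a b : ℝ} (ha : 0 ≤ a) (hab : a ≤ b) (hbk : b ≤ k) :
    f k a ≤ f k b := by
  rcases eq_or_lt_of_le ha with h0 | hapos
  · rcases eq_or_lt_of_le (ha.trans hab) with hb0 | hbpos
    · rw [← h0, ← hb0]
    · rcases Nat.eq_zero_or_pos k with hk | hk
      · exfalso; rw [hk] at hbk; exact absurd hbk (by push_cast; linarith)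
      · have : f k a = 0 := by
          unfold f
          rw [← h0, zero_pow (by omega : k ≠ 0), zero_div, zero_mul]
        rw [this]; exact f_nonneg k hbpos.le
  · have hbpos : 0 < b := lt_of_lt_of_le hapos hab
    have hlog : (b - a) / b ≤ Real.log b - Real.log a := by
      have h := Real.log_le_sub_one_of_pos (show 0 < a / b by positivity)
      rw [Real.log_div hapos.ne' hbpos.ne'] at h
      have hb : a / b - 1 = -((b - a) / b) := by field_simp; ring
      rw [hb] at h
      linarith
    have hkey : (k : ℝ) * Real.log a - a ≤ (k : ℝ) * Real.log b - b := by
      have h1 : (b - a) ≤ (k : ℝ) * ((b - a) / b) := by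
        rw [mul_div_assoc']
        rw [le_div_iff₀ hbpos]
        nlinarith
      have h2 : (k : ℝ) * ((b - a) / b) ≤ (k : ℝ) * (Real.log b - Real.log a) :=
        mul_le_mul_of_nonneg_left hlog (Nat.cast_nonneg k)
      nlinarith
    rw [f_exp_form k hapos, f_exp_form k hbpos]
    have hfact : (0:ℝ) < (Nat.factorial k) := by positivity
    exact div_le_div_of_nonneg_right (Real.exp_le_exp.2 hkey) hfact.le

/-- Antitone on `[k, ∞)`. -/
lemma f_anti (k : ℕ) {a b : ℝ} (hka : (k : ℝ) ≤ a) (hab : a ≤ b) :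
    f k b ≤ f k a := by
  rcases eq_or_lt_of_le ((Nat.cast_nonneg k : (0:ℝ) ≤ k).trans hka) with h0 | hapos
  · have hk : k = 0 := by
      have : (k : ℝ) ≤ 0 := by rw [← h0] at hka; exact hka
      exact_mod_cast le_antisymm (by exact_mod_cast this) (Nat.zero_le k)
    subst hk
    unfold f
    simp only [pow_zero, Nat.factorial_zero, Nat.cast_one, div_one, one_mul]
    exact Real.exp_le_exp.2 (by linarith)
  · have hbpos : 0 < b := lt_of_lt_of_le hapos hab
    have hlog : Real.log b - Real.log a ≤ (b - a) / a := by
      have h := Real.log_le_sub_one_of_pos (show 0 < b / a by positivity)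
      rw [Real.log_div hbpos.ne' hapos.ne'] at h
      have hb : b / a - 1 = (b - a) / a := by field_simp
      rw [hb] at h
      linarith
    have hkey : (k : ℝ) * Real.log b - b ≤ (k : ℝ) * Real.log a - a := by
      have h2 : (k : ℝ) * (Real.log b - Real.log a) ≤ (k : ℝ) * ((b - a) / a) :=
        mul_le_mul_of_nonneg_left hlog (Nat.cast_nonneg k)
      have h1 : (k : ℝ) * ((b - a) / a) ≤ b - a := by
        rw [mul_div_assoc']
        rw [div_le_iff₀ hapos]
        nlinarith
      nlinarith
    rw [f_exp_form k hapos, f_exp_form k hbpos]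
    have hfact : (0:ℝ) < (Nat.factorial k) := by positivity
    exact div_le_div_of_nonneg_right (Real.exp_le_exp.2 hkey) hfact.le

/-- Global max at the peak `r = k`. -/
lemma f_le_peak (k : ℕ) {x : ℝ} (hx : 0 ≤ x) : f k x ≤ f k k := by
  rcases le_total x (k : ℝ) with h | h
  · exact f_mono k hx h le_rfl
  · exact f_anti k le_rfl h

lemma f_integrableOn_Ioi (k : ℕ) {c : ℝ} (hc : 0 ≤ c) :
    IntegrableOn (f k) (Ioi c) volume := by
  have h := Real.GammaIntegral_convergent (s := (k + 1 : ℝ)) (by positivity)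
  have h2 : IntegrableOn (fun x : ℝ =>
      ((Nat.factorial k : ℝ))⁻¹ * (Real.exp (-x) * x ^ ((k + 1 : ℝ) - 1))) (Ioi 0) volume :=
    h.const_mul _
  have h3 : IntegrableOn (f k) (Ioi 0) volume := by
    refine h2.congr_fun (fun x hx => ?_) measurableSet_Ioi
    have : ((k + 1 : ℝ) - 1) = (k : ℝ) := by ring
    simp only [this, Real.rpow_natCast]
    unfold f; ring
  exact h3.mono_set (Ioi_subset_Ioi hc)

lemma f_integral_total (k : ℕ) : ∫ r in Ioi (0:ℝ), f k r = 1 := by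
  have h := Real.Gamma_eq_integral (s := (k + 1 : ℝ)) (by positivity)
  have hfact : Real.Gamma ((k : ℝ) + 1) = (Nat.factorial k : ℝ) := by
    exact_mod_cast Real.Gamma_nat_eq_factorial k
  have heq : ∫ r in Ioi (0:ℝ), f k r
      = ∫ x in Ioi (0:ℝ), ((Nat.factorial k : ℝ))⁻¹ * (Real.exp (-x) * x ^ ((k + 1 : ℝ) - 1)) := by
    refine setIntegral_congr_fun measurableSet_Ioi (fun x hx => ?_)
    have : ((k + 1 : ℝ) - 1) = (k : ℝ) := by ring
    rw [this, Real.rpow_natCast]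
    unfold f; ring
  rw [heq, integral_const_mul, ← h, hfact]
  have : (Nat.factorial k : ℝ) ≠ 0 := by positivity
  field_simp

/-- Sum of integrals over adjacent unit intervals equals the improper integral. -/
lemma hasSum_adj (k : ℕ) {c : ℝ} (hc : 0 ≤ c) :
    HasSum (fun m : ℕ => ∫ r in (c + m : ℝ)..(c + m + 1), f k r) (∫ r in Ioi c, f k r) := by
  have hint : IntegrableOn (f k) (Ioi c) volume := f_integrableOn_Ioi k hc
  have hpart : ∀ n : ℕ, ∑ i ∈ Finset.range n, ∫ r in (c + i : ℝ)..(c + i + 1), f k r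
      = ∫ r in c..(c + n : ℝ), f k r := by
    intro n
    have := intervalIntegral.sum_integral_adjacent_intervals
      (a := fun i : ℕ => c + i) (n := n) (μ := volume) (f := f k)
      (fun i _ => f_intervalIntegrable k _ _)
    simp only [Nat.cast_zero, add_zero] at this
    rw [← this]
    refine Finset.sum_congr rfl (fun i _ => ?_)
    push_cast
    ring_nf
  have htend : Tendsto (fun n : ℕ => ∫ r in c..(c + n : ℝ), f k r) atTop
      (nhds (∫ r in Ioi c, f k r)) :=
    intervalIntegral_tendsto_integral_Ioi c hint
      (tendsto_atTop_add_const_left _ c tendsto_natCast_atTop_atTop)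
  have hnn : 0 ≤ᵐ[volume.restrict (Ioi c)] f k :=
    (ae_restrict_iff' measurableSet_Ioi).2
      (ae_of_all _ (fun x hx => f_nonneg k (hc.trans (le_of_lt hx))))
  have hle : ∀ n : ℕ, ∫ r in c..(c + n : ℝ), f k r ≤ ∫ r in Ioi c, f k r := by
    intro n
    rw [intervalIntegral.integral_of_le (le_add_of_nonneg_right (Nat.cast_nonneg n))]
    exact setIntegral_mono_set hint hnn (Ioc_subset_Ioi_self).eventuallyLE
  have hterm_nn : ∀ m : ℕ, 0 ≤ ∫ r in (c + m : ℝ)..(c + m + 1), f k r := by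
    intro m
    refine intervalIntegral.integral_nonneg (by linarith) (fun u hu => f_nonneg k ?_)
    have h1 : c + m ≤ u := hu.1
    have h2 : (0:ℝ) ≤ c + m := by positivity
    linarith
  have hsum : Summable (fun m : ℕ => ∫ r in (c + m : ℝ)..(c + m + 1), f k r) :=
    summable_of_sum_range_le hterm_nn (fun n => (hpart n) ▸ hle n)
  have h1 := hsum.hasSum.tendsto_sum_nat
  have h2 : Tendsto (fun n : ℕ => ∑ i ∈ Finset.range n, ∫ r in (c + i : ℝ)..(c + i + 1), f k r)
      atTop (nhds (∫ r in Ioi c, f k r)) := by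
    simpa only [hpart] using htend
  have := tendsto_nhds_unique h1 h2
  exact this ▸ hsum.hasSum

/-- `k^k ≤ 2 k! e^{k-2}` for `k ≥ 2`. -/
lemma pow_le_fact (k : ℕ) (hk : 2 ≤ k) :
    (k : ℝ) ^ k ≤ 2 * (Nat.factorial k) * Real.exp ((k : ℝ) - 2) := by
  induction k, hk using Nat.le_induction with
  | base => norm_num
  | succ n hn ih =>
    have hnpos : (0:ℝ) < n := by exact_mod_cast Nat.lt_of_lt_of_le Nat.zero_lt_two hn
    have h3 : (Real.exp (1 / n)) ^ n = Real.exp 1 := by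
      rw [← Real.exp_nat_mul]; congr 1; field_simp
    have hkey : ((n : ℝ) + 1) ^ n ≤ Real.exp 1 * (n : ℝ) ^ n := by
      have h1 : (1 : ℝ) / n + 1 ≤ Real.exp (1 / n) := Real.add_one_le_exp (1 / n)
      have h2 : ((1:ℝ)/n + 1) ^ n ≤ (Real.exp (1/n)) ^ n :=
        pow_le_pow_left₀ (by positivity) h1 n
      have h4 : ((n : ℝ) + 1) ^ n = (n : ℝ) ^ n * ((1 : ℝ) / n + 1) ^ n := by
        rw [← mul_pow]; congr 1; field_simp; ring
      calc ((n : ℝ) + 1) ^ n = (n:ℝ)^n * ((1:ℝ)/n+1)^n := h4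
        _ ≤ (n:ℝ)^n * (Real.exp (1/n))^n :=
            mul_le_mul_of_nonneg_left h2 (by positivity)
        _ = Real.exp 1 * (n:ℝ)^n := by rw [h3]; ring
    have hexp : Real.exp 1 * Real.exp ((n:ℝ) - 2) = Real.exp (((n:ℝ) + 1) - 2) := by
      rw [← Real.exp_add]; congr 1; ring
    have hfact : ((Nat.factorial (n+1) : ℕ) : ℝ) = ((n:ℝ)+1) * (Nat.factorial n) := by
      rw [Nat.factorial_succ]; push_cast; ring
    calc ((n+1:ℕ):ℝ)^(n+1) = ((n:ℝ)+1) * ((n:ℝ)+1)^n := by push_cast; ring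
      _ ≤ ((n:ℝ)+1) * (Real.exp 1 * (n:ℝ)^n) :=
          mul_le_mul_of_nonneg_left hkey (by positivity)
      _ ≤ ((n:ℝ)+1) * (Real.exp 1 * (2 * (Nat.factorial n) * Real.exp ((n:ℝ)-2))) := by
          have h5 := mul_le_mul_of_nonneg_left ih (Real.exp_pos 1).le
          exact mul_le_mul_of_nonneg_left h5 (by positivity)
      _ = 2 * (((n:ℝ)+1) * (Nat.factorial n)) * (Real.exp 1 * Real.exp ((n:ℝ)-2)) := by ring
      _ = 2 * (Nat.factorial (n+1)) * Real.exp (((n+1:ℕ):ℝ) - 2) := by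
          rw [hexp, hfact]; push_cast; ring

lemma peak_le (k : ℕ) (hk : 2 ≤ k) : f k (k : ℝ) ≤ 2 * Real.exp (-2) := by
  unfold f
  have h := pow_le_fact k hk
  have hfact : (0:ℝ) < (Nat.factorial k) := by positivity
  have he : Real.exp ((k:ℝ)-2) * Real.exp (-(k:ℝ)) = Real.exp (-2) := by
    rw [← Real.exp_add]; congr 1; ring
  rw [div_mul_eq_mul_div, div_le_iff₀ hfact]
  calc (k:ℝ)^k * Real.exp (-(k:ℝ))
      ≤ (2 * (Nat.factorial k) * Real.exp ((k:ℝ)-2)) * Real.exp (-(k:ℝ)) :=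
        mul_le_mul_of_nonneg_right h (Real.exp_pos _).le
    _ = 2 * (Real.exp ((k:ℝ)-2) * Real.exp (-(k:ℝ))) * (Nat.factorial k) := by ring
    _ = 2 * Real.exp (-2) * (Nat.factorial k) := by rw [he]

lemma int_le (k : ℕ) {a s M : ℝ} (hs : 0 ≤ s) (hM : ∀ x ∈ Icc a (a + s), f k x ≤ M) :
    ∫ r in a..(a + s), f k r ≤ s * M := by
  have h := intervalIntegral.integral_mono_on (μ := volume) (f := f k) (g := fun _ => M)
    (by linarith) (f_intervalIntegrable k _ _) intervalIntegrable_const hM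
  rw [intervalIntegral.integral_const, smul_eq_mul] at h
  calc ∫ r in a..(a + s), f k r ≤ (a + s - a) * M := h
    _ = s * M := by ring

lemma le_int (k : ℕ) {a c : ℝ} (h : ∀ x ∈ Icc a (a + 1), c ≤ f k x) :
    c ≤ ∫ r in a..(a + 1), f k r := by
  have h2 := intervalIntegral.integral_mono_on (μ := volume) (f := fun _ => c) (g := f k)
    (by linarith) intervalIntegrable_const (f_intervalIntegrable k _ _) h
  rw [intervalIntegral.integral_const, smul_eq_mul] at h2
  calc c = (a + 1 - a) * c := by ring
    _ ≤ ∫ r in a..(a + 1), f k r := h2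

lemma integral_Ioc_add_Ioi (k : ℕ) {b : ℝ} (hb : 0 ≤ b) :
    (∫ r in Ioc (0:ℝ) b, f k r) + (∫ r in Ioi b, f k r) = 1 := by
  rw [← MeasureTheory.setIntegral_union (Ioc_disjoint_Ioi le_rfl) measurableSet_Ioi
    ((f_intervalIntegrable k 0 b).1) (f_integrableOn_Ioi k hb), Ioc_union_Ioi_eq_Ioi hb,
    f_integral_total k]

/-- `∫_0^1 r e^{-r} dr = 1 - 2/e`. -/
lemma int01 : ∫ r in (0:ℝ)..1, f 1 r = 1 - 2 * Real.exp (-1) := by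
  have hder : ∀ x ∈ uIcc (0:ℝ) 1,
      HasDerivAt (fun r : ℝ => -((r + 1) * Real.exp (-r))) (f 1 x) x := by
    intro x _
    have h1 : HasDerivAt (fun r : ℝ => r + 1) 1 x := (hasDerivAt_id x).add_const 1
    have h2 : HasDerivAt (fun r : ℝ => Real.exp (-r)) (Real.exp (-x) * (-1)) x :=
      (Real.hasDerivAt_exp (-x)).comp x (hasDerivAt_neg x)
    have h3 := (h1.mul h2).neg
    refine h3.congr_deriv ?_
    unfold f
    simp [Nat.factorial]
    ring
  have := intervalIntegral.integral_eq_sub_of_hasDerivAt hder (f_intervalIntegrable 1 0 1)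
  rw [this]
  norm_num [Real.exp_zero]
  ring

lemma intIoi1 : ∫ r in Ioi (1:ℝ), f 1 r = 2 * Real.exp (-1) := by
  have h := integral_Ioc_add_Ioi 1 (b := 1) zero_le_one
  rw [← intervalIntegral.integral_of_le zero_le_one, int01] at h
  linarith

lemma peak1 : f 1 (1:ℝ) = Real.exp (-1) := by
  unfold f; simp [Nat.factorial]

/-- Interval integral of `e^{-r}`. -/
lemma exp_interval (n s : ℝ) :
    ∫ r in n..(n + s), f 0 r = Real.exp (-n) - Real.exp (-(n + s)) := by
  have hf0 : f 0 = fun r : ℝ => Real.exp (-r) := by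
    funext r; unfold f; simp
  have hder : ∀ x ∈ uIcc n (n + s),
      HasDerivAt (fun r : ℝ => -Real.exp (-r)) (f 0 x) x := by
    intro x _
    have h2 : HasDerivAt (fun r : ℝ => Real.exp (-r)) (Real.exp (-x) * (-1)) x :=
      (Real.hasDerivAt_exp (-x)).comp x (hasDerivAt_neg x)
    have h3 := h2.neg
    refine h3.congr_deriv ?_
    rw [hf0]
    ring
  rw [intervalIntegral.integral_eq_sub_of_hasDerivAt hder (f_intervalIntegrable 0 _ _)]
  ring

set_option maxHeartbeats 800000 in
lemma a_nonneg (k : ℕ) {s : ℝ} (hs0 : 0 ≤ s) (n : ℕ) :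
    0 ≤ ∫ r in (n : ℝ)..((n : ℝ) + s), f k r := by
  refine intervalIntegral.integral_nonneg (by linarith) (fun u hu => f_nonneg k ?_)
  exact le_trans (Nat.cast_nonneg n) hu.1

lemma hasSum_unit (k : ℕ) :
    HasSum (fun m : ℕ => ∫ r in (m : ℝ)..((m : ℝ) + 1), f k r) 1 := by
  have h := hasSum_adj k (c := 0) le_rfl
  rw [f_integral_total k] at h
  have heq : (fun m : ℕ => ∫ r in (m : ℝ)..((m : ℝ) + 1), f k r)
      = (fun m : ℕ => ∫ r in ((0:ℝ) + m)..((0:ℝ) + m + 1), f k r) := by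
    funext m; norm_num
  rw [heq]
  exact h

lemma a_le_unit (k : ℕ) {s : ℝ} (hs0 : 0 ≤ s) (hs1 : s ≤ 1) (n : ℕ) :
    (∫ r in (n : ℝ)..((n : ℝ) + s), f k r) ≤ ∫ r in (n : ℝ)..((n : ℝ) + 1), f k r := by
  refine intervalIntegral.integral_mono_interval le_rfl (by linarith) (by linarith)
    ?_ (f_intervalIntegrable k _ _)
  exact (ae_restrict_iff' measurableSet_Ioc).2
    (ae_of_all _ (fun x hx => f_nonneg k (le_trans (Nat.cast_nonneg n) hx.1.le)))

lemma summable_a (k : ℕ) {s : ℝ} (hs0 : 0 ≤ s) (hs1 : s ≤ 1) :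
    Summable (fun n : ℕ => ∫ r in (n : ℝ)..((n : ℝ) + s), f k r) :=
  Summable.of_nonneg_of_le (a_nonneg k hs0) (a_le_unit k hs0 hs1) (hasSum_unit k).summable

lemma tsum_a_le_one (k : ℕ) {s : ℝ} (hs0 : 0 ≤ s) (hs1 : s ≤ 1) :
    (∑' n : ℕ, ∫ r in (n : ℝ)..((n : ℝ) + s), f k r) ≤ 1 := by
  calc (∑' n : ℕ, ∫ r in (n : ℝ)..((n : ℝ) + s), f k r)
      ≤ ∑' n : ℕ, ∫ r in (n : ℝ)..((n : ℝ) + 1), f k r :=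
        Summable.tsum_le_tsum (a_le_unit k hs0 hs1) (summable_a k hs0 hs1) (hasSum_unit k).summable
    _ = 1 := (hasSum_unit k).tsum_eq

set_option maxHeartbeats 1000000 in
/-- The left block bound: `Σ_{n<j} aₙ ≤ s ∫_{(0,k]} f`. -/
lemma left_block (j : ℕ) {s : ℝ} (hs0 : 0 ≤ s) (hs1 : s ≤ 1) :
    ∑ n ∈ Finset.range j, (∫ r in (n : ℝ)..((n : ℝ) + s), f (j+1) r)
      ≤ s * ∫ r in Ioc (0:ℝ) ((j:ℝ)+1), f (j+1) r := by
  have hterm : ∀ n ∈ Finset.range j,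
      (∫ r in (n : ℝ)..((n : ℝ) + s), f (j+1) r)
      ≤ s * ∫ r in (s + (n:ℝ))..(s + (n:ℝ) + 1), f (j+1) r := by
    intro n hn
    have hnj : (n:ℝ) + 1 ≤ (j:ℝ) := by
      exact_mod_cast Nat.succ_le_of_lt (Finset.mem_range.1 hn)
    have step1 : (∫ r in (n : ℝ)..((n : ℝ) + s), f (j+1) r) ≤ s * f (j+1) ((n:ℝ) + s) := by
      refine int_le (j+1) hs0 (fun x hx => ?_)
      refine f_mono (j+1) (le_trans (Nat.cast_nonneg n) hx.1) hx.2 ?_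
      push_cast
      linarith
    have step2 : f (j+1) ((n:ℝ) + s) ≤ ∫ r in (s + (n:ℝ))..(s + (n:ℝ) + 1), f (j+1) r := by
      have heq : (n:ℝ) + s = s + (n:ℝ) := by ring
      refine le_int (j+1) (fun x hx => ?_)
      refine f_mono (j+1) (by positivity) (heq ▸ hx.1) ?_
      have h2 := hx.2
      push_cast
      linarith
    calc (∫ r in (n : ℝ)..((n : ℝ) + s), f (j+1) r) ≤ s * f (j+1) ((n:ℝ) + s) := step1
      _ ≤ s * ∫ r in (s + (n:ℝ))..(s + (n:ℝ) + 1), f (j+1) r :=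
          mul_le_mul_of_nonneg_left step2 hs0
  calc ∑ n ∈ Finset.range j, (∫ r in (n : ℝ)..((n : ℝ) + s), f (j+1) r)
      ≤ ∑ n ∈ Finset.range j, s * ∫ r in (s + (n:ℝ))..(s + (n:ℝ) + 1), f (j+1) r :=
        Finset.sum_le_sum hterm
    _ = s * ∑ n ∈ Finset.range j, ∫ r in (s + (n:ℝ))..(s + (n:ℝ) + 1), f (j+1) r := by
        rw [Finset.mul_sum]
    _ = s * ∫ r in s..(s + (j:ℝ)), f (j+1) r := by
        congr 1
        have h := intervalIntegral.sum_integral_adjacent_intervals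
          (a := fun i : ℕ => s + i) (n := j) (μ := volume) (f := f (j+1))
          (fun i _ => f_intervalIntegrable (j+1) _ _)
        simp only [Nat.cast_zero, add_zero] at h
        rw [← h]
        refine Finset.sum_congr rfl (fun i _ => ?_)
        push_cast
        ring_nf
    _ ≤ s * ∫ r in Ioc (0:ℝ) ((j:ℝ)+1), f (j+1) r := by
        refine mul_le_mul_of_nonneg_left ?_ hs0
        rw [intervalIntegral.integral_of_le (le_add_of_nonneg_right (Nat.cast_nonneg j))]
        refine setIntegral_mono_set ((f_intervalIntegrable (j+1) 0 ((j:ℝ)+1)).1) ?_ ?_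
        · exact (ae_restrict_iff' measurableSet_Ioc).2
            (ae_of_all _ (fun x hx => f_nonneg (j+1) hx.1.le))
        · exact (Ioc_subset_Ioc hs0 (by linarith)).eventuallyLE

set_option maxHeartbeats 1000000 in
/-- The tail block bound: `Σ_{m} a_{m+j+2} ≤ s ∫_{(k,∞)} f`. -/
lemma tail_block (j : ℕ) {s : ℝ} (hs0 : 0 ≤ s) (hs1 : s ≤ 1) :
    (∑' m : ℕ, ∫ r in ((m + (j + 2) : ℕ) : ℝ)..(((m + (j + 2) : ℕ) : ℝ) + s), f (j+1) r)
      ≤ s * ∫ r in Ioi ((j:ℝ)+1), f (j+1) r := by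
  have hadj := hasSum_adj (j+1) (c := ((j:ℝ)+1)) (by positivity)
  have hterm : ∀ m : ℕ,
      (∫ r in ((m + (j + 2) : ℕ) : ℝ)..(((m + (j + 2) : ℕ) : ℝ) + s), f (j+1) r)
      ≤ s * ∫ r in (((j:ℝ)+1) + m)..(((j:ℝ)+1) + m + 1), f (j+1) r := by
    intro m
    have hn : ((m + (j + 2) : ℕ) : ℝ) = ((j:ℝ)+1) + m + 1 := by push_cast; ring
    have hm0 : (0:ℝ) ≤ (m:ℝ) := Nat.cast_nonneg m
    have step1 : (∫ r in ((m + (j + 2) : ℕ) : ℝ)..(((m + (j + 2) : ℕ) : ℝ) + s), f (j+1) r)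
        ≤ s * f (j+1) ((m + (j + 2) : ℕ) : ℝ) := by
      refine int_le (j+1) hs0 (fun x hx => ?_)
      refine f_anti (j+1) ?_ hx.1
      rw [hn]
      push_cast
      linarith
    have step2 : f (j+1) ((m + (j + 2) : ℕ) : ℝ)
        ≤ ∫ r in (((j:ℝ)+1) + m)..(((j:ℝ)+1) + m + 1), f (j+1) r := by
      refine le_int (j+1) (fun x hx => ?_)
      refine f_anti (j+1) ?_ ?_
      · have h1 := hx.1
        push_cast
        linarith
      · rw [hn]; exact hx.2
    calc (∫ r in ((m + (j + 2) : ℕ) : ℝ)..(((m + (j + 2) : ℕ) : ℝ) + s), f (j+1) r)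
        ≤ s * f (j+1) ((m + (j + 2) : ℕ) : ℝ) := step1
      _ ≤ s * ∫ r in (((j:ℝ)+1) + m)..(((j:ℝ)+1) + m + 1), f (j+1) r :=
          mul_le_mul_of_nonneg_left step2 hs0
  calc (∑' m : ℕ, ∫ r in ((m + (j + 2) : ℕ) : ℝ)..(((m + (j + 2) : ℕ) : ℝ) + s), f (j+1) r)
      ≤ ∑' m : ℕ, s * ∫ r in (((j:ℝ)+1) + m)..(((j:ℝ)+1) + m + 1), f (j+1) r := by
        refine Summable.tsum_le_tsum hterm ?_ (hadj.summable.mul_left s)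
        exact (summable_nat_add_iff (j + 2)).2 (summable_a (j+1) hs0 hs1)
    _ = s * ∫ r in Ioi ((j:ℝ)+1), f (j+1) r := by
        rw [tsum_mul_left, hadj.tsum_eq]

set_option maxHeartbeats 1000000 in
/-- The upper bound `λ_k(s) ≤ C s` for `k = j+1 ≥ 1`. -/
lemma upper_succ (j : ℕ) {s : ℝ} (hs0 : 0 ≤ s) (hs1 : s ≤ 1) :
    (∑' n : ℕ, ∫ r in (n : ℝ)..((n : ℝ) + s), f (j+1) r)
      ≤ Real.exp 1 / (Real.exp 1 - 1) * s := by
  have hE1 : (2.7182818283:ℝ) < Real.exp 1 := Real.exp_one_gt_d9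
  have hE2 : Real.exp 1 < 2.7182818286 := Real.exp_one_lt_d9
  have hEpos : (0:ℝ) < Real.exp 1 - 1 := by linarith
  rw [← Summable.sum_add_tsum_nat_add (j + 2) (summable_a (j+1) hs0 hs1)]
  rw [Finset.sum_range_succ, Finset.sum_range_succ]
  have hcast : (((j+1:ℕ)):ℝ) = (j:ℝ) + 1 := by push_cast; ring
  have hmid : ∀ n : ℕ, (∫ r in (n : ℝ)..((n : ℝ) + s), f (j+1) r)
      ≤ s * f (j+1) ((j:ℝ)+1) := by
    intro n
    refine int_le (j+1) hs0 (fun x hx => ?_)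
    have := f_le_peak (j+1) (le_trans (Nat.cast_nonneg n) hx.1) (x := x)
    rwa [hcast] at this
  have hL := left_block j hs0 hs1
  have htail := tail_block j hs0 hs1
  have hmidj := hmid j
  have hmidj1 := hmid (j + 1)
  have hLR : (∫ r in Ioc (0:ℝ) ((j:ℝ)+1), f (j+1) r)
      + (∫ r in Ioi ((j:ℝ)+1), f (j+1) r) = 1 := by
    have h := integral_Ioc_add_Ioi (j+1) (b := (((j+1:ℕ)):ℝ)) (Nat.cast_nonneg _)
    rwa [hcast] at h
  have hRnn : 0 ≤ ∫ r in Ioi ((j:ℝ)+1), f (j+1) r :=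
    setIntegral_nonneg measurableSet_Ioi
      (fun x hx => f_nonneg (j+1) ((by positivity : (0:ℝ) ≤ (j:ℝ)+1).trans (le_of_lt hx)))
  have hLnn : 0 ≤ ∫ r in Ioc (0:ℝ) ((j:ℝ)+1), f (j+1) r :=
    setIntegral_nonneg measurableSet_Ioc (fun x hx => f_nonneg (j+1) hx.1.le)
  rcases Nat.eq_zero_or_pos j with hj | hj
  · -- k = 1
    subst hj
    have hrange0 : ∑ n ∈ Finset.range 0, (∫ r in (n : ℝ)..((n : ℝ) + s), f (0+1) r) = 0 := by
      simp
    have hPval : f (0+1) (((0:ℕ):ℝ)+1) = Real.exp (-1) := by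
      norm_num
      exact_mod_cast peak1
    have hRval : (∫ r in Ioi (((0:ℕ):ℝ)+1), f (0+1) r) = 2 * Real.exp (-1) := by
      norm_num
      exact_mod_cast intIoi1
    have hnum : 4 * Real.exp (-1) ≤ Real.exp 1 / (Real.exp 1 - 1) := by
      rw [Real.exp_neg, le_div_iff₀ hEpos]
      have hinv : (Real.exp 1)⁻¹ * Real.exp 1 = 1 := inv_mul_cancel₀ (Real.exp_pos 1).ne'
      nlinarith [sq_nonneg (Real.exp 1 - 2), Real.exp_pos 1,
        inv_pos.2 (Real.exp_pos 1), hinv]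
    have hfin : s * f (0+1) (((0:ℕ):ℝ)+1) + s * f (0+1) (((0:ℕ):ℝ)+1)
          + s * (∫ r in Ioi (((0:ℕ):ℝ)+1), f (0+1) r)
        ≤ Real.exp 1 / (Real.exp 1 - 1) * s := by
      rw [hPval, hRval]
      nlinarith [mul_le_mul_of_nonneg_left hnum hs0]
    rw [hrange0, zero_add]
    exact le_trans (add_le_add (add_le_add hmidj hmidj1) htail) hfin
  · -- k ≥ 2
    have hPle : f (j+1) ((j:ℝ)+1) ≤ 2 * Real.exp (-2) := by
      have h := peak_le (j+1) (by omega)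
      rwa [hcast] at h
    have hnum : 1 + 4 * Real.exp (-2) ≤ Real.exp 1 / (Real.exp 1 - 1) := by
      have hexp2 : Real.exp (-2) = (Real.exp 1 * Real.exp 1)⁻¹ := by
        rw [← Real.exp_add, ← Real.exp_neg]
        norm_num
      rw [hexp2, le_div_iff₀ hEpos]
      rw [← sub_nonneg]
      have hiden : Real.exp 1 - (1 + 4 * (Real.exp 1 * Real.exp 1)⁻¹) * (Real.exp 1 - 1)
          = (Real.exp 1 - 2)^2 / (Real.exp 1 * Real.exp 1) := by
        field_simp
        ring
      rw [hiden]
      positivity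
    have hfin : s * (∫ r in Ioc (0:ℝ) ((j:ℝ)+1), f (j+1) r) + s * f (j+1) ((j:ℝ)+1)
          + s * f (j+1) ((j:ℝ)+1) + s * (∫ r in Ioi ((j:ℝ)+1), f (j+1) r)
        ≤ Real.exp 1 / (Real.exp 1 - 1) * s := by
      have hPle2 : 2 * f (j+1) ((j:ℝ)+1) ≤ 4 * Real.exp (-2) := by linarith
      nlinarith [mul_le_mul_of_nonneg_left hnum hs0, hLR,
        mul_le_mul_of_nonneg_left hPle2 hs0]
    exact le_trans (add_le_add (add_le_add (add_le_add hL hmidj) hmidj1) htail) hfin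

set_option maxHeartbeats 800000 in
/-- Exact value of `λ₀(s)`. -/
lemma lam_zero {s : ℝ} (hs0 : 0 ≤ s) :
    (∑' n : ℕ, ∫ r in (n : ℝ)..((n : ℝ) + s), f 0 r)
      = (1 - Real.exp (-s)) * (Real.exp 1 / (Real.exp 1 - 1)) := by
  have hEpos : (0:ℝ) < Real.exp 1 - 1 := by
    have := Real.exp_one_gt_d9
    linarith
  have hterm : ∀ n : ℕ, (∫ r in (n : ℝ)..((n : ℝ) + s), f 0 r)
      = (Real.exp (-1)) ^ n * (1 - Real.exp (-s)) := by
    intro n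
    rw [exp_interval]
    have h1 : Real.exp (-((n:ℝ) + s)) = Real.exp (-(n:ℝ)) * Real.exp (-s) := by
      rw [← Real.exp_add]; congr 1; ring
    have h2 : Real.exp (-(n:ℝ)) = (Real.exp (-1)) ^ n := by
      rw [← Real.exp_nat_mul]; congr 1; ring
    rw [h1, ← h2]; ring
  rw [tsum_congr hterm, tsum_mul_right,
    tsum_geometric_of_lt_one (Real.exp_pos _).le
      (Real.exp_lt_one_iff.2 (by norm_num))]
  have h3 : (1 - Real.exp (-1))⁻¹ = Real.exp 1 / (Real.exp 1 - 1) := by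
    rw [Real.exp_neg]
    rw [eq_div_iff hEpos.ne']
    field_simp
  rw [h3]
  ring

end EquidistantAux

/-- Eigenvalues of the Daubechies localization operator on the set of
equidistant intervals `E(s) = ⋃ₙ (1/π)·[n, n+s]`:
`λ_k(s) = Σ_{n=0}^∞ ∫_n^{n+s} (r^k/k!) e^{-r} dr`. -/
noncomputable def equidistantEigenvalue (k : ℕ) (s : ℝ) : ℝ :=
  ∑' n : ℕ, ∫ r in (n : ℝ)..((n : ℝ) + s), r ^ k / (Nat.factorial k) * Real.exp (-r)

open Set Filter EquidistantAux in
set_option maxHeartbeats 800000 in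
/-- For `s ∈ [0,1]` and `C = e/(e-1)`, the operator norm satisfies
`(1 - e^{-s})·C ≤ ‖P_{E(s)}‖ ≤ min{C·s, 1}`. -/
theorem equidistant_operator_norm_bounds (s : ℝ) (hs : s ∈ Set.Icc (0 : ℝ) 1) :
    (1 - Real.exp (-s)) * (Real.exp 1 / (Real.exp 1 - 1)) ≤
        (⨆ k : ℕ, equidistantEigenvalue k s) ∧
      (⨆ k : ℕ, equidistantEigenvalue k s) ≤
        min (Real.exp 1 / (Real.exp 1 - 1) * s) 1 := by
  obtain ⟨hs0, hs1⟩ := hs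
  have hE1 : (2.7182818283:ℝ) < Real.exp 1 := Real.exp_one_gt_d9
  have hEpos : (0:ℝ) < Real.exp 1 - 1 := by linarith
  have hlam : ∀ k, equidistantEigenvalue k s
      = ∑' n : ℕ, ∫ r in (n : ℝ)..((n : ℝ) + s), f k r := fun k => rfl
  have hle1 : ∀ k, equidistantEigenvalue k s ≤ 1 := by
    intro k
    rw [hlam]
    exact tsum_a_le_one k hs0 hs1
  have hbdd : BddAbove (Set.range fun k => equidistantEigenvalue k s) := by
    refine ⟨1, ?_⟩
    rintro x ⟨k, rfl⟩
    exact hle1 k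
  have hlam0 : equidistantEigenvalue 0 s
      = (1 - Real.exp (-s)) * (Real.exp 1 / (Real.exp 1 - 1)) := by
    rw [hlam]
    exact lam_zero hs0
  constructor
  · rw [← hlam0]
    exact le_ciSup hbdd 0
  · refine le_min (ciSup_le fun k => ?_) (ciSup_le hle1)
    rcases k with _ | j
    · rw [hlam0]
      have h1 : 1 - Real.exp (-s) ≤ s := by
        have := Real.add_one_le_exp (-s)
        linarith
      have hC : 0 ≤ Real.exp 1 / (Real.exp 1 - 1) := by positivity
      calc (1 - Real.exp (-s)) * (Real.exp 1 / (Real.exp 1 - 1))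
          ≤ s * (Real.exp 1 / (Real.exp 1 - 1)) := mul_le_mul_of_nonneg_right h1 hC
        _ = Real.exp 1 / (Real.exp 1 - 1) * s := by ring
    · rw [hlam]
      exact upper_succ j hs0 hs1
end

section
/- Let E(s) = ⋃_{n=0}^∞ (1/π)·[n, n+s] for s ∈ [0,1], with Daubechies eigenvalues λ_k(s) = Σ_{n=0}^∞ ∫_n^{n+s} (r^k/k!) e^{-r} dr. Then there exists s_0 > 0 such that for all 0 < s < s_0, sup_{k∈ℕ} λ_k(s) = (1 − e^{-s})·e/(e−1); i.e., the operator norm is attained by the eigenvalue λ_0(s). -/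
open Real MeasureTheory

namespace EquidAux

/-- The integrand. -/
noncomputable def g (k : ℕ) (r : ℝ) : ℝ := r ^ k / (Nat.factorial k) * Real.exp (-r)

lemma g_cont (k : ℕ) : Continuous (g k) := by
  unfold g
  exact ((continuous_pow k).div_const _).mul (Real.continuous_exp.comp continuous_neg)

lemma g_nonneg (k : ℕ) {r : ℝ} (hr : 0 ≤ r) : 0 ≤ g k r := by
  unfold g
  exact mul_nonneg (div_nonneg (pow_nonneg hr k) (Nat.cast_nonneg _)) (Real.exp_pos _).le

lemma g_intInt (k : ℕ) (a b : ℝ) : IntervalIntegrable (g k) volume a b :=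
  (g_cont k).intervalIntegrable a b

lemma g_mono {k : ℕ} {a b : ℝ} (ha : 0 ≤ a) (hab : a ≤ b) (hbk : b ≤ (k : ℝ)) :
    g k a ≤ g k b := by
  have hfac : (0:ℝ) < (Nat.factorial k : ℝ) := by
    exact_mod_cast Nat.factorial_pos k
  rcases eq_or_lt_of_le (ha.trans hab) with hb | hb
  · have h1 : a = 0 := le_antisymm (hab.trans hb.symm.le) ha
    rw [h1, ← hb]
  · have hk : 0 < k := by
      by_contra h
      push_neg at h
      have hk0 : k = 0 := by omega
      rw [hk0] at hbk
      push_cast at hbk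
      linarith
    have hk' : (0:ℝ) < k := by exact_mod_cast hk
    have h1 : a / b ≤ Real.exp ((a - b)/k) := by
      have e1 : a / b = 1 + (a - b)/b := by field_simp; ring
      have e2 : (a - b)/b ≤ (a - b)/(k:ℝ) := by
        rw [div_le_div_iff₀ hb hk']
        nlinarith
      have e3 := Real.add_one_le_exp ((a - b)/(k:ℝ))
      linarith
    have h2 : (a/b)^k ≤ Real.exp ((a - b)/k) ^ k :=
      pow_le_pow_left₀ (div_nonneg ha hb.le) h1 k
    have h3 : Real.exp ((a - b)/k) ^ k = Real.exp (a - b) := by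
      rw [← Real.exp_nat_mul]
      congr 1
      field_simp
    have h4 : a^k ≤ Real.exp (a - b) * b^k := by
      calc a^k = (a/b)^k * b^k := by
            rw [div_pow]; field_simp
        _ ≤ Real.exp (a - b) * b^k :=
            mul_le_mul_of_nonneg_right (h3 ▸ h2) (pow_nonneg hb.le k)
    have h5 : a^k * Real.exp (-a) ≤ b^k * Real.exp (-b) := by
      calc a^k * Real.exp (-a) ≤ (Real.exp (a - b) * b^k) * Real.exp (-a) :=
            mul_le_mul_of_nonneg_right h4 (Real.exp_pos _).le
        _ = b^k * Real.exp (-b) := by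
            rw [mul_comm (Real.exp (a - b)) (b^k), mul_assoc, ← Real.exp_add,
              show a - b + -a = -b by ring]
    unfold g
    rw [div_mul_eq_mul_div, div_mul_eq_mul_div, div_le_div_iff₀ hfac hfac]
    exact mul_le_mul_of_nonneg_right h5 hfac.le

lemma g_anti {k : ℕ} {a b : ℝ} (hka : (k:ℝ) ≤ a) (hab : a ≤ b) :
    g k b ≤ g k a := by
  have hfac : (0:ℝ) < (Nat.factorial k : ℝ) := by
    exact_mod_cast Nat.factorial_pos k
  rcases Nat.eq_zero_or_pos k with hk | hk
  · subst hk
    unfold g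
    simp only [pow_zero, Nat.factorial_zero, Nat.cast_one, div_one, one_mul]
    exact Real.exp_le_exp.mpr (by linarith)
  · have hk' : (0:ℝ) < k := by exact_mod_cast hk
    have ha : 0 < a := lt_of_lt_of_le hk' hka
    have hb : 0 < b := lt_of_lt_of_le ha hab
    have h1 : b / a ≤ Real.exp ((b - a)/k) := by
      have e1 : b / a = 1 + (b - a)/a := by field_simp; ring
      have e2 : (b - a)/a ≤ (b - a)/(k:ℝ) := by
        rw [div_le_div_iff₀ ha hk']
        nlinarith
      have e3 := Real.add_one_le_exp ((b - a)/(k:ℝ))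
      linarith
    have h2 : (b/a)^k ≤ Real.exp ((b - a)/k) ^ k :=
      pow_le_pow_left₀ (div_nonneg hb.le ha.le) h1 k
    have h3 : Real.exp ((b - a)/k) ^ k = Real.exp (b - a) := by
      rw [← Real.exp_nat_mul]
      congr 1
      field_simp
    have h4 : b^k ≤ Real.exp (b - a) * a^k := by
      calc b^k = (b/a)^k * a^k := by
            rw [div_pow]; field_simp
        _ ≤ Real.exp (b - a) * a^k :=
            mul_le_mul_of_nonneg_right (h3 ▸ h2) (pow_nonneg ha.le k)
    have h5 : b^k * Real.exp (-b) ≤ a^k * Real.exp (-a) := by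
      calc b^k * Real.exp (-b) ≤ (Real.exp (b - a) * a^k) * Real.exp (-b) :=
            mul_le_mul_of_nonneg_right h4 (Real.exp_pos _).le
        _ = a^k * Real.exp (-a) := by
            rw [mul_comm (Real.exp (b - a)) (a^k), mul_assoc, ← Real.exp_add,
              show b - a + -b = -a by ring]
    unfold g
    rw [div_mul_eq_mul_div, div_mul_eq_mul_div, div_le_div_iff₀ hfac hfac]
    exact mul_le_mul_of_nonneg_right h5 hfac.le

lemma integral_le_const (k : ℕ) {a b B : ℝ} (hab : a ≤ b)
    (h : ∀ r ∈ Set.Icc a b, g k r ≤ B) :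
    ∫ r in a..b, g k r ≤ (b - a) * B := by
  have h1 := intervalIntegral.integral_mono_on hab (g_intInt k a b)
    (intervalIntegrable_const (c := B)) h
  simpa using h1

lemma const_le_integral (k : ℕ) {a b B : ℝ} (hab : a ≤ b)
    (h : ∀ r ∈ Set.Icc a b, B ≤ g k r) :
    (b - a) * B ≤ ∫ r in a..b, g k r := by
  have h1 := intervalIntegral.integral_mono_on hab
    (intervalIntegrable_const (c := B)) (g_intInt k a b) h
  simpa using h1

lemma g_integrableOn (k : ℕ) : IntegrableOn (g k) (Set.Ioi (0:ℝ)) := by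
  have h := (Real.GammaIntegral_convergent (s := (k:ℝ)+1) (by positivity)).const_mul
    ((Nat.factorial k : ℝ))⁻¹
  refine IntegrableOn.congr_fun h (fun x hx => ?_) measurableSet_Ioi
  show (Nat.factorial k : ℝ)⁻¹ * (Real.exp (-x) * x ^ (((k:ℝ)+1) - 1)) = g k x
  rw [add_sub_cancel_right, Real.rpow_natCast]
  unfold g; ring

lemma g_integral_Ioi (k : ℕ) : ∫ x in Set.Ioi (0:ℝ), g k x = 1 := by
  have h1 := Real.Gamma_eq_integral (s := (k:ℝ)+1) (by positivity)
  have h2 : ∫ x in Set.Ioi (0:ℝ), g k x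
      = (Nat.factorial k : ℝ)⁻¹ * ∫ x in Set.Ioi (0:ℝ),
          Real.exp (-x) * x ^ (((k:ℝ)+1) - 1) := by
    rw [← integral_const_mul]
    congr 1
    funext x
    rw [add_sub_cancel_right, Real.rpow_natCast]
    unfold g; ring
  rw [h2, ← h1, Real.Gamma_nat_eq_factorial]
  have hne : (Nat.factorial k : ℝ) ≠ 0 := by
    exact_mod_cast (Nat.factorial_pos k).ne'
  field_simp

lemma interval_le_one (k : ℕ) {a b : ℝ} (ha : 0 ≤ a) (hb : 0 ≤ b) :
    ∫ r in a..b, g k r ≤ 1 := by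
  rcases le_or_gt a b with hab | hab
  · rw [intervalIntegral.integral_of_le hab]
    calc ∫ r in Set.Ioc a b, g k r ≤ ∫ r in Set.Ioi (0:ℝ), g k r := by
          apply setIntegral_mono_set (g_integrableOn k)
          · exact (ae_restrict_iff' measurableSet_Ioi).2
              (Filter.Eventually.of_forall fun x hx => g_nonneg k (le_of_lt hx))
          · exact (Set.Ioc_subset_Ioi_self.trans
              (Set.Ioi_subset_Ioi ha)).eventuallyLE
      _ = 1 := g_integral_Ioi k
  · rw [intervalIntegral.integral_of_ge hab.le]
    have h0 : 0 ≤ ∫ r in Set.Ioc b a, g k r :=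
      setIntegral_nonneg measurableSet_Ioc fun x hx => g_nonneg k (hb.trans hx.1.le)
    linarith

lemma key_factorial : ∀ m : ℕ, 2 ≤ m →
    ((m:ℝ))^m * Real.exp 1 ^ 2 ≤ 2 * (Nat.factorial m) * Real.exp 1 ^ m := by
  intro m hm
  induction m, hm using Nat.le_induction with
  | base =>
      norm_num [Nat.factorial]
  | succ n hn ih =>
      have hn0 : 0 < n := by omega
      have hn' : (0:ℝ) < n := by exact_mod_cast hn0
      have hstep : ((n:ℝ)+1)^n ≤ Real.exp 1 * (n:ℝ)^n := by
        have h1 : ((n:ℝ)+1)/n ≤ Real.exp (1/(n:ℝ)) := by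
          have e1 : ((n:ℝ)+1)/n = 1/(n:ℝ) + 1 := by field_simp; ring
          have e2 := Real.add_one_le_exp (1/(n:ℝ))
          linarith
        have h2 : (((n:ℝ)+1)/n)^n ≤ Real.exp (1/(n:ℝ)) ^ n :=
          pow_le_pow_left₀ (by positivity) h1 n
        have h3 : Real.exp (1/(n:ℝ)) ^ n = Real.exp 1 := by
          rw [← Real.exp_nat_mul]
          congr 1
          field_simp
        calc ((n:ℝ)+1)^n = (((n:ℝ)+1)/n)^n * (n:ℝ)^n := by
              rw [div_pow]; field_simp
          _ ≤ Real.exp 1 * (n:ℝ)^n :=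
              mul_le_mul_of_nonneg_right (h3 ▸ h2) (by positivity)
      have hcast : ((Nat.factorial (n+1) : ℕ):ℝ) = ((n:ℝ)+1) * (Nat.factorial n : ℝ) := by
        rw [Nat.factorial_succ]; push_cast; ring
      push_cast
      calc ((n:ℝ)+1)^(n+1) * Real.exp 1 ^ 2
          = ((n:ℝ)+1) * (((n:ℝ)+1)^n * Real.exp 1 ^ 2) := by ring
        _ ≤ ((n:ℝ)+1) * ((Real.exp 1 * (n:ℝ)^n) * Real.exp 1 ^ 2) := by
            apply mul_le_mul_of_nonneg_left _ (by positivity)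
            exact mul_le_mul_of_nonneg_right hstep (by positivity)
        _ = Real.exp 1 * (((n:ℝ)+1) * ((n:ℝ)^n * Real.exp 1 ^ 2)) := by ring
        _ ≤ Real.exp 1 * (((n:ℝ)+1) * (2 * (Nat.factorial n : ℝ) * Real.exp 1 ^ n)) := by
            apply mul_le_mul_of_nonneg_left _ (Real.exp_pos 1).le
            exact mul_le_mul_of_nonneg_left ih (by positivity)
        _ = 2 * (((n:ℝ)+1) * (Nat.factorial n : ℝ)) * Real.exp 1 ^ (n+1) := by ring
        _ = 2 * (((Nat.factorial (n+1) : ℕ)):ℝ) * Real.exp 1 ^ (n+1) := by rw [hcast]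

lemma g_self_le {k : ℕ} (hk : 2 ≤ k) : g k (k:ℝ) ≤ 2 / Real.exp 1 ^ 2 := by
  have h := key_factorial k hk
  have hfac : (0:ℝ) < (Nat.factorial k : ℝ) := by
    exact_mod_cast Nat.factorial_pos k
  unfold g
  have h1 : Real.exp (-(k:ℝ)) = (Real.exp 1 ^ k)⁻¹ := by
    rw [Real.exp_neg, ← Real.exp_nat_mul, mul_one]
  rw [h1]
  have hek : (Real.exp 1 ^ k) ≠ 0 := (pow_pos (Real.exp_pos 1) k).ne'
  have h2 : (k:ℝ)^k / (Nat.factorial k : ℝ) * (Real.exp 1 ^ k)⁻¹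
      = (k:ℝ)^k / ((Nat.factorial k : ℝ) * Real.exp 1 ^ k) := by
    field_simp
  rw [h2, div_le_div_iff₀ (by positivity) (by positivity)]
  nlinarith [h]

lemma numeric_k2 : 1 + 2 * (2 / Real.exp 1 ^ 2) ≤ (309/200 : ℝ) := by
  have hE := Real.exp_one_gt_d9
  have h2 : (2 : ℝ) / Real.exp 1 ^ 2 ≤ 109/400 := by
    rw [div_le_iff₀ (by positivity)]
    nlinarith
  linarith

lemma inv_exp_le : (Real.exp 1)⁻¹ ≤ 0.37 := by
  have hE := Real.exp_one_gt_d9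
  have hEpos := Real.exp_pos 1
  have hmul : Real.exp 1 * (Real.exp 1)⁻¹ = 1 := mul_inv_cancel₀ hEpos.ne'
  nlinarith [inv_pos.mpr hEpos]

lemma numeric_k1 :
    (Real.exp 1)⁻¹ + (Real.exp 1)⁻¹ / (1 - (Real.exp 1)⁻¹)^2 ≤ (309/200 : ℝ) := by
  have hinv := inv_exp_le
  have hipos : 0 < (Real.exp 1)⁻¹ := inv_pos.mpr (Real.exp_pos 1)
  have hd : (0.63:ℝ) ≤ 1 - (Real.exp 1)⁻¹ := by linarith
  have hd2 : (0.63:ℝ)^2 ≤ (1 - (Real.exp 1)⁻¹)^2 := by nlinarith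
  have hfrac : (Real.exp 1)⁻¹ / (1 - (Real.exp 1)⁻¹)^2 ≤ 0.37/(0.63^2) :=
    div_le_div₀ (by norm_num) hinv (by norm_num) hd2
  have : (0.37:ℝ) + 0.37/(0.63^2) ≤ 309/200 := by norm_num
  linarith

end EquidAux

open EquidAux

namespace EquidAux

lemma eig_eq (k : ℕ) (s : ℝ) :
    equidistantEigenvalue k s = ∑' n : ℕ, ∫ r in (n : ℝ)..((n : ℝ) + s), g k r := rfl

lemma eig_zero (s : ℝ) :
    equidistantEigenvalue 0 s
      = (1 - Real.exp (-s)) * (Real.exp 1 / (Real.exp 1 - 1)) := by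
  have hterm : ∀ n : ℕ,
      (∫ r in (n:ℝ)..((n:ℝ)+s), r ^ 0 / ((Nat.factorial 0 : ℕ):ℝ) * Real.exp (-r))
      = (1 - Real.exp (-s)) * (Real.exp (-1))^n := by
    intro n
    have h1 : (∫ r in (n:ℝ)..((n:ℝ)+s), r ^ 0 / ((Nat.factorial 0 : ℕ):ℝ) * Real.exp (-r))
        = ∫ r in (n:ℝ)..((n:ℝ)+s), Real.exp (-r) := by
      apply intervalIntegral.integral_congr
      intro r _
      simp [Nat.factorial]
    rw [h1, intervalIntegral.integral_comp_neg (fun r => Real.exp r), integral_exp]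
    have h2 : Real.exp (-((n:ℝ)+s)) = Real.exp (-(n:ℝ)) * Real.exp (-s) := by
      rw [← Real.exp_add]; ring_nf
    have h3 : Real.exp (-(n:ℝ)) = (Real.exp (-1))^n := by
      rw [← Real.exp_nat_mul]
      congr 1
      ring
    rw [h2, h3]
    ring
  rw [eig_eq]
  have heq : equidistantEigenvalue 0 s = ∑' n : ℕ, (1 - Real.exp (-s)) * (Real.exp (-1))^n := by
    rw [equidistantEigenvalue.eq_def]
    exact tsum_congr hterm
  rw [← eig_eq, heq, tsum_mul_left,
    tsum_geometric_of_lt_one (Real.exp_nonneg _)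
      (by rw [Real.exp_lt_one_iff]; norm_num)]
  congr 1
  rw [Real.exp_neg]
  have hE0 : Real.exp 1 ≠ 0 := (Real.exp_pos 1).ne'
  rw [show (1 - (Real.exp 1)⁻¹) = (Real.exp 1 - 1)/Real.exp 1 by field_simp, inv_div]

lemma term_nonneg (k : ℕ) {s : ℝ} (hs : 0 ≤ s) (n : ℕ) :
    0 ≤ ∫ r in (n:ℝ)..((n:ℝ)+s), g k r := by
  apply intervalIntegral.integral_nonneg (by linarith)
  intro r hr
  exact g_nonneg k (le_trans (Nat.cast_nonneg n) hr.1)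

lemma sum_le_k2 (K : ℕ) {s : ℝ} (hs : 0 < s) (hs1 : s ≤ 1) (N : ℕ) :
    ∑ n ∈ Finset.range N, (∫ r in (n:ℝ)..((n:ℝ)+s), g (K+2) r)
      ≤ s * (1 + 2 * (2 / Real.exp 1 ^ 2)) := by
  have hMle : g (K+2) (((K+2:ℕ)):ℝ) ≤ 2 / Real.exp 1 ^ 2 := g_self_le (by omega)
  set N' := max N (K+1+1+1) with hN'
  have hext : ∑ n ∈ Finset.range N, (∫ r in (n:ℝ)..((n:ℝ)+s), g (K+2) r)
      ≤ ∑ n ∈ Finset.range N', (∫ r in (n:ℝ)..((n:ℝ)+s), g (K+2) r) := by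
    apply Finset.sum_le_sum_of_subset_of_nonneg
      (Finset.range_subset_range.mpr (le_max_left _ _))
    intro i _ _
    exact term_nonneg (K+2) hs.le i
  obtain ⟨m, hm⟩ : ∃ m, N' = (K+1+1+1) + m :=
    ⟨N' - (K+1+1+1), by have := le_max_right N (K+1+1+1); omega⟩
  have hsplit : ∑ n ∈ Finset.range N', (∫ r in (n:ℝ)..((n:ℝ)+s), g (K+2) r)
      = ((∑ n ∈ Finset.range (K+1), (∫ r in (n:ℝ)..((n:ℝ)+s), g (K+2) r))
          + (∫ r in ((K+1:ℕ):ℝ)..(((K+1:ℕ):ℝ)+s), g (K+2) r))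
        + (∫ r in ((K+1+1:ℕ):ℝ)..(((K+1+1:ℕ):ℝ)+s), g (K+2) r)
        + ∑ x ∈ Finset.range m,
            (∫ r in ((K+1+1+1+x:ℕ):ℝ)..(((K+1+1+1+x:ℕ):ℝ)+s), g (K+2) r) := by
    rw [hm, Finset.sum_range_add, Finset.sum_range_succ, Finset.sum_range_succ]
  -- head part
  have part1 : ∑ n ∈ Finset.range (K+1), (∫ r in (n:ℝ)..((n:ℝ)+s), g (K+2) r)
      ≤ s * ∫ r in (1:ℝ)..((K:ℝ)+2), g (K+2) r := by
    have step : ∀ n ∈ Finset.range (K+1),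
        (∫ r in (n:ℝ)..((n:ℝ)+s), g (K+2) r)
          ≤ s * ∫ r in ((n:ℝ)+1)..((n:ℝ)+1+1), g (K+2) r := by
      intro n hn
      have hnK : n ≤ K := by
        have := Finset.mem_range.mp hn; omega
      have hnK' : (n:ℝ) ≤ K := by exact_mod_cast hnK
      have hb1 : (∫ r in (n:ℝ)..((n:ℝ)+s), g (K+2) r) ≤ s * g (K+2) ((n:ℝ)+1) := by
        have h := integral_le_const (K+2) (a := (n:ℝ)) (b := (n:ℝ)+s)
          (B := g (K+2) ((n:ℝ)+1)) (by linarith)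
          (fun r hr => g_mono (le_trans (Nat.cast_nonneg n) hr.1)
            (by linarith [hr.2]) (by push_cast; linarith))
        calc (∫ r in (n:ℝ)..((n:ℝ)+s), g (K+2) r)
            ≤ ((n:ℝ)+s - n) * g (K+2) ((n:ℝ)+1) := h
          _ = s * g (K+2) ((n:ℝ)+1) := by ring
      have hb2 : g (K+2) ((n:ℝ)+1) ≤ ∫ r in ((n:ℝ)+1)..((n:ℝ)+1+1), g (K+2) r := by
        have h := const_le_integral (K+2) (a := (n:ℝ)+1) (b := (n:ℝ)+1+1)
          (B := g (K+2) ((n:ℝ)+1)) (by linarith)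
          (fun r hr => g_mono (by positivity) hr.1 (by push_cast; linarith [hr.2]))
        calc g (K+2) ((n:ℝ)+1) = ((n:ℝ)+1+1 - ((n:ℝ)+1)) * g (K+2) ((n:ℝ)+1) := by ring
          _ ≤ _ := h
      exact hb1.trans (mul_le_mul_of_nonneg_left hb2 hs.le)
    calc ∑ n ∈ Finset.range (K+1), (∫ r in (n:ℝ)..((n:ℝ)+s), g (K+2) r)
        ≤ ∑ n ∈ Finset.range (K+1), (s * ∫ r in ((n:ℝ)+1)..((n:ℝ)+1+1), g (K+2) r) :=
          Finset.sum_le_sum step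
      _ = s * ∑ n ∈ Finset.range (K+1), (∫ r in ((n:ℝ)+1)..((n:ℝ)+1+1), g (K+2) r) := by
          rw [Finset.mul_sum]
      _ = s * ∫ r in (1:ℝ)..((K:ℝ)+2), g (K+2) r := by
          congr 1
          have hadj := intervalIntegral.sum_integral_adjacent_intervals
            (a := fun i : ℕ => (i:ℝ)+1) (n := K+1) (μ := volume) (f := g (K+2))
            (fun i _ => g_intInt (K+2) _ _)
          have hsum : ∑ n ∈ Finset.range (K+1), (∫ r in ((n:ℝ)+1)..((n:ℝ)+1+1), g (K+2) r)
              = ∑ n ∈ Finset.range (K+1),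
                  (∫ r in ((n:ℝ)+1)..(((n+1:ℕ):ℝ)+1), g (K+2) r) := by
            apply Finset.sum_congr rfl
            intro i _
            congr 1
            push_cast
            ring
          rw [hsum, hadj]
          congr 1
          · norm_num
          · push_cast
            ring
  -- middle terms
  have hmid1 : (∫ r in ((K+1:ℕ):ℝ)..(((K+1:ℕ):ℝ)+s), g (K+2) r)
      ≤ s * (2 / Real.exp 1 ^ 2) := by
    have h := integral_le_const (K+2) (a := ((K+1:ℕ):ℝ)) (b := ((K+1:ℕ):ℝ)+s)
      (B := g (K+2) (((K+2:ℕ)):ℝ)) (by linarith)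
      (fun r hr => g_mono (le_trans (Nat.cast_nonneg _) hr.1)
        (by push_cast at hr ⊢; linarith [hr.2]) (le_refl _))
    calc (∫ r in ((K+1:ℕ):ℝ)..(((K+1:ℕ):ℝ)+s), g (K+2) r)
        ≤ (((K+1:ℕ):ℝ)+s - ((K+1:ℕ):ℝ)) * g (K+2) (((K+2:ℕ)):ℝ) := h
      _ = s * g (K+2) (((K+2:ℕ)):ℝ) := by ring
      _ ≤ s * (2 / Real.exp 1 ^ 2) := mul_le_mul_of_nonneg_left hMle hs.le
  have hmid2 : (∫ r in ((K+1+1:ℕ):ℝ)..(((K+1+1:ℕ):ℝ)+s), g (K+2) r)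
      ≤ s * (2 / Real.exp 1 ^ 2) := by
    have h := integral_le_const (K+2) (a := ((K+1+1:ℕ):ℝ)) (b := ((K+1+1:ℕ):ℝ)+s)
      (B := g (K+2) (((K+2:ℕ)):ℝ)) (by linarith)
      (fun r hr => by
        have : g (K+2) r ≤ g (K+2) (((K+1+1:ℕ)):ℝ) :=
          g_anti (by push_cast; linarith) hr.1
        have hc : ((K+1+1:ℕ):ℝ) = (((K+2:ℕ)):ℝ) := by push_cast; ring
        rwa [hc] at this)
    calc (∫ r in ((K+1+1:ℕ):ℝ)..(((K+1+1:ℕ):ℝ)+s), g (K+2) r)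
        ≤ (((K+1+1:ℕ):ℝ)+s - ((K+1+1:ℕ):ℝ)) * g (K+2) (((K+2:ℕ)):ℝ) := h
      _ = s * g (K+2) (((K+2:ℕ)):ℝ) := by ring
      _ ≤ s * (2 / Real.exp 1 ^ 2) := mul_le_mul_of_nonneg_left hMle hs.le
  -- tail
  have part2 : ∑ x ∈ Finset.range m,
      (∫ r in ((K+1+1+1+x:ℕ):ℝ)..(((K+1+1+1+x:ℕ):ℝ)+s), g (K+2) r)
      ≤ s * ∫ r in ((K:ℝ)+2)..((K:ℝ)+2+m), g (K+2) r := by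
    have step : ∀ x ∈ Finset.range m,
        (∫ r in ((K+1+1+1+x:ℕ):ℝ)..(((K+1+1+1+x:ℕ):ℝ)+s), g (K+2) r)
          ≤ s * ∫ r in ((K:ℝ)+2+x)..((K:ℝ)+2+(x+1)), g (K+2) r := by
      intro x _
      have hc : ((K+1+1+1+x:ℕ):ℝ) = (K:ℝ)+2+(x+1) := by push_cast; ring
      have hb1 : (∫ r in ((K+1+1+1+x:ℕ):ℝ)..(((K+1+1+1+x:ℕ):ℝ)+s), g (K+2) r)
          ≤ s * g (K+2) ((K:ℝ)+2+(x+1)) := by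
        have h := integral_le_const (K+2) (a := ((K+1+1+1+x:ℕ):ℝ))
          (b := ((K+1+1+1+x:ℕ):ℝ)+s) (B := g (K+2) ((K:ℝ)+2+(x+1))) (by linarith)
          (fun r hr => by
            have : g (K+2) r ≤ g (K+2) (((K+1+1+1+x:ℕ)):ℝ) :=
              g_anti (by push_cast; linarith) hr.1
            rwa [hc] at this)
        calc (∫ r in ((K+1+1+1+x:ℕ):ℝ)..(((K+1+1+1+x:ℕ):ℝ)+s), g (K+2) r)
            ≤ (((K+1+1+1+x:ℕ):ℝ)+s - ((K+1+1+1+x:ℕ):ℝ)) * g (K+2) ((K:ℝ)+2+(x+1)) := h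
          _ = s * g (K+2) ((K:ℝ)+2+(x+1)) := by ring
      have hb2 : g (K+2) ((K:ℝ)+2+(x+1)) ≤ ∫ r in ((K:ℝ)+2+x)..((K:ℝ)+2+(x+1)), g (K+2) r := by
        have h := const_le_integral (K+2) (a := (K:ℝ)+2+x) (b := (K:ℝ)+2+(x+1))
          (B := g (K+2) ((K:ℝ)+2+(x+1))) (by linarith)
          (fun r hr => g_anti (by push_cast; linarith [hr.1]) hr.2)
        calc g (K+2) ((K:ℝ)+2+(x+1))
            = ((K:ℝ)+2+(x+1) - ((K:ℝ)+2+x)) * g (K+2) ((K:ℝ)+2+(x+1)) := by ring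
          _ ≤ _ := h
      exact hb1.trans (mul_le_mul_of_nonneg_left hb2 hs.le)
    calc ∑ x ∈ Finset.range m,
        (∫ r in ((K+1+1+1+x:ℕ):ℝ)..(((K+1+1+1+x:ℕ):ℝ)+s), g (K+2) r)
        ≤ ∑ x ∈ Finset.range m, (s * ∫ r in ((K:ℝ)+2+x)..((K:ℝ)+2+(x+1)), g (K+2) r) :=
          Finset.sum_le_sum step
      _ = s * ∑ x ∈ Finset.range m, (∫ r in ((K:ℝ)+2+x)..((K:ℝ)+2+(x+1)), g (K+2) r) := by
          rw [Finset.mul_sum]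
      _ = s * ∫ r in ((K:ℝ)+2)..((K:ℝ)+2+m), g (K+2) r := by
          congr 1
          have hadj := intervalIntegral.sum_integral_adjacent_intervals
            (a := fun j : ℕ => (K:ℝ)+2+j) (n := m) (μ := volume) (f := g (K+2))
            (fun j _ => g_intInt (K+2) _ _)
          have hsum : ∑ x ∈ Finset.range m, (∫ r in ((K:ℝ)+2+x)..((K:ℝ)+2+(x+1)), g (K+2) r)
              = ∑ x ∈ Finset.range m,
                  (∫ r in ((K:ℝ)+2+x)..((K:ℝ)+2+((x+1:ℕ):ℝ)), g (K+2) r) := by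
            apply Finset.sum_congr rfl
            intro j _
            congr 1
            push_cast
            ring
          rw [hsum, hadj]
          congr 1
          norm_num
  -- combine
  have hI : (∫ r in (1:ℝ)..((K:ℝ)+2), g (K+2) r)
      + (∫ r in ((K:ℝ)+2)..((K:ℝ)+2+m), g (K+2) r)
      = ∫ r in (1:ℝ)..((K:ℝ)+2+m), g (K+2) r :=
    intervalIntegral.integral_add_adjacent_intervals (g_intInt _ _ _) (g_intInt _ _ _)
  have hI1 : (∫ r in (1:ℝ)..((K:ℝ)+2+m), g (K+2) r) ≤ 1 :=
    interval_le_one (K+2) (by norm_num) (by positivity)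
  have hIsum : (∫ r in (1:ℝ)..((K:ℝ)+2), g (K+2) r)
      + (∫ r in ((K:ℝ)+2)..((K:ℝ)+2+m), g (K+2) r) ≤ 1 := by
    rw [hI]; exact hI1
  calc ∑ n ∈ Finset.range N, (∫ r in (n:ℝ)..((n:ℝ)+s), g (K+2) r)
      ≤ ∑ n ∈ Finset.range N', (∫ r in (n:ℝ)..((n:ℝ)+s), g (K+2) r) := hext
    _ = _ := hsplit
    _ ≤ ((s * ∫ r in (1:ℝ)..((K:ℝ)+2), g (K+2) r) + s * (2 / Real.exp 1 ^ 2))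
          + s * (2 / Real.exp 1 ^ 2)
          + s * ∫ r in ((K:ℝ)+2)..((K:ℝ)+2+m), g (K+2) r :=
        add_le_add (add_le_add (add_le_add part1 hmid1) hmid2) part2
    _ = s * (((∫ r in (1:ℝ)..((K:ℝ)+2), g (K+2) r)
          + (∫ r in ((K:ℝ)+2)..((K:ℝ)+2+m), g (K+2) r)) + 2 * (2 / Real.exp 1 ^ 2)) := by
        ring
    _ ≤ s * (1 + 2 * (2 / Real.exp 1 ^ 2)) := by
        apply mul_le_mul_of_nonneg_left _ hs.le
        linarith

lemma sum_le_k1 {s : ℝ} (hs : 0 < s) (hs1 : s ≤ 1) (N : ℕ) :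
    ∑ n ∈ Finset.range N, (∫ r in (n:ℝ)..((n:ℝ)+s), g 1 r)
      ≤ s * ((Real.exp 1)⁻¹ + (Real.exp 1)⁻¹ / (1 - (Real.exp 1)⁻¹)^2) := by
  have hlt1 : (Real.exp 1)⁻¹ < 1 := lt_of_le_of_lt inv_exp_le (by norm_num)
  have hipos : 0 < (Real.exp 1)⁻¹ := inv_pos.mpr (Real.exp_pos 1)
  have hnorm : ‖(Real.exp 1)⁻¹‖ < 1 := by
    rw [Real.norm_eq_abs, abs_of_pos hipos]; exact hlt1
  have hg1 : ∀ n : ℕ, g 1 (n:ℝ) = (n:ℝ) * ((Real.exp 1)⁻¹)^n := by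
    intro n
    unfold g
    rw [pow_one, Nat.factorial_one, Nat.cast_one, div_one]
    have h : ((Real.exp 1)⁻¹)^n = Real.exp (-(n:ℝ)) := by
      rw [← Real.exp_neg, ← Real.exp_nat_mul]
      congr 1
      ring
    rw [h]
  set c : ℕ → ℝ := fun n => (n:ℝ) * ((Real.exp 1)⁻¹)^n with hc
  have hsummable : Summable c := by
    have h := summable_pow_mul_geometric_of_norm_lt_one (R := ℝ) 1 hnorm
    simpa [hc, pow_one] using h
  have htsum : ∑' n, c n = (Real.exp 1)⁻¹ / (1 - (Real.exp 1)⁻¹)^2 :=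
    tsum_coe_mul_geometric_of_norm_lt_one hnorm
  rcases N with _ | M
  · simp
    positivity
  rw [Finset.sum_range_succ']
  have hzero : (∫ r in ((0:ℕ):ℝ)..(((0:ℕ):ℝ)+s), g 1 r) ≤ s * (Real.exp 1)⁻¹ := by
    have h := integral_le_const 1 (a := ((0:ℕ):ℝ)) (b := ((0:ℕ):ℝ)+s)
      (B := g 1 (1:ℝ)) (by push_cast; linarith)
      (fun r hr => g_mono (by push_cast at hr ⊢; linarith [hr.1])
        (by push_cast at hr ⊢; linarith [hr.2]) (by norm_num))
    have hg11 : g 1 (1:ℝ) = (Real.exp 1)⁻¹ := by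
      have := hg1 1
      push_cast at this
      rw [this]; ring
    calc (∫ r in ((0:ℕ):ℝ)..(((0:ℕ):ℝ)+s), g 1 r)
        ≤ (((0:ℕ):ℝ)+s - ((0:ℕ):ℝ)) * g 1 (1:ℝ) := h
      _ = s * g 1 (1:ℝ) := by push_cast; ring
      _ = s * (Real.exp 1)⁻¹ := by rw [hg11]
  have hshiftterm : ∀ i : ℕ,
      (∫ r in ((i+1:ℕ):ℝ)..(((i+1:ℕ):ℝ)+s), g 1 r) ≤ s * c (i+1) := by
    intro i
    have h := integral_le_const 1 (a := ((i+1:ℕ):ℝ)) (b := ((i+1:ℕ):ℝ)+s)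
      (B := g 1 (((i+1:ℕ)):ℝ)) (by linarith)
      (fun r hr => g_anti (by push_cast; push_cast at hr; linarith [hr.1]) hr.1)
    calc (∫ r in ((i+1:ℕ):ℝ)..(((i+1:ℕ):ℝ)+s), g 1 r)
        ≤ (((i+1:ℕ):ℝ)+s - ((i+1:ℕ):ℝ)) * g 1 (((i+1:ℕ)):ℝ) := h
      _ = s * g 1 (((i+1:ℕ)):ℝ) := by ring
      _ = s * c (i+1) := by rw [hg1 (i+1)]
  have hsumtail : ∑ i ∈ Finset.range M, (∫ r in ((i+1:ℕ):ℝ)..(((i+1:ℕ):ℝ)+s), g 1 r)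
      ≤ s * ((Real.exp 1)⁻¹ / (1 - (Real.exp 1)⁻¹)^2) := by
    calc ∑ i ∈ Finset.range M, (∫ r in ((i+1:ℕ):ℝ)..(((i+1:ℕ):ℝ)+s), g 1 r)
        ≤ ∑ i ∈ Finset.range M, (s * c (i+1)) :=
          Finset.sum_le_sum fun i _ => hshiftterm i
      _ = s * ∑ i ∈ Finset.range M, c (i+1) := by rw [Finset.mul_sum]
      _ ≤ s * ∑' n, c n := by
          apply mul_le_mul_of_nonneg_left _ hs.le
          have h0 : ∑ i ∈ Finset.range (M+1), c i = ∑ i ∈ Finset.range M, c (i+1) := by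
            rw [Finset.sum_range_succ']
            simp [hc]
          rw [← h0]
          exact Summable.sum_le_tsum (Finset.range (M+1)) (fun i _ => by
            simp only [hc]; positivity) hsummable
      _ = s * ((Real.exp 1)⁻¹ / (1 - (Real.exp 1)⁻¹)^2) := by rw [htsum]
  calc (∑ i ∈ Finset.range M, (∫ r in ((i+1:ℕ):ℝ)..(((i+1:ℕ):ℝ)+s), g 1 r))
        + (∫ r in ((0:ℕ):ℝ)..(((0:ℕ):ℝ)+s), g 1 r)
      ≤ s * ((Real.exp 1)⁻¹ / (1 - (Real.exp 1)⁻¹)^2) + s * (Real.exp 1)⁻¹ :=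
        add_le_add hsumtail hzero
    _ = s * ((Real.exp 1)⁻¹ + (Real.exp 1)⁻¹ / (1 - (Real.exp 1)⁻¹)^2) := by ring

lemma eig_le {k : ℕ} (hk : 1 ≤ k) {s : ℝ} (hs : 0 < s) (hs1 : s ≤ 1) :
    equidistantEigenvalue k s ≤ s * (309/200) := by
  rw [eig_eq]
  apply Real.tsum_le_of_sum_range_le (fun n => term_nonneg k hs.le n)
  intro N
  rcases Nat.lt_or_ge k 2 with h2 | h2
  · have hk1 : k = 1 := by omega
    subst hk1
    calc ∑ n ∈ Finset.range N, (∫ r in (n:ℝ)..((n:ℝ)+s), g 1 r)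
        ≤ s * ((Real.exp 1)⁻¹ + (Real.exp 1)⁻¹ / (1 - (Real.exp 1)⁻¹)^2) :=
          sum_le_k1 hs hs1 N
      _ ≤ s * (309/200) := mul_le_mul_of_nonneg_left numeric_k1 hs.le
  · obtain ⟨K, rfl⟩ : ∃ K, k = K+2 := ⟨k-2, by omega⟩
    calc ∑ n ∈ Finset.range N, (∫ r in (n:ℝ)..((n:ℝ)+s), g (K+2) r)
        ≤ s * (1 + 2 * (2 / Real.exp 1 ^ 2)) := sum_le_k2 K hs hs1 N
      _ ≤ s * (309/200) := mul_le_mul_of_nonneg_left numeric_k2 hs.le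

end EquidAux

/-- There exists `s₀ > 0` such that for all `0 < s < s₀` the operator norm is
attained by the first eigenvalue: `sup_k λ_k(s) = (1 - e^{-s})·e/(e-1)`. -/
theorem equidistant_operator_norm_eq_first_eigenvalue :
    ∃ s₀ > (0 : ℝ), ∀ s : ℝ, 0 < s → s < s₀ →
      (⨆ k : ℕ, equidistantEigenvalue k s) =
        (1 - Real.exp (-s)) * (Real.exp 1 / (Real.exp 1 - 1)) := by
  refine ⟨1/50, by norm_num, ?_⟩
  intro s hs hs50
  have hs1 : s ≤ 1 := by linarith
  have hE := Real.exp_one_lt_d9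
  have hE' := Real.exp_one_gt_d9
  have hE1 : (0:ℝ) < Real.exp 1 - 1 := by nlinarith
  have hfrac_pos : (0:ℝ) ≤ Real.exp 1 / (Real.exp 1 - 1) :=
    le_of_lt (div_pos (Real.exp_pos 1) hE1)
  have hub : ∀ k, equidistantEigenvalue k s
      ≤ (1 - Real.exp (-s)) * (Real.exp 1 / (Real.exp 1 - 1)) := by
    intro k
    rcases Nat.eq_zero_or_pos k with rfl | hk
    · exact (EquidAux.eig_zero s).le
    · have h1 : (1+s) * Real.exp (-s) ≤ 1 := by
        have ha := Real.add_one_le_exp s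
        have hmul : Real.exp s * Real.exp (-s) = 1 := by
          rw [← Real.exp_add]; simp
        nlinarith [Real.exp_pos (-s)]
      have h2 : s * (49/50) ≤ 1 - Real.exp (-s) := by
        nlinarith [Real.exp_pos (-s)]
      have h4 : (309/200 : ℝ) ≤ (49/50) * (Real.exp 1 / (Real.exp 1 - 1)) := by
        have heq : (49/50 : ℝ) * (Real.exp 1 / (Real.exp 1 - 1))
            = (49 * Real.exp 1 / 50) / (Real.exp 1 - 1) := by ring
        rw [heq, le_div_iff₀ hE1]
        nlinarith
      calc equidistantEigenvalue k s ≤ s * (309/200) := EquidAux.eig_le hk hs hs1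
        _ ≤ s * ((49/50) * (Real.exp 1 / (Real.exp 1 - 1))) :=
            mul_le_mul_of_nonneg_left h4 hs.le
        _ = (s * (49/50)) * (Real.exp 1 / (Real.exp 1 - 1)) := by ring
        _ ≤ (1 - Real.exp (-s)) * (Real.exp 1 / (Real.exp 1 - 1)) :=
            mul_le_mul_of_nonneg_right h2 hfrac_pos
  have hbdd : BddAbove (Set.range fun k => equidistantEigenvalue k s) := by
    refine ⟨(1 - Real.exp (-s)) * (Real.exp 1 / (Real.exp 1 - 1)), ?_⟩
    rintro x ⟨k, rfl⟩
    exact hub k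
  apply le_antisymm (ciSup_le hub)
  calc (1 - Real.exp (-s)) * (Real.exp 1 / (Real.exp 1 - 1))
      = equidistantEigenvalue 0 s := (EquidAux.eig_zero s).symm
    _ ≤ ⨆ k : ℕ, equidistantEigenvalue k s := le_ciSup hbdd 0
end

section
/- For every integer k ≥ 1, f_k(k) + Σ_{n=0}^∞ f_k(n) < Σ_{n=0}^∞ f_0(n) = e/(e−1), where f_k(r) = (r^k/k!)·e^{-r}. -/
open Real

/-- `f_k(r) = (r^k/k!) e^{-r}`. -/
noncomputable def fEigen (k : ℕ) (r : ℝ) : ℝ :=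
  r ^ k / (Nat.factorial k) * Real.exp (-r)

open Set MeasureTheory

lemma fEigen_nonneg (k : ℕ) (x : ℝ) (hx : 0 ≤ x) : 0 ≤ fEigen k x := by
  unfold fEigen; positivity

lemma fEigen_summable (k : ℕ) : Summable (fun n : ℕ => fEigen k n) := by
  have hr : ‖Real.exp (-1)‖ < 1 := by
    rw [Real.norm_eq_abs, abs_of_pos (Real.exp_pos _)]
    exact Real.exp_lt_one_iff.mpr (by norm_num)
  have := (summable_pow_mul_geometric_of_norm_lt_one k hr).div_const (Nat.factorial k)
  refine this.congr fun n => ?_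
  unfold fEigen
  rw [← Real.exp_nat_mul]
  ring_nf

lemma fEigen_integrableOn (k : ℕ) : IntegrableOn (fun x => fEigen k x) (Ioi (0:ℝ)) := by
  have h := Real.GammaIntegral_convergent (s := (k:ℝ) + 1) (by positivity)
  have h2 := h.div_const (Nat.factorial k : ℝ)
  refine MeasureTheory.IntegrableOn.congr_fun h2 (fun x hx => ?_) measurableSet_Ioi
  have hx' : (0:ℝ) < x := hx
  unfold fEigen
  rw [add_sub_cancel_right, Real.rpow_natCast]
  ring

lemma fEigen_integral (k : ℕ) : ∫ x in Ioi (0:ℝ), fEigen k x = 1 := by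
  have h := Real.Gamma_eq_integral (s := (k:ℝ) + 1) (by positivity)
  have hfac : Real.Gamma ((k:ℝ) + 1) = Nat.factorial k := by
    exact_mod_cast Real.Gamma_nat_eq_factorial k
  have : ∫ x in Ioi (0:ℝ), fEigen k x
      = (∫ x in Ioi (0:ℝ), Real.exp (-x) * x ^ ((k:ℝ) + 1 - 1)) / (Nat.factorial k) := by
    rw [← integral_div]
    refine setIntegral_congr_fun measurableSet_Ioi (fun x hx => ?_)
    have hx' : (0:ℝ) < x := hx
    unfold fEigen
    rw [add_sub_cancel_right, Real.rpow_natCast]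
    ring
  rw [this, ← h, hfac, div_self (by positivity)]

lemma fEigen_hasDerivAt (m : ℕ) (x : ℝ) :
    HasDerivAt (fun x => fEigen (m+1) x)
      (((m+1) * x ^ m - x ^ (m+1)) / (Nat.factorial (m+1)) * Real.exp (-x)) x := by
  have h1 : HasDerivAt (fun x : ℝ => x ^ (m+1) / (Nat.factorial (m+1)))
      (((m:ℝ)+1) * x ^ m / (Nat.factorial (m+1))) x := by
    simpa using (hasDerivAt_pow (m+1) x).div_const (Nat.factorial (m+1) : ℝ)
  have h2 : HasDerivAt (fun x : ℝ => Real.exp (-x)) (-Real.exp (-x)) x := by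
    simpa [Function.comp_def] using (Real.hasDerivAt_exp (-x)).comp x (hasDerivAt_neg x)
  have := h1.mul h2
  refine HasDerivAt.congr_deriv this ?_
  ring

lemma fEigen_monotoneOn (m : ℕ) :
    MonotoneOn (fun x => fEigen (m+1) x) (Icc (0:ℝ) ((m+1:ℕ):ℝ)) := by
  refine monotoneOn_of_deriv_nonneg (convex_Icc _ _) ?_ ?_ ?_
  · have : Continuous (fun x => fEigen (m+1) x) := by
      unfold fEigen; continuity
    exact this.continuousOn
  · intro x hx
    exact (fEigen_hasDerivAt m x).differentiableAt.differentiableWithinAt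
  · intro x hx
    rw [interior_Icc] at hx
    rw [(fEigen_hasDerivAt m x).deriv]
    have hx0 : 0 < x := hx.1
    have hx1 : x ≤ (m:ℝ)+1 := by have := hx.2.le; push_cast at this; linarith
    have key : (0:ℝ) ≤ ((m:ℝ)+1) * x ^ m - x ^ (m+1) := by
      have : x ^ (m+1) = x ^ m * x := pow_succ x m
      rw [this]
      nlinarith [pow_nonneg hx0.le m]
    positivity

lemma fEigen_antitoneOn (m : ℕ) :
    AntitoneOn (fun x => fEigen (m+1) x) (Ici ((m+1:ℕ):ℝ)) := by
  refine antitoneOn_of_deriv_nonpos (convex_Ici _) ?_ ?_ ?_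
  · have : Continuous (fun x => fEigen (m+1) x) := by
      unfold fEigen; continuity
    exact this.continuousOn
  · intro x hx
    exact (fEigen_hasDerivAt m x).differentiableAt.differentiableWithinAt
  · intro x hx
    rw [interior_Ici] at hx
    push_cast at hx
    rw [(fEigen_hasDerivAt m x).deriv]
    have hx0 : (0:ℝ) < x := lt_of_le_of_lt (by positivity) hx
    have key : ((m:ℝ)+1) * x ^ m - x ^ (m+1) ≤ 0 := by
      have : x ^ (m+1) = x ^ m * x := pow_succ x m
      rw [this]
      nlinarith [pow_nonneg hx0.le m, (show (m:ℝ)+1 < x from hx).le]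
    have h1 : (0:ℝ) < (Nat.factorial (m+1) : ℝ) := by positivity
    have h2 : (0:ℝ) < Real.exp (-x) := Real.exp_pos _
    apply mul_nonpos_of_nonpos_of_nonneg _ h2.le
    exact div_nonpos_of_nonpos_of_nonneg key h1.le

lemma fEigen_tsum_le (k : ℕ) (hk : 1 ≤ k) :
    ∑' n : ℕ, fEigen k n ≤ 1 + fEigen k k := by
  obtain ⟨m, rfl⟩ : ∃ m, k = m + 1 := ⟨k - 1, (Nat.succ_pred_eq_of_pos hk).symm⟩
  set k := m + 1
  -- split the sum
  rw [← (fEigen_summable k).sum_add_tsum_nat_add (k+1)]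
  have hA : ∑ i ∈ Finset.range k, fEigen k i ≤ ∫ x in (0:ℝ)..k, fEigen k x := by
    have h0 : MonotoneOn (fun x => fEigen k x) (Icc (0:ℝ) (0 + (k:ℕ))) := by
      rw [zero_add]; exact fEigen_monotoneOn m
    have := MonotoneOn.sum_le_integral h0
    simpa using this
  have hB : ∑' n : ℕ, fEigen k (↑(n + (k+1))) ≤ ∫ x in Ioi ((k:ℝ)), fEigen k x := by
    apply Real.tsum_le_of_sum_range_le
    · intro n; exact fEigen_nonneg k _ (by positivity)
    · intro M
      have h1 : ∑ i ∈ Finset.range M, fEigen k (((k:ℝ)) + ((i:ℕ) + 1 : ℕ))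
          ≤ ∫ x in ((k:ℝ))..((k:ℝ) + M), fEigen k x := by
        apply AntitoneOn.sum_le_integral (x₀ := (k:ℝ)) (a := M) (f := fun x => fEigen k x)
        exact (fEigen_antitoneOn m).mono Icc_subset_Ici_self
      have heq : ∑ i ∈ Finset.range M, fEigen k (↑(i + (k+1)))
          = ∑ i ∈ Finset.range M, fEigen k (((k:ℝ)) + ((i:ℕ) + 1 : ℕ)) := by
        apply Finset.sum_congr rfl
        intro i _
        congr 1
        push_cast
        ring
      have h2 : ∫ x in ((k:ℝ))..((k:ℝ) + M), fEigen k x ≤ ∫ x in Ioi ((k:ℝ)), fEigen k x := by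
        rw [intervalIntegral.integral_of_le (by linarith [Nat.cast_nonneg (α := ℝ) M])]
        apply setIntegral_mono_set
        · exact (fEigen_integrableOn k).mono_set
            (Ioi_subset_Ioi (by positivity))
        · filter_upwards [ae_restrict_mem measurableSet_Ioi] with x hx
          exact fEigen_nonneg k x (le_of_lt (lt_of_le_of_lt (by positivity) hx))
        · exact HasSubset.Subset.eventuallyLE Ioc_subset_Ioi_self
      rw [heq]
      exact le_trans h1 h2
  have hsplit : ∑ i ∈ Finset.range (k+1), fEigen k i
      = ∑ i ∈ Finset.range k, fEigen k i + fEigen k k := by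
    rw [Finset.sum_range_succ]
  have hint : (∫ x in (0:ℝ)..k, fEigen k x) + (∫ x in Ioi ((k:ℝ)), fEigen k x) = 1 := by
    rw [intervalIntegral.integral_of_le (by positivity)]
    rw [← setIntegral_union (Ioc_disjoint_Ioi le_rfl) measurableSet_Ioi
      ((fEigen_integrableOn k).mono_set Ioc_subset_Ioi_self)
      ((fEigen_integrableOn k).mono_set (Ioi_subset_Ioi (by positivity)))]
    rw [Ioc_union_Ioi_eq_Ioi (by positivity)]
    exact fEigen_integral k
  calc ∑ i ∈ Finset.range (k+1), fEigen k i + ∑' n : ℕ, fEigen k (↑(n + (k+1)))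
      ≤ (∑ i ∈ Finset.range k, fEigen k i + fEigen k k) + ∫ x in Ioi ((k:ℝ)), fEigen k x := by
        rw [hsplit]; linarith
    _ ≤ ((∫ x in (0:ℝ)..k, fEigen k x) + fEigen k k) + ∫ x in Ioi ((k:ℝ)), fEigen k x := by
        linarith
    _ = 1 + fEigen k k := by linarith

lemma succ_pow_le (K : ℕ) (hK : K ≠ 0) : ((K:ℝ)+1)^K ≤ (K:ℝ)^K * Real.exp 1 := by
  have hKpos : (0:ℝ) < K := by exact_mod_cast Nat.pos_of_ne_zero hK
  have h1 : (1 + 1/(K:ℝ)) ≤ Real.exp (1/K) := by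
    have := Real.add_one_le_exp (1/(K:ℝ)); linarith
  have h2 : ((K:ℝ)+1) = (K:ℝ) * (1 + 1/(K:ℝ)) := by field_simp
  rw [h2, mul_pow]
  have h3 : (1+1/(K:ℝ))^K ≤ Real.exp (1/K) ^ K := pow_le_pow_left₀ (by positivity) h1 K
  have h4 : Real.exp (1/(K:ℝ)) ^ K = Real.exp 1 := by
    rw [← Real.exp_nat_mul]
    congr 1
    field_simp
  exact mul_le_mul_of_nonneg_left (h3.trans_eq h4) (by positivity)

lemma fEigen_pow_aux (m : ℕ) :
    ((m:ℝ)+2)^(m+2) ≤ 2 * (Nat.factorial (m+2)) * Real.exp 1 ^ m := by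
  induction m with
  | zero => norm_num [Nat.factorial]
  | succ n ih =>
    have hs := succ_pow_le (n+2) (by omega)
    push_cast at hs
    have hfac : ((Nat.factorial (n+1+2)):ℝ) = ((n:ℝ)+3) * (Nat.factorial (n+2)) := by
      have : Nat.factorial (n+3) = (n+3) * Nat.factorial (n+2) := rfl
      push_cast [this]
      ring
    have hepos : (0:ℝ) < Real.exp 1 := Real.exp_pos 1
    have hfpos : (0:ℝ) < (Nat.factorial (n+2):ℝ) := by positivity
    have h3 : (0:ℝ) ≤ (n:ℝ)+3 := by positivity
    push_cast
    calc ((n:ℝ)+1+2)^(n+1+2) = ((n:ℝ)+3) * ((n:ℝ)+3)^(n+2) := by ring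
      _ ≤ ((n:ℝ)+3) * (((n:ℝ)+2)^(n+2) * Real.exp 1) := by
          apply mul_le_mul_of_nonneg_left _ h3
          calc ((n:ℝ)+3)^(n+2) = (((n:ℝ)+2)+1)^(n+2) := by ring_nf
            _ ≤ ((n:ℝ)+2)^(n+2) * Real.exp 1 := hs
      _ ≤ ((n:ℝ)+3) * ((2 * (Nat.factorial (n+2)) * Real.exp 1 ^ n) * Real.exp 1) := by
          apply mul_le_mul_of_nonneg_left _ h3
          exact mul_le_mul_of_nonneg_right ih hepos.le
      _ = 2 * (((n:ℝ)+3) * (Nat.factorial (n+2))) * Real.exp 1 ^ (n+1) := by ring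
      _ = 2 * (Nat.factorial (n+1+2)) * Real.exp 1 ^ (n+1) := by rw [hfac]

lemma fEigen_self_le (k : ℕ) (hk : 2 ≤ k) : fEigen k k ≤ 2 / Real.exp 1 ^ 2 := by
  obtain ⟨m, rfl⟩ : ∃ m, k = m + 2 := ⟨k - 2, by omega⟩
  have haux := fEigen_pow_aux m
  have hexp : Real.exp (((m+2:ℕ)):ℝ) = Real.exp 1 ^ (m+2) := by
    rw [← Real.exp_nat_mul]; norm_num
  unfold fEigen
  rw [Real.exp_neg, hexp]
  have hfpos : (0:ℝ) < (Nat.factorial (m+2):ℝ) := by positivity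
  have hepos : (0:ℝ) < Real.exp 1 := Real.exp_pos 1
  have key : (((m+2:ℕ)):ℝ)^(m+2) * Real.exp 1 ^ 2
      ≤ 2 * ((Nat.factorial (m+2):ℝ) * Real.exp 1 ^ (m+2)) := by
    push_cast
    calc ((m:ℝ)+2)^(m+2) * Real.exp 1 ^ 2
        ≤ (2 * (Nat.factorial (m+2)) * Real.exp 1 ^ m) * Real.exp 1 ^ 2 :=
          mul_le_mul_of_nonneg_right haux (by positivity)
      _ = 2 * ((Nat.factorial (m+2):ℝ) * Real.exp 1 ^ (m+2)) := by ring
  have heq : (((m+2:ℕ)):ℝ)^(m+2) / (Nat.factorial (m+2)) * (Real.exp 1 ^ (m+2))⁻¹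
      = (((m+2:ℕ)):ℝ)^(m+2) / ((Nat.factorial (m+2):ℝ) * Real.exp 1 ^ (m+2)) := by
    field_simp
  rw [heq, div_le_div_iff₀ (by positivity) (by positivity)]
  linarith

lemma fEigen_zero_tsum : ∑' n : ℕ, fEigen 0 n = Real.exp 1 / (Real.exp 1 - 1) := by
  have h : ∀ n : ℕ, fEigen 0 n = Real.exp (-1) ^ n := by
    intro n
    unfold fEigen
    rw [← Real.exp_nat_mul]
    norm_num [Nat.factorial]
  have hlt : Real.exp (-1) < 1 := Real.exp_lt_one_iff.mpr (by norm_num)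
  rw [tsum_congr h, tsum_geometric_of_lt_one (Real.exp_pos _).le hlt]
  have hE : 1 < Real.exp 1 := by
    have := Real.exp_one_gt_d9; linarith
  have h0 : Real.exp 1 ≠ 0 := by positivity
  rw [Real.exp_neg]
  have hne : 1 - (Real.exp 1)⁻¹ = (Real.exp 1 - 1)/Real.exp 1 := by field_simp
  rw [hne, inv_div]

lemma fEigen_one_bound : fEigen 1 1 + ∑' n : ℕ, fEigen 1 n < Real.exp 1 / (Real.exp 1 - 1) := by
  have h : ∀ n : ℕ, fEigen 1 n = n * Real.exp (-1) ^ n := by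
    intro n
    unfold fEigen
    rw [← Real.exp_nat_mul]
    norm_num [Nat.factorial]
  have hr : ‖Real.exp (-1)‖ < 1 := by
    rw [Real.norm_eq_abs, abs_of_pos (Real.exp_pos _)]
    exact Real.exp_lt_one_iff.mpr (by norm_num)
  have hs : ∑' n : ℕ, (n:ℝ) * Real.exp (-1) ^ n
      = Real.exp (-1) / (1 - Real.exp (-1)) ^ 2 := tsum_coe_mul_geometric_of_norm_lt_one hr
  rw [tsum_congr h, hs]
  have hE : (2.7182818283:ℝ) < Real.exp 1 := Real.exp_one_gt_d9
  have hE' : Real.exp 1 < 2.7182818286 := Real.exp_one_lt_d9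
  have hf1 : fEigen 1 1 = Real.exp (-1) := by
    unfold fEigen; norm_num [Nat.factorial]
  rw [hf1, Real.exp_neg]
  set E := Real.exp 1 with hEdef
  have hE0 : (0:ℝ) < E := Real.exp_pos 1
  have hE1 : (1:ℝ) < E := by linarith
  have hgap : (0:ℝ) < 1 - E⁻¹ := by
    have : E⁻¹ < 1 := by
      rw [inv_lt_one_iff₀]; right; exact hE1
    linarith
  have hinv : E⁻¹ = 1/E := inv_eq_one_div E
  have hq : (1 - E⁻¹) = (E - 1)/E := by field_simp
  rw [hq]
  have hEne : E ≠ 0 := ne_of_gt hE0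
  have h2 : E⁻¹ / ((E-1)/E)^2 = E / (E-1)^2 := by
    rw [div_pow, div_div_eq_mul_div]
    congr 1
    rw [pow_two, inv_mul_cancel_left₀ hEne]
  rw [h2, inv_eq_one_div]
  have hE1pos : (0:ℝ) < E - 1 := by linarith
  rw [div_add_div _ _ hEne (by positivity), div_lt_div_iff₀ (by positivity) hE1pos]
  have h27 : (2.7:ℝ) < E := by linarith
  have h28 : E < 2.72 := by linarith
  nlinarith [sq_nonneg (E - 2.7), sq_nonneg (E*E - 2.7*E), mul_pos (sub_pos.mpr h27) (sub_pos.mpr h27), sq_nonneg (E - 1), mul_pos hE0 hE0]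

/-- For every integer `k ≥ 1`,
`f_k(k) + Σ_{n=0}^∞ f_k(n) < Σ_{n=0}^∞ f_0(n) = e/(e-1)`. -/
theorem fEigen_series_bound (k : ℕ) (hk : 1 ≤ k) :
    fEigen k k + ∑' n : ℕ, fEigen k n < Real.exp 1 / (Real.exp 1 - 1) ∧
    ∑' n : ℕ, fEigen 0 n = Real.exp 1 / (Real.exp 1 - 1) := by
  refine ⟨?_, fEigen_zero_tsum⟩
  rcases eq_or_lt_of_le hk with h1 | h2
  · rw [← h1]; exact_mod_cast fEigen_one_bound
  · have hk2 : 2 ≤ k := h2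
    have ht := fEigen_tsum_le k hk
    have hf := fEigen_self_le k hk2
    have hE : (2.7182818283:ℝ) < Real.exp 1 := Real.exp_one_gt_d9
    have hE' : Real.exp 1 < 2.7182818286 := Real.exp_one_lt_d9
    have key : 1 + 2 * (2 / Real.exp 1 ^ 2) < Real.exp 1 / (Real.exp 1 - 1) := by
      rw [show (1:ℝ) + 2 * (2 / Real.exp 1 ^ 2) = (Real.exp 1 ^ 2 + 4) / Real.exp 1 ^ 2 by
        field_simp; ring]
      rw [div_lt_div_iff₀ (by positivity) (by linarith)]
      nlinarith
    linarith
end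

section
/- For every R > 0 and every n ∈ ℕ, the operator norm of the Daubechies localization operator on the n-iterate spherically symmetric Cantor set satisfies sup_{k∈ℕ} ∫_{C_n(πR^2)} (r^k/k!) e^{-r} dr ≤ 2·∫_{C_n(πR^2)} e^{-r} dr; that is, ‖P_{C_n(R^2)}‖_op ≤ 2·λ_0(𝒞_n(R)). -/
open Real MeasureTheory

/-- The `n`-iterate mid-third Cantor set based in `[0, L]`:
`C₀(L) = [0,L]` and `C_{n+1}(L) = (1/3)·C_n(L) ∪ (2L/3 + (1/3)·C_n(L))`. -/
def cantorIterate : ℕ → ℝ → Set ℝ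
  | 0, L => Set.Icc 0 L
  | n + 1, L =>
      (fun x => x / 3) '' cantorIterate n L ∪
        (fun x => 2 * L / 3 + x / 3) '' cantorIterate n L

namespace CantorAux

noncomputable def fk (k : ℕ) (r : ℝ) : ℝ := r ^ k / (Nat.factorial k) * Real.exp (-r)

lemma fk_cont (k : ℕ) : Continuous (fk k) := by
  unfold fk; continuity

lemma fk_nonneg (k : ℕ) {r : ℝ} (hr : 0 ≤ r) : 0 ≤ fk k r := by
  unfold fk; positivity

lemma exp_neg_cont : Continuous (fun r : ℝ => Real.exp (-r)) := by continuity

/-- closed form for `∫₀ᵗ e^{-u} du`. -/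
lemma A0_eq (t : ℝ) : (∫ u in (0:ℝ)..t, Real.exp (-u)) = 1 - Real.exp (-t) := by
  have hF : ∀ u : ℝ, HasDerivAt (fun x : ℝ => -Real.exp (-x)) (Real.exp (-u)) u := by
    intro u
    have h := ((Real.hasDerivAt_exp (-u)).comp u (hasDerivAt_neg u)).neg
    simp only [mul_neg, mul_one, neg_neg] at h
    exact h
  have := intervalIntegral.integral_eq_sub_of_hasDerivAt (f := fun x : ℝ => -Real.exp (-x))
    (f' := fun u : ℝ => Real.exp (-u)) (a := 0) (b := t)
    (fun u _ => hF u) (exp_neg_cont.intervalIntegrable 0 t)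
  simpa using this

lemma A0_pos {t : ℝ} (ht : 0 < t) : 0 < ∫ u in (0:ℝ)..t, Real.exp (-u) := by
  rw [A0_eq]
  have : Real.exp (-t) < 1 := by
    rw [Real.exp_lt_one_iff]; linarith
  linarith

lemma A0_nonneg {t : ℝ} (ht : 0 ≤ t) : 0 ≤ ∫ u in (0:ℝ)..t, Real.exp (-u) := by
  rw [A0_eq]
  have : Real.exp (-t) ≤ 1 := by
    rw [Real.exp_le_one_iff]; linarith
  linarith

/-- monotone ratio lemma: for `0 ≤ a`, `0 ≤ t ≤ T`,
`(∫₀ᵀ e^{-u})·(∫₀ᵗ f_k(a+u)) ≤ (∫₀ᵀ f_k(a+u))·(∫₀ᵗ e^{-u})`. -/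
lemma ratio_mono (k : ℕ) {a t T : ℝ} (ha : 0 ≤ a) (ht : 0 ≤ t) (htT : t ≤ T) :
    (∫ u in (0:ℝ)..T, Real.exp (-u)) * (∫ u in (0:ℝ)..t, fk k (a + u))
      ≤ (∫ u in (0:ℝ)..T, fk k (a + u)) * (∫ u in (0:ℝ)..t, Real.exp (-u)) := by
  have hfc : Continuous (fun u : ℝ => fk k (a + u)) := (fk_cont k).comp (by continuity)
  have hec := exp_neg_cont
  set K : ℝ := (a + t) ^ k / (Nat.factorial k) * Real.exp (-a) with hK
  have hKnn : 0 ≤ K := by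
    have : (0:ℝ) ≤ a + t := by linarith
    positivity
  -- split the integrals at t
  have hsplit1 : (∫ u in (0:ℝ)..T, Real.exp (-u)) =
      (∫ u in (0:ℝ)..t, Real.exp (-u)) + ∫ u in t..T, Real.exp (-u) :=
    (intervalIntegral.integral_add_adjacent_intervals
      (hec.intervalIntegrable 0 t) (hec.intervalIntegrable t T)).symm
  have hsplit2 : (∫ u in (0:ℝ)..T, fk k (a + u)) =
      (∫ u in (0:ℝ)..t, fk k (a + u)) + ∫ u in t..T, fk k (a + u) :=
    (intervalIntegral.integral_add_adjacent_intervals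
      (hfc.intervalIntegrable 0 t) (hfc.intervalIntegrable t T)).symm
  set A0t := ∫ u in (0:ℝ)..t, Real.exp (-u) with hA0t
  set c := ∫ u in (0:ℝ)..t, fk k (a + u) with hc
  set E := ∫ u in t..T, Real.exp (-u) with hE
  set Fv := ∫ u in t..T, fk k (a + u) with hFv
  have hA0tnn : 0 ≤ A0t := A0_nonneg ht
  have hEnn : 0 ≤ E := intervalIntegral.integral_nonneg htT (fun u _ => (Real.exp_pos _).le)
  -- c ≤ K * A0t
  have hcK : c ≤ K * A0t := by
    have h1 : c ≤ ∫ u in (0:ℝ)..t, K * Real.exp (-u) := by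
      apply intervalIntegral.integral_mono_on ht (hfc.intervalIntegrable 0 t)
        ((hec.intervalIntegrable 0 t).const_mul K)
      intro u hu
      have hu0 : 0 ≤ u := hu.1
      have hut : u ≤ t := hu.2
      have h1 : Real.exp (-a) * Real.exp (-u) = Real.exp (-(a + u)) := by
        rw [← Real.exp_add]; ring_nf
      rw [hK, mul_assoc, h1]
      unfold fk
      gcongr <;> linarith
    calc c ≤ ∫ u in (0:ℝ)..t, K * Real.exp (-u) := h1
      _ = K * A0t := by rw [intervalIntegral.integral_const_mul]
  -- K * E ≤ Fv
  have hKE : K * E ≤ Fv := by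
    have h1 : (∫ u in t..T, K * Real.exp (-u)) ≤ Fv := by
      apply intervalIntegral.integral_mono_on htT
        ((hec.intervalIntegrable t T).const_mul K) (hfc.intervalIntegrable t T)
      intro u hu
      have htu : t ≤ u := hu.1
      have h1 : Real.exp (-a) * Real.exp (-u) = Real.exp (-(a + u)) := by
        rw [← Real.exp_add]; ring_nf
      rw [hK, mul_assoc, h1]
      unfold fk
      gcongr <;> linarith
    calc K * E = ∫ u in t..T, K * Real.exp (-u) := by
          rw [intervalIntegral.integral_const_mul]
      _ ≤ Fv := h1
  -- combine
  rw [hsplit1, hsplit2]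
  have : E * c ≤ Fv * A0t := by
    calc E * c ≤ E * (K * A0t) := mul_le_mul_of_nonneg_left hcK hEnn
      _ = (K * E) * A0t := by ring
      _ ≤ Fv * A0t := mul_le_mul_of_nonneg_right hKE hA0tnn
  nlinarith [this]


lemma cantor_subset (n : ℕ) : ∀ L : ℝ, 0 ≤ L → cantorIterate n L ⊆ Set.Icc 0 L := by
  induction n with
  | zero => intro L hL; exact subset_rfl
  | succ n ih =>
    intro L hL
    show (fun x => x / 3) '' cantorIterate n L ∪
        (fun x => 2 * L / 3 + x / 3) '' cantorIterate n L ⊆ Set.Icc 0 L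
    rintro y (⟨x, hx, rfl⟩ | ⟨x, hx, rfl⟩) <;>
      obtain ⟨h0, h1⟩ := ih L hL hx <;> constructor <;> simp only [] <;> linarith

lemma cantor_compact (n : ℕ) (L : ℝ) : IsCompact (cantorIterate n L) := by
  induction n generalizing L with
  | zero => exact isCompact_Icc
  | succ n ih =>
    exact ((ih L).image (by continuity)).union ((ih L).image (by continuity))

lemma cantor_measurable (n : ℕ) (L : ℝ) : MeasurableSet (cantorIterate n L) :=
  (cantor_compact n L).measurableSet

lemma cantor_scale (n : ℕ) : ∀ L : ℝ,
    (fun x : ℝ => x / 3) '' cantorIterate n L = cantorIterate n (L / 3) := by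
  induction n with
  | zero =>
    intro L
    show (fun x : ℝ => x / 3) '' Set.Icc 0 L = Set.Icc 0 (L / 3)
    rcases le_or_gt 0 L with hL | hL
    · have h : (fun x : ℝ => x / 3) = (fun x : ℝ => (1/3) * x) := by funext x; ring
      rw [h, Set.image_mul_left_Icc (by norm_num) hL]
      norm_num
      ring_nf
    · rw [Set.Icc_eq_empty (by linarith), Set.Icc_eq_empty (by linarith), Set.image_empty]
  | succ n ih =>
    intro L
    show (fun x : ℝ => x / 3) '' ((fun x => x / 3) '' cantorIterate n L ∪
        (fun x => 2 * L / 3 + x / 3) '' cantorIterate n L) =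
      (fun x => x / 3) '' cantorIterate n (L / 3) ∪
        (fun x => 2 * (L / 3) / 3 + x / 3) '' cantorIterate n (L / 3)
    rw [Set.image_union, ← ih L]
    simp only [Set.image_image]
    congr 1
    apply Set.image_congr'
    intro x
    show (2 * L / 3 + x / 3) / 3 = 2 * (L / 3) / 3 + x / 3 / 3
    ring

lemma cantor_decomp (n : ℕ) (m : ℝ) :
    cantorIterate (n + 1) (3 * m) =
      cantorIterate n m ∪ (fun x : ℝ => 2 * m + x) '' cantorIterate n m := by
  have h1 : (fun x : ℝ => x / 3) '' cantorIterate n (3 * m) = cantorIterate n m := by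
    rw [cantor_scale]; norm_num
  have h2 : (fun x : ℝ => 2 * (3 * m) / 3 + x / 3) '' cantorIterate n (3 * m) =
      (fun x : ℝ => 2 * m + x) '' cantorIterate n m := by
    rw [← h1, Set.image_image]
    apply Set.image_congr'
    intro x
    show 2 * (3 * m) / 3 + x / 3 = 2 * m + x / 3
    ring
  show (fun x : ℝ => x / 3) '' cantorIterate n (3 * m) ∪
      (fun x => 2 * (3 * m) / 3 + x / 3) '' cantorIterate n (3 * m) = _
  rw [h1, h2]

lemma integral_translate {s : Set ℝ} (hs : MeasurableSet s) (c : ℝ) (g : ℝ → ℝ) :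
    ∫ x in (fun x : ℝ => c + x) '' s, g x = ∫ x in s, g (c + x) := by
  have h := integral_image_eq_integral_abs_deriv_smul (f := fun x : ℝ => c + x)
    (f' := fun _ => (1:ℝ)) hs
    (fun x _ => ((hasDerivAt_id x).const_add c).hasDerivWithinAt)
    (fun x _ y _ h => by simpa using h) g
  simpa using h


lemma integrableOn_cantor {g : ℝ → ℝ} (hg : Continuous g) (n : ℕ) (L : ℝ) :
    IntegrableOn g (cantorIterate n L) :=
  hg.continuousOn.integrableOn_compact (cantor_compact n L)

lemma key (k : ℕ) : ∀ (n : ℕ) (ℓ a : ℝ), 0 < ℓ → 0 ≤ a →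
    (∫ u in (0:ℝ)..(2*ℓ), Real.exp (-u)) * (∫ r in cantorIterate n ℓ, fk k (a + r))
      ≤ (∫ u in (0:ℝ)..(2*ℓ), fk k (a + u)) * (∫ r in cantorIterate n ℓ, Real.exp (-r)) := by
  intro n
  induction n with
  | zero =>
    intro ℓ a hℓ ha
    have h1 : (∫ r in cantorIterate 0 ℓ, fk k (a + r)) = ∫ u in (0:ℝ)..ℓ, fk k (a + u) := by
      show (∫ r in Set.Icc 0 ℓ, fk k (a + r)) = _
      rw [MeasureTheory.integral_Icc_eq_integral_Ioc, ← intervalIntegral.integral_of_le hℓ.le]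
    have h2 : (∫ r in cantorIterate 0 ℓ, Real.exp (-r)) = ∫ u in (0:ℝ)..ℓ, Real.exp (-u) := by
      show (∫ r in Set.Icc 0 ℓ, Real.exp (-r)) = _
      rw [MeasureTheory.integral_Icc_eq_integral_Ioc, ← intervalIntegral.integral_of_le hℓ.le]
    rw [h1, h2]
    exact ratio_mono k ha hℓ.le (by linarith)
  | succ n ih =>
    intro ℓ' a hℓ' ha
    obtain ⟨m, hm0, rfl⟩ : ∃ m : ℝ, 0 < m ∧ ℓ' = 3 * m :=
      ⟨ℓ' / 3, by linarith, by ring⟩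
    have hS : MeasurableSet (cantorIterate n m) := cantor_measurable n m
    have hTcpt : IsCompact ((fun x : ℝ => 2 * m + x) '' cantorIterate n m) :=
      (cantor_compact n m).image (by continuity)
    have hST : Disjoint (cantorIterate n m) ((fun x : ℝ => 2 * m + x) '' cantorIterate n m) := by
      apply Set.disjoint_left.mpr
      rintro x hxS ⟨y, hyS, rfl⟩
      have h1 := cantor_subset n m hm0.le hxS
      have h2 := cantor_subset n m hm0.le hyS
      have hle : 2 * m + y ≤ m := h1.2
      have hy0 : 0 ≤ y := h2.1
      linarith
    have hdecomp : ∀ g : ℝ → ℝ, Continuous g →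
        (∫ r in cantorIterate (n+1) (3*m), g r) =
          (∫ r in cantorIterate n m, g r) + ∫ r in cantorIterate n m, g (2*m + r) := by
      intro g hg
      rw [cantor_decomp n m,
        MeasureTheory.setIntegral_union hST hTcpt.measurableSet
          (integrableOn_cantor hg n m)
          (hg.continuousOn.integrableOn_compact hTcpt),
        integral_translate hS]
    have hfc : Continuous (fun r : ℝ => fk k (a + r)) := (fk_cont k).comp (by continuity)
    have hE1 : (∫ r in cantorIterate (n+1) (3*m), fk k (a + r)) =
        (∫ r in cantorIterate n m, fk k (a + r)) +
          ∫ r in cantorIterate n m, fk k ((a + 2*m) + r) := by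
      rw [hdecomp _ hfc]
      congr 1
      apply MeasureTheory.setIntegral_congr_fun hS
      intro r _
      show fk k (a + (2*m + r)) = fk k ((a + 2*m) + r)
      rw [add_assoc]
    have hE2 : (∫ r in cantorIterate (n+1) (3*m), Real.exp (-r)) =
        (1 + Real.exp (-(2*m))) * ∫ r in cantorIterate n m, Real.exp (-r) := by
      rw [hdecomp _ exp_neg_cont]
      have h : ∀ r : ℝ, Real.exp (-(2*m + r)) = Real.exp (-(2*m)) * Real.exp (-r) := by
        intro r; rw [← Real.exp_add]; ring_nf
      simp_rw [h, MeasureTheory.integral_const_mul]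
      ring
    set X1 := ∫ r in cantorIterate n m, fk k (a + r) with hX1
    set X2 := ∫ r in cantorIterate n m, fk k ((a + 2*m) + r) with hX2
    set Y := ∫ r in cantorIterate n m, Real.exp (-r) with hY
    have hYnn : 0 ≤ Y := MeasureTheory.setIntegral_nonneg hS (fun r _ => (Real.exp_pos _).le)
    have hIH1 := ih m a hm0 ha
    have hIH2 := ih m (a + 2*m) hm0 (by linarith)
    set I1 := ∫ u in (0:ℝ)..(2*m), fk k (a + u) with hI1
    set I2 := ∫ u in (0:ℝ)..(2*m), fk k ((a + 2*m) + u) with hI2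
    set P := ∫ u in (0:ℝ)..(2*m), Real.exp (-u) with hP
    have hPpos : 0 < P := A0_pos (by linarith)
    -- interval additivity: I4 = I1 + I2
    have hadj : (∫ u in (0:ℝ)..(4*m), fk k (a + u)) = I1 + ∫ u in (2*m)..(4*m), fk k (a + u) :=
      (intervalIntegral.integral_add_adjacent_intervals
        (hfc.intervalIntegrable 0 (2*m)) (hfc.intervalIntegrable (2*m) (4*m))).symm
    have hI2' : I2 = ∫ u in (2*m)..(4*m), fk k (a + u) := by
      have h := intervalIntegral.integral_comp_add_left (a := (0:ℝ)) (b := 2*m)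
        (fun u => fk k (a + u)) (2*m)
      rw [hI2]
      have heq : ∀ u : ℝ, fk k ((a + 2*m) + u) = fk k (a + (2*m + u)) := by
        intro u; rw [add_assoc]
      simp_rw [heq]
      rw [h]
      congr 1 <;> ring
    have hI4 : (∫ u in (0:ℝ)..(4*m), fk k (a + u)) = I1 + I2 := by rw [hadj, hI2']
    set I4 := ∫ u in (0:ℝ)..(4*m), fk k (a + u) with hI4def
    set I6 := ∫ u in (0:ℝ)..(6*m), fk k (a + u) with hI6
    -- ratio lemma at (4m, 6m)
    have hratio : (∫ u in (0:ℝ)..(6*m), Real.exp (-u)) * I4 ≤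
        I6 * ∫ u in (0:ℝ)..(4*m), Real.exp (-u) :=
      ratio_mono k ha (by linarith) (by linarith)
    have hA04 : (∫ u in (0:ℝ)..(4*m), Real.exp (-u)) = (1 + Real.exp (-(2*m))) * P := by
      rw [hP, A0_eq, A0_eq]
      have h4 : Real.exp (-(4*m)) = Real.exp (-(2*m)) * Real.exp (-(2*m)) := by
        rw [← Real.exp_add]; ring_nf
      rw [h4]; ring
    -- assemble
    have hsum : P * (X1 + X2) ≤ I4 * Y := by
      rw [hI4]
      calc P * (X1 + X2) = P * X1 + P * X2 := by ring
        _ ≤ I1 * Y + I2 * Y := add_le_add hIH1 hIH2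
        _ = (I1 + I2) * Y := by ring
    have hA06nn : 0 ≤ ∫ u in (0:ℝ)..(6*m), Real.exp (-u) := A0_nonneg (by linarith)
    have h2l : (2:ℝ) * (3*m) = 6*m := by ring
    rw [hE1, hE2, h2l]
    -- goal : A0(6m) * (X1 + X2) ≤ I6 * ((1 + q) * Y)
    have hchain : P * ((∫ u in (0:ℝ)..(6*m), Real.exp (-u)) * (X1 + X2)) ≤
        P * (I6 * ((1 + Real.exp (-(2*m))) * Y)) := by
      calc P * ((∫ u in (0:ℝ)..(6*m), Real.exp (-u)) * (X1 + X2))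
          = (∫ u in (0:ℝ)..(6*m), Real.exp (-u)) * (P * (X1 + X2)) := by ring
        _ ≤ (∫ u in (0:ℝ)..(6*m), Real.exp (-u)) * (I4 * Y) := by
            apply mul_le_mul_of_nonneg_left hsum hA06nn
        _ = ((∫ u in (0:ℝ)..(6*m), Real.exp (-u)) * I4) * Y := by ring
        _ ≤ (I6 * ∫ u in (0:ℝ)..(4*m), Real.exp (-u)) * Y :=
            mul_le_mul_of_nonneg_right hratio hYnn
        _ = P * (I6 * ((1 + Real.exp (-(2*m))) * Y)) := by rw [hA04]; ring
    exact le_of_mul_le_mul_left hchain hPpos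


lemma fk_integrableOn_Ioi (k : ℕ) : IntegrableOn (fk k) (Set.Ioi (0:ℝ)) := by
  have h0 : (0:ℝ) < (k:ℝ) + 1 := by positivity
  have hint := Real.GammaIntegral_convergent h0
  have heq : ∀ x ∈ Set.Ioi (0:ℝ),
      Real.exp (-x) * x ^ ((k:ℝ) + 1 - 1) = Real.exp (-x) * x ^ k := by
    intro x _
    rw [show ((k:ℝ) + 1 - 1) = (k:ℝ) by ring, Real.rpow_natCast]
  have h2 : IntegrableOn (fun x : ℝ => Real.exp (-x) * x ^ k) (Set.Ioi (0:ℝ)) :=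
    (hint.congr_fun heq measurableSet_Ioi)
  have h3 : IntegrableOn (fun x : ℝ => ((Nat.factorial k : ℝ))⁻¹ *
      (Real.exp (-x) * x ^ k)) (Set.Ioi (0:ℝ)) := h2.const_mul _
  apply h3.congr_fun _ measurableSet_Ioi
  intro x _
  unfold fk
  field_simp

lemma fk_integral_Ioi (k : ℕ) : (∫ u in Set.Ioi (0:ℝ), fk k u) = 1 := by
  have h0 : (0:ℝ) < (k:ℝ) + 1 := by positivity
  have hg := Real.Gamma_eq_integral h0
  have hfact : Real.Gamma ((k:ℝ) + 1) = (Nat.factorial k : ℝ) := by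
    exact_mod_cast Real.Gamma_nat_eq_factorial k
  have hgr : (∫ x in Set.Ioi (0:ℝ), Real.exp (-x) * x ^ k) = (Nat.factorial k : ℝ) := by
    rw [← hfact, hg]
    apply MeasureTheory.setIntegral_congr_fun measurableSet_Ioi
    intro x _
    dsimp only
    rw [show ((k:ℝ) + 1 - 1) = (k:ℝ) by ring, Real.rpow_natCast]
  have hconv : (∫ u in Set.Ioi (0:ℝ), fk k u) =
      ((Nat.factorial k : ℝ))⁻¹ * ∫ x in Set.Ioi (0:ℝ), Real.exp (-x) * x ^ k := by
    rw [← MeasureTheory.integral_const_mul]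
    apply MeasureTheory.setIntegral_congr_fun measurableSet_Ioi
    intro x _
    dsimp only
    unfold fk
    field_simp
  rw [hconv, hgr]
  have : (Nat.factorial k : ℝ) ≠ 0 := by
    exact_mod_cast (Nat.factorial_pos k).ne'
  field_simp

lemma Abound (k : ℕ) {T : ℝ} (hT : 0 < T) :
    (∫ u in (0:ℝ)..T, fk k u) ≤ 2 * ∫ u in (0:ℝ)..T, Real.exp (-u) := by
  rcases le_total T 1 with h1 | h1
  · have hmono : (∫ u in (0:ℝ)..T, fk k u) ≤ ∫ u in (0:ℝ)..T, Real.exp (-u) := by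
      apply intervalIntegral.integral_mono_on hT.le ((fk_cont k).intervalIntegrable 0 T)
        (exp_neg_cont.intervalIntegrable 0 T)
      intro u hu
      unfold fk
      have hu1 : u ≤ 1 := le_trans hu.2 h1
      have hfac : (1:ℝ) ≤ (Nat.factorial k : ℝ) := by
        exact_mod_cast Nat.one_le_iff_ne_zero.mpr (Nat.factorial_pos k).ne'
      have hpk : u ^ k ≤ 1 := pow_le_one₀ hu.1 hu1
      have hd : u ^ k / (Nat.factorial k : ℝ) ≤ 1 := by
        rw [div_le_one (by linarith)]
        linarith
      calc u ^ k / (Nat.factorial k : ℝ) * Real.exp (-u) ≤ 1 * Real.exp (-u) :=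
            mul_le_mul_of_nonneg_right hd (Real.exp_pos _).le
        _ = Real.exp (-u) := one_mul _
    have hnn : 0 ≤ ∫ u in (0:ℝ)..T, Real.exp (-u) := A0_nonneg hT.le
    linarith
  · have hle1 : (∫ u in (0:ℝ)..T, fk k u) ≤ 1 := by
      rw [intervalIntegral.integral_of_le hT.le]
      rw [← fk_integral_Ioi k]
      apply MeasureTheory.setIntegral_mono_set (fk_integrableOn_Ioi k)
      · filter_upwards [MeasureTheory.ae_restrict_mem measurableSet_Ioi] with x hx
        exact fk_nonneg k (le_of_lt hx)
      · exact (Set.Ioc_subset_Ioi_self).eventuallyLE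
    rw [A0_eq]
    have h2e : (2:ℝ) ≤ Real.exp 1 := by
      have := Real.exp_one_gt_d9
      linarith
    have hexpT : Real.exp (-T) ≤ Real.exp (-1) := Real.exp_le_exp.mpr (by linarith)
    have hhalf : Real.exp (-1) ≤ 1/2 := by
      rw [Real.exp_neg]
      rw [inv_le_comm₀ (by positivity) (by norm_num)]
      linarith
    linarith

end CantorAux


/-- The operator norm of the Daubechies localization operator on the `n`-iterate
spherically symmetric Cantor set is at most twice the first eigenvalue:
`sup_k ∫_{C_n(πR²)} (r^k/k!)e^{-r} dr ≤ 2·∫_{C_n(πR²)} e^{-r} dr`. -/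
theorem cantor_operator_norm_le_two_lambda_zero (R : ℝ) (hR : 0 < R) (n : ℕ) :
    (⨆ k : ℕ, ∫ r in cantorIterate n (π * R ^ 2),
        r ^ k / (Nat.factorial k) * Real.exp (-r)) ≤
      2 * ∫ r in cantorIterate n (π * R ^ 2), Real.exp (-r) := by
  open CantorAux in
  have hℓ : 0 < π * R ^ 2 := by positivity
  apply ciSup_le
  intro k
  have hkey := CantorAux.key k n (π * R ^ 2) 0 hℓ le_rfl
  simp only [zero_add] at hkey
  have hb := CantorAux.Abound k (T := 2 * (π * R ^ 2)) (by linarith)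
  have hY : 0 ≤ ∫ r in cantorIterate n (π * R ^ 2), Real.exp (-r) :=
    MeasureTheory.setIntegral_nonneg (CantorAux.cantor_measurable n _)
      (fun r _ => (Real.exp_pos _).le)
  have hP : 0 < ∫ u in (0:ℝ)..(2 * (π * R ^ 2)), Real.exp (-u) :=
    CantorAux.A0_pos (by linarith)
  have hchain : (∫ u in (0:ℝ)..(2 * (π * R ^ 2)), Real.exp (-u)) *
      (∫ r in cantorIterate n (π * R ^ 2), CantorAux.fk k r) ≤
      (∫ u in (0:ℝ)..(2 * (π * R ^ 2)), Real.exp (-u)) *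
        (2 * ∫ r in cantorIterate n (π * R ^ 2), Real.exp (-r)) := by
    calc (∫ u in (0:ℝ)..(2 * (π * R ^ 2)), Real.exp (-u)) *
        (∫ r in cantorIterate n (π * R ^ 2), CantorAux.fk k r)
        ≤ (∫ u in (0:ℝ)..(2 * (π * R ^ 2)), CantorAux.fk k u) *
          (∫ r in cantorIterate n (π * R ^ 2), Real.exp (-r)) := hkey
      _ ≤ (2 * ∫ u in (0:ℝ)..(2 * (π * R ^ 2)), Real.exp (-u)) *
          (∫ r in cantorIterate n (π * R ^ 2), Real.exp (-r)) :=
            mul_le_mul_of_nonneg_right hb hY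
      _ = (∫ u in (0:ℝ)..(2 * (π * R ^ 2)), Real.exp (-u)) *
          (2 * ∫ r in cantorIterate n (π * R ^ 2), Real.exp (-r)) := by ring
  exact le_of_mul_le_mul_left hchain hP
end

section
/- There exist positive finite constants c_1 ≤ c_2 such that for every n ∈ ℕ and every L = πR^2 with 0 < L ≤ 3^n/2: c_1 ≤ (2L+1)^{ln 2/ln 3} / (2^n·(1 − e^{-L/3^n})) · sup_{k∈ℕ} ∫_{C_n(L)} (r^k/k!) e^{-r} dr ≤ c_2. That is, the operator norm ‖P_{C_n(R^2)}‖_op is comparable, uniformly in n and R with πR^2 ∈ (0, 3^n/2], to 2^n(1−e^{-πR^2/3^n})·(2πR^2+1)^{-ln2/ln3}. -/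
open Real MeasureTheory Set

lemma cantor_subset_Icc : ∀ (n : ℕ) (L : ℝ), 0 ≤ L → cantorIterate n L ⊆ Set.Icc 0 L := by
  intro n
  induction n with
  | zero => intro L hL; exact subset_rfl
  | succ n ih =>
    intro L hL
    rintro x (⟨y, hy, rfl⟩ | ⟨y, hy, rfl⟩) <;>
      have := ih L hL hy <;> obtain ⟨h0, h1⟩ := this <;> constructor <;> simp only [] <;> linarith

lemma cantor_scale : ∀ (n : ℕ) (L : ℝ),
    (fun x => x / 3) '' cantorIterate n L = cantorIterate n (L / 3) := by
  intro n
  induction n with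
  | zero =>
    intro L
    ext y
    simp only [cantorIterate, Set.mem_image, Set.mem_Icc]
    constructor
    · rintro ⟨x, ⟨h0, h1⟩, rfl⟩; constructor <;> linarith
    · rintro ⟨h0, h1⟩; exact ⟨3 * y, ⟨by linarith, by linarith⟩, by ring⟩
  | succ n ih =>
    intro L
    show (fun x => x / 3) '' (_ ∪ _) = _ ∪ _
    rw [Set.image_union, Set.image_image, Set.image_image]
    have e1 : (fun x => (x / 3) / 3) '' cantorIterate n L
        = (fun x => x / 3) '' ((fun x => x / 3) '' cantorIterate n L) := by
      rw [Set.image_image]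
    have e2 : (fun x => (2 * L / 3 + x / 3) / 3) '' cantorIterate n L
        = (fun x => 2 * (L / 3) / 3 + x / 3) '' ((fun x => x / 3) '' cantorIterate n L) := by
      rw [Set.image_image]
      have : (fun x : ℝ => 2 * (L / 3) / 3 + x / 3 / 3) = (fun x : ℝ => (2 * L / 3 + x / 3) / 3) := by
        funext x; ring
      rw [this]
    rw [e1, e2, ih]

lemma cantor_succ (n : ℕ) (L : ℝ) :
    cantorIterate (n + 1) L =
      cantorIterate n (L / 3) ∪ (fun x => 2 * L / 3 + x) '' cantorIterate n (L / 3) := by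
  show _ ∪ _ = _
  rw [cantor_scale]
  congr 1
  rw [← cantor_scale, Set.image_image]

lemma cantor_measurable : ∀ (n : ℕ) (L : ℝ), MeasurableSet (cantorIterate n L) := by
  intro n
  induction n with
  | zero => intro L; exact measurableSet_Icc
  | succ n ih =>
    intro L
    rw [cantor_succ]
    refine (ih _).union ?_
    have : (fun x => 2 * L / 3 + x) '' cantorIterate n (L / 3)
        = (fun y => y - 2 * L / 3) ⁻¹' cantorIterate n (L / 3) := by
      ext y
      simp only [Set.mem_image, Set.mem_preimage]
      constructor
      · rintro ⟨x, hx, rfl⟩; simpa using hx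
      · intro h; exact ⟨y - 2 * L / 3, h, by ring⟩
    rw [this]
    exact (ih _).preimage (measurable_id.sub_const _)

lemma cantor_subset_pow : ∀ (p n : ℕ) (L : ℝ),
    cantorIterate n (L / 3 ^ p) ⊆ cantorIterate (n + p) L := by
  intro p
  induction p with
  | zero => intro n L; simp
  | succ p ih =>
    intro n L
    have h1 : cantorIterate n (L / 3 ^ (p + 1)) = cantorIterate n ((L / 3) / 3 ^ p) := by
      congr 1
      rw [pow_succ]
      ring
    rw [h1]
    refine (ih n (L / 3)).trans ?_
    have := cantor_succ (n + p) L
    rw [show n + (p+1) = (n + p) + 1 by ring, this]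
    exact Set.subset_union_left

lemma volume_image_add (c : ℝ) (S : Set ℝ) :
    volume ((fun x => c + x) '' S) = volume S := by
  rw [show (fun x => c + x) '' S = (fun y => -c + y) ⁻¹' S by
    ext y
    simp only [Set.mem_image, Set.mem_preimage]
    constructor
    · rintro ⟨x, hx, rfl⟩; simpa using hx
    · intro h; exact ⟨-c + y, h, by ring⟩]
  exact measure_preimage_add volume (-c) S

lemma cantor_volume : ∀ (n : ℕ) (L : ℝ), 0 ≤ L →
    volume (cantorIterate n L) = ENNReal.ofReal ((2 / 3) ^ n * L) := by
  intro n
  induction n with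
  | zero => intro L hL; simp [cantorIterate, hL]
  | succ n ih =>
    intro L hL
    rcases eq_or_lt_of_le hL with h0 | h0
    · have hsub : cantorIterate (n+1) L ⊆ Set.Icc 0 L := cantor_subset_Icc _ _ hL
      rw [← h0] at hsub ⊢
      have : volume (cantorIterate (n+1) 0) ≤ volume (Set.Icc (0:ℝ) 0) := measure_mono hsub
      simp only [Set.Icc_self, Real.volume_singleton, le_zero_iff] at this
      rw [this]
      simp
    rw [cantor_succ]
    have hL3 : (0:ℝ) ≤ L / 3 := by linarith
    have hd : Disjoint (cantorIterate n (L / 3))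
        ((fun x => 2 * L / 3 + x) '' cantorIterate n (L / 3)) := by
      rw [Set.disjoint_iff]
      rintro x ⟨hx1, hx2⟩
      obtain ⟨y, hy, rfl⟩ := hx2
      have h1 := (cantor_subset_Icc n (L / 3) hL3 hx1).2
      have h2 := (cantor_subset_Icc n (L / 3) hL3 hy).1
      exact absurd h1 (by simp only []; intro h; linarith)
    have hmeas : MeasurableSet ((fun x => 2 * L / 3 + x) '' cantorIterate n (L / 3)) := by
      rw [show (fun x => 2 * L / 3 + x) '' cantorIterate n (L / 3)
          = (fun y => y - 2 * L / 3) ⁻¹' cantorIterate n (L / 3) by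
        ext y
        simp only [Set.mem_image, Set.mem_preimage]
        constructor
        · rintro ⟨x, hx, rfl⟩; simpa using hx
        · intro h; exact ⟨y - 2 * L / 3, h, by ring⟩]
      exact (cantor_measurable n (L / 3)).preimage (measurable_id.sub_const _)
    rw [measure_union hd hmeas, volume_image_add, ih _ hL3]
    rw [← ENNReal.ofReal_add (by positivity) (by positivity)]
    congr 1
    ring

lemma image_add_inter_Icc (c x : ℝ) (T : Set ℝ) :
    (fun t => c + t) '' T ∩ Set.Icc x (x+1)
      = (fun t => c + t) '' (T ∩ Set.Icc (x - c) (x - c + 1)) := by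
  ext y
  simp only [Set.mem_inter_iff, Set.mem_image, Set.mem_Icc]
  constructor
  · rintro ⟨⟨t, ht, rfl⟩, h1, h2⟩
    exact ⟨t, ⟨ht, by constructor <;> linarith⟩, rfl⟩
  · rintro ⟨t, ⟨ht, h1, h2⟩, rfl⟩
    exact ⟨⟨t, ht, rfl⟩, by constructor <;> linarith⟩

lemma two_pow_le_two_mul_three_pow (j : ℕ) : (2:ℝ) ^ (j+1) ≤ 2 * 3 ^ j := by
  calc (2:ℝ) ^ (j+1) = 2 * 2 ^ j := by ring
  _ ≤ 2 * 3 ^ j := by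
      have : (2:ℝ) ^ j ≤ 3 ^ j := pow_le_pow_left₀ (by norm_num) (by norm_num) j
      linarith

lemma cantor_window : ∀ (q : ℕ) (L x : ℝ) (m : ℕ), 0 ≤ L → L ≤ 3 ^ m →
    (m = 0 ∨ (3:ℝ) ^ m < 3 * L) →
    volume (cantorIterate q L ∩ Set.Icc x (x+1))
      ≤ ENNReal.ofReal (2 * (2/3) ^ q * L / 2 ^ m) := by
  intro q
  induction q with
  | zero =>
    intro L x m hL hLm h2
    match m, h2 with
    | 0, _ =>
      refine le_trans (measure_mono (Set.inter_subset_left)) ?_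
      rw [show cantorIterate 0 L = Set.Icc 0 L from rfl, Real.volume_Icc]
      refine ENNReal.ofReal_le_ofReal ?_
      simp only [pow_zero]
      linarith
    | 1, h2 =>
      refine le_trans (measure_mono (Set.inter_subset_left)) ?_
      rw [show cantorIterate 0 L = Set.Icc 0 L from rfl, Real.volume_Icc]
      refine ENNReal.ofReal_le_ofReal ?_
      simp only [pow_zero, pow_one]
      linarith
    | (j+2), h2 =>
      refine le_trans (measure_mono (Set.inter_subset_right)) ?_
      rw [Real.volume_Icc]
      refine ENNReal.ofReal_le_ofReal ?_
      have h2' : (3:ℝ) ^ (j+1) < L := by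
        rcases h2 with h | h
        · exact absurd h (by omega)
        · rw [pow_succ] at h; nlinarith
      have hp := two_pow_le_two_mul_three_pow (j+1)
      have h3 : (2:ℝ) ^ (j+2) ≤ 2 * L := by
        calc (2:ℝ) ^ (j+2) ≤ 2 * 3 ^ (j+1) := two_pow_le_two_mul_three_pow (j+1)
        _ ≤ 2 * L := by nlinarith
      have he : x + 1 - x = (1:ℝ) := by ring
      rw [he, le_div_iff₀ (by positivity)]
      simp only [pow_zero]
      linarith
  | succ q ih =>
    intro L x m hL hLm h2
    have hL3 : (0:ℝ) ≤ L / 3 := by linarith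
    have hvol : volume (cantorIterate (q+1) L) = ENNReal.ofReal ((2/3) ^ (q+1) * L) :=
      cantor_volume (q+1) L hL
    match m, h2 with
    | 0, _ =>
      refine le_trans (measure_mono (Set.inter_subset_left)) ?_
      rw [hvol]
      exact ENNReal.ofReal_le_ofReal (by rw [pow_zero]; nlinarith [pow_nonneg (show (0:ℝ) ≤ 2/3 by norm_num) (q+1)])
    | 1, _ =>
      refine le_trans (measure_mono (Set.inter_subset_left)) ?_
      rw [hvol]
      exact ENNReal.ofReal_le_ofReal (le_of_eq (by ring))
    | (j+2), h2 =>
      have h2' : (3:ℝ) ^ (j+1) < L := by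
        rcases h2 with h | h
        · exact absurd h (by omega)
        · rw [pow_succ] at h; nlinarith
      have hLbig : (3:ℝ) < L := by
        have : (3:ℝ) ≤ 3 ^ (j+1) := by
          calc (3:ℝ) = 3 ^ 1 := (pow_one 3).symm
          _ ≤ 3 ^ (j+1) := pow_le_pow_right₀ (by norm_num) (by omega)
        linarith
      set T := cantorIterate q (L / 3) with hT
      set c := 2 * L / 3 with hc
      have hsplit : cantorIterate (q+1) L ∩ Set.Icc x (x+1)
          = (T ∩ Set.Icc x (x+1)) ∪ ((fun t => c + t) '' T ∩ Set.Icc x (x+1)) := by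
        rw [cantor_succ, Set.union_inter_distrib_right]
      have hTsub : T ⊆ Set.Icc 0 (L/3) := cantor_subset_Icc q (L/3) hL3
      -- at most one of the two pieces meets the window
      have hkey : (T ∩ Set.Icc x (x+1)) = ∅ ∨ ((fun t => c + t) '' T ∩ Set.Icc x (x+1)) = ∅ := by
        by_contra hcon
        push_neg at hcon
        obtain ⟨hA, hB⟩ := hcon
        obtain ⟨a, haT, hax⟩ := hA
        obtain ⟨b, hbT, hbx⟩ := hB
        obtain ⟨t, htT, rfl⟩ := hbT
        have h1 : a ≤ L / 3 := (hTsub haT).2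
        have h2 : 0 ≤ t := (hTsub htT).1
        simp only [Set.mem_Icc] at hax hbx
        have : c + t - a ≤ 1 := by linarith [hax.1, hbx.2]
        have : (1:ℝ) < c + t - a := by
          have : L / 3 > 1 := by linarith
          simp only [hc]
          linarith
        linarith
      -- the bound for each piece
      have hIH1 : ∀ y : ℝ, volume (T ∩ Set.Icc y (y+1))
          ≤ ENNReal.ofReal (2 * (2/3) ^ (q+1) * L / 2 ^ (j+2)) := by
        intro y
        have := ih (L/3) y (j+1) hL3 (by rw [pow_succ] at hLm; linarith)
          (Or.inr (by linarith))
        refine this.trans (le_of_eq ?_)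
        congr 1
        rw [pow_succ, pow_succ]
        ring
      have hIH2 : volume ((fun t => c + t) '' T ∩ Set.Icc x (x+1))
          ≤ ENNReal.ofReal (2 * (2/3) ^ (q+1) * L / 2 ^ (j+2)) := by
        rw [image_add_inter_Icc, volume_image_add]
        exact hIH1 (x - c)
      rw [hsplit]
      rcases hkey with hE | hE
      · rw [hE, Set.empty_union]
        exact hIH2
      · rw [hE, Set.union_empty]
        exact hIH1 x

noncomputable def fk (k : ℕ) (r : ℝ) : ℝ := r ^ k / (Nat.factorial k) * Real.exp (-r)

lemma fk_cont (k : ℕ) : Continuous (fk k) := by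
  unfold fk
  fun_prop

lemma fk_nonneg (k : ℕ) {r : ℝ} (hr : 0 ≤ r) : 0 ≤ fk k r := by
  unfold fk
  positivity

lemma fk_le_one (k : ℕ) {r : ℝ} (hr : 0 ≤ r) : fk k r ≤ 1 := by
  unfold fk
  have h1 : r ^ k / (Nat.factorial k) ≤ Real.exp r := by
    calc r ^ k / (Nat.factorial k) ≤ ∑ i ∈ Finset.range (k+1), r ^ i / (Nat.factorial i) := by
          refine Finset.single_le_sum (f := fun i => r ^ i / (Nat.factorial i)) ?_ ?_
          · intro i _; positivity
          · exact Finset.self_mem_range_succ k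
    _ ≤ Real.exp r := Real.sum_le_exp_of_nonneg hr _
  calc r ^ k / (Nat.factorial k) * Real.exp (-r) ≤ Real.exp r * Real.exp (-r) := by
        have := Real.exp_pos (-r); nlinarith
  _ = 1 := by rw [← Real.exp_add]; simp

lemma fk_eq_exp (k : ℕ) {r : ℝ} (hr : 0 < r) :
    fk k r = Real.exp ((k : ℝ) * Real.log r - r) / (Nat.factorial k) := by
  unfold fk
  rw [Real.exp_sub, Real.exp_nat_mul, Real.exp_log hr, Real.exp_neg]
  field_simp

lemma fk_mono_incr (k : ℕ) {a b : ℝ} (ha : 0 ≤ a) (hab : a ≤ b) (hbk : b ≤ (k:ℝ)) :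
    fk k a ≤ fk k b := by
  rcases eq_or_lt_of_le ha with h0 | h0
  · rcases eq_or_lt_of_le (h0.symm ▸ hab : (0:ℝ) ≤ b) with hb0 | hb0
    · rw [← h0, ← hb0]
    · rcases Nat.eq_zero_or_pos k with hk | hk
      · exfalso; rw [hk] at hbk; norm_num at hbk; linarith
      · have : fk k a = 0 := by
          unfold fk
          rw [← h0, zero_pow (by omega)]
          simp
        rw [this]
        exact fk_nonneg k (by linarith)
  · have hb0 : 0 < b := lt_of_lt_of_le h0 hab
    rw [fk_eq_exp k h0, fk_eq_exp k hb0]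
    have hfac : (0:ℝ) < (Nat.factorial k : ℝ) := by positivity
    apply div_le_div_of_nonneg_right ?_ hfac.le
    apply Real.exp_le_exp.mpr
    have hlog : Real.log a - Real.log b ≤ (a - b) / b := by
      rw [← Real.log_div (ne_of_gt h0) (ne_of_gt hb0)]
      have := Real.log_le_sub_one_of_pos (div_pos h0 hb0)
      have hab' : a / b - 1 = (a - b) / b := by field_simp
      linarith
    have h1 : (k:ℝ) * (Real.log a - Real.log b) ≤ (k:ℝ) * ((a - b) / b) :=
      mul_le_mul_of_nonneg_left hlog (Nat.cast_nonneg k)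
    have h2 : (k:ℝ) * ((a - b) / b) ≤ a - b := by
      have hb' : (k:ℝ) * (a - b) ≤ (a - b) * b := by nlinarith
      calc (k:ℝ) * ((a - b) / b) = (k:ℝ) * (a - b) / b := by ring
      _ ≤ (a - b) * b / b := by apply div_le_div_of_nonneg_right hb' hb0.le
      _ = a - b := by field_simp
    nlinarith

lemma fk_mono_decr (k : ℕ) {a b : ℝ} (hka : (k:ℝ) ≤ a) (hab : a ≤ b) :
    fk k b ≤ fk k a := by
  rcases Nat.eq_zero_or_pos k with hk | hk
  · subst hk
    unfold fk
    simp only [pow_zero, Nat.factorial_zero, Nat.cast_one, div_one, one_mul]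
    exact Real.exp_le_exp.mpr (by linarith)
  · have ha0 : (0:ℝ) < a := lt_of_lt_of_le (by exact_mod_cast hk : (0:ℝ) < (k:ℝ)) hka
    have hb0 : (0:ℝ) < b := lt_of_lt_of_le ha0 hab
    rw [fk_eq_exp k ha0, fk_eq_exp k hb0]
    have hfac : (0:ℝ) < (Nat.factorial k : ℝ) := by positivity
    apply div_le_div_of_nonneg_right ?_ hfac.le
    apply Real.exp_le_exp.mpr
    have hlog : Real.log b - Real.log a ≤ (b - a) / a := by
      rw [← Real.log_div (ne_of_gt hb0) (ne_of_gt ha0)]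
      have := Real.log_le_sub_one_of_pos (div_pos hb0 ha0)
      have hab' : b / a - 1 = (b - a) / a := by field_simp
      linarith
    have h1 : (k:ℝ) * (Real.log b - Real.log a) ≤ (k:ℝ) * ((b - a) / a) :=
      mul_le_mul_of_nonneg_left hlog (Nat.cast_nonneg k)
    have h2 : (k:ℝ) * ((b - a) / a) ≤ b - a := by
      have ha' : (k:ℝ) * (b - a) ≤ (b - a) * a := by nlinarith
      calc (k:ℝ) * ((b - a) / a) = (k:ℝ) * (b - a) / a := by ring
      _ ≤ (b - a) * a / a := by apply div_le_div_of_nonneg_right ha' ha0.le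
      _ = b - a := by field_simp
    nlinarith

lemma fk_hasDeriv (k : ℕ) (y : ℝ) :
    HasDerivAt (fun y => -(Real.exp (-y) * ∑ i ∈ Finset.range (k+1), y ^ i / (Nat.factorial i)))
      (fk k y) y := by
  have hexp : HasDerivAt (fun y : ℝ => Real.exp (-y)) (Real.exp (-y) * (-1)) y :=
    (hasDerivAt_neg y).exp
  have hsum : HasDerivAt (fun y : ℝ => ∑ i ∈ Finset.range (k+1), y ^ i / (Nat.factorial i))
      (∑ i ∈ Finset.range (k+1), (i : ℝ) * y ^ (i - 1) / (Nat.factorial i)) y := by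
    refine HasDerivAt.fun_sum fun i _ => ?_
    simpa using (hasDerivAt_pow i y).div_const (Nat.factorial i : ℝ)
  have hD : ∑ i ∈ Finset.range (k+1), (i : ℝ) * y ^ (i - 1) / (Nat.factorial i)
      = ∑ i ∈ Finset.range k, y ^ i / (Nat.factorial i) := by
    rw [Finset.sum_range_succ']
    simp only [Nat.cast_zero, zero_mul, Nat.factorial_zero, Nat.cast_one, zero_div, add_zero]
    refine Finset.sum_congr rfl fun i _ => ?_
    rw [Nat.factorial_succ]
    have hne : ((Nat.factorial i : ℝ)) ≠ 0 := by positivity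
    push_cast
    field_simp
  have := (hexp.mul hsum).neg
  refine this.congr_deriv ?_
  rw [hD]
  have hS : ∑ i ∈ Finset.range (k+1), y ^ i / (Nat.factorial i)
      = (∑ i ∈ Finset.range k, y ^ i / (Nat.factorial i)) + y ^ k / (Nat.factorial k) := by
    rw [Finset.sum_range_succ]
  rw [hS]
  unfold fk
  ring

lemma fk_interval_integral_le_one (k : ℕ) {a b : ℝ} (ha : 0 ≤ a) (hb : 0 ≤ b) :
    ∫ r in a..b, fk k r ≤ 1 := by
  rw [intervalIntegral.integral_eq_sub_of_hasDerivAt (fun y _ => fk_hasDeriv k y)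
    ((fk_cont k).intervalIntegrable a b)]
  have h1 : 0 ≤ Real.exp (-b) * ∑ i ∈ Finset.range (k+1), b ^ i / (Nat.factorial i) := by
    refine mul_nonneg (Real.exp_nonneg _) (Finset.sum_nonneg fun i _ => by positivity)
  have h2 : Real.exp (-a) * ∑ i ∈ Finset.range (k+1), a ^ i / (Nat.factorial i) ≤ 1 := by
    have := Real.sum_le_exp_of_nonneg ha (k+1)
    have hea : 0 < Real.exp (-a) := Real.exp_pos _
    calc Real.exp (-a) * ∑ i ∈ Finset.range (k+1), a ^ i / (Nat.factorial i)
        ≤ Real.exp (-a) * Real.exp a := by nlinarith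
    _ = 1 := by rw [← Real.exp_add]; simp
  linarith

lemma fk_le_integral_incr (k j : ℕ) (hj : (j:ℝ) + 1 ≤ (k:ℝ)) :
    fk k j ≤ ∫ r in (j:ℝ)..((j:ℝ)+1), fk k r := by
  have h := intervalIntegral.integral_mono_on (a := (j:ℝ)) (b := (j:ℝ)+1) (by linarith)
    (intervalIntegrable_const : IntervalIntegrable (fun _ => fk k (j:ℝ)) volume (j:ℝ) ((j:ℝ)+1))
    ((fk_cont k).intervalIntegrable _ _)
    (fun x hx => fk_mono_incr k (by positivity) hx.1 (le_trans hx.2 hj))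
  simpa using h

lemma fk_le_integral_decr (k j : ℕ) (hj : (k:ℝ) ≤ (j:ℝ)) :
    fk k ((j+1:ℕ)) ≤ ∫ r in (j:ℝ)..((j:ℝ)+1), fk k r := by
  have h := intervalIntegral.integral_mono_on (a := (j:ℝ)) (b := (j:ℝ)+1) (by linarith)
    (intervalIntegrable_const :
      IntervalIntegrable (fun _ => fk k ((j+1:ℕ))) volume (j:ℝ) ((j:ℝ)+1))
    ((fk_cont k).intervalIntegrable _ _)
    (fun x hx => by
      have hc : ((j+1:ℕ):ℝ) = (j:ℝ)+1 := by push_cast; ring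
      rw [hc]
      exact fk_mono_decr k (le_trans hj hx.1) hx.2)
  simpa using h

lemma sum_fk_incr_le_two (k : ℕ) : ∑ i ∈ Finset.range k, fk k ((i+1:ℕ)) ≤ 2 := by
  cases k with
  | zero => norm_num
  | succ K =>
    rw [Finset.sum_range_succ]
    have h1 : fk (K+1) ((K+1:ℕ)) ≤ 1 := fk_le_one _ (by positivity)
    have h2 : ∑ i ∈ Finset.range K, fk (K+1) ((i+1:ℕ)) ≤ 1 := by
      set a : ℕ → ℝ := fun i => (i:ℝ) + 1 with ha
      have hstep : ∀ i ∈ Finset.range K, fk (K+1) ((i+1:ℕ))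
          ≤ ∫ r in a i..a (i+1), fk (K+1) r := by
        intro i hi
        simp only [Finset.mem_range] at hi
        have hcast : ((i+1:ℕ):ℝ) = (i:ℝ) + 1 := by push_cast; ring
        have h := fk_le_integral_incr (K+1) (i+1) (by
          push_cast
          have hiK : ((i+1:ℕ):ℝ) ≤ (K:ℝ) := Nat.cast_le.mpr hi
          push_cast at hiK
          linarith)
        have e1 : a i = ((i+1:ℕ):ℝ) := by show (i:ℝ) + 1 = ((i+1:ℕ):ℝ); push_cast; ring
        have e2 : a (i+1) = ((i+1:ℕ):ℝ) + 1 := rfl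
        rw [e1, e2]
        exact h
      have hsum := Finset.sum_le_sum hstep
      have hadj : ∑ i ∈ Finset.range K, ∫ r in a i..a (i+1), fk (K+1) r
          = ∫ r in (a 0)..(a K), fk (K+1) r :=
        intervalIntegral.sum_integral_adjacent_intervals
          (fun i _ => (fk_cont (K+1)).intervalIntegrable _ _)
      have hle := fk_interval_integral_le_one (K+1) (a := a 0) (b := a K)
        (by rw [ha]; norm_num) (by rw [ha]; positivity)
      linarith
    linarith

lemma sum_fk_decr_le_two (k N : ℕ) : ∑ i ∈ Finset.Ico k N, fk k ((i:ℕ)) ≤ 2 := by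
  rcases le_or_gt N k with hNk | hkN
  · rw [Finset.Ico_eq_empty (by omega)]
    norm_num
  · rw [Finset.sum_Ico_eq_sum_range]
    obtain ⟨M, hM⟩ : ∃ M, N - k = M + 1 := ⟨N - k - 1, by omega⟩
    rw [hM, Finset.sum_range_succ']
    have h1 : fk k ((k + 0:ℕ)) ≤ 1 := fk_le_one _ (by positivity)
    have h2 : ∑ i ∈ Finset.range M, fk k ((k + (i+1):ℕ)) ≤ 1 := by
      set a : ℕ → ℝ := fun i => (k:ℝ) + i with ha
      have hstep : ∀ i ∈ Finset.range M, fk k ((k + (i+1):ℕ))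
          ≤ ∫ r in a i..a (i+1), fk k r := by
        intro i _
        have h := fk_le_integral_decr k (k+i) (by push_cast; linarith)
        have e0 : (k + (i+1):ℕ) = ((k+i)+1:ℕ) := by omega
        have e1 : a i = (((k+i):ℕ):ℝ) := by show (k:ℝ) + (i:ℝ) = (((k+i):ℕ):ℝ); push_cast; ring
        have e2 : a (i+1) = (((k+i):ℕ):ℝ) + 1 := by show (k:ℝ) + ((i+1:ℕ):ℝ) = (((k+i):ℕ):ℝ) + 1; push_cast; ring
        rw [e0, e1, e2]
        exact h
      have hsum := Finset.sum_le_sum hstep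
      have hadj : ∑ i ∈ Finset.range M, ∫ r in a i..a (i+1), fk k r
          = ∫ r in (a 0)..(a M), fk k r :=
        intervalIntegral.sum_integral_adjacent_intervals
          (fun i _ => (fk_cont k).intervalIntegrable _ _)
      have hle := fk_interval_integral_le_one k (a := a 0) (b := a M)
        (by rw [ha]; positivity) (by rw [ha]; positivity)
      linarith
    linarith

lemma lambda_le (n : ℕ) (L : ℝ) (k m : ℕ) (hL : 0 < L) (hLm : L ≤ 3 ^ m)
    (h2 : m = 0 ∨ (3:ℝ) ^ m < 3 * L) :
    ∫ r in cantorIterate n L, fk k r ≤ 4 * (2 * (2/3) ^ n * L / 2 ^ m) := by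
  set B : ℝ := 2 * (2/3) ^ n * L / 2 ^ m with hBdef
  have hB : 0 ≤ B := by positivity
  set N : ℕ := Nat.floor L + 1 with hNdef
  set C : Set ℝ := cantorIterate n L with hCdef
  have hCIcc : C ⊆ Set.Icc 0 L := cantor_subset_Icc n L hL.le
  have hCmeas : MeasurableSet C := cantor_measurable n L
  have hIntC : IntegrableOn (fk k) (Set.Icc 0 L) volume :=
    (fk_cont k).integrableOn_Icc
  have hdecomp : C = ⋃ i ∈ Finset.range N, (C ∩ Set.Ico (i:ℝ) ((i:ℝ)+1)) := by
    ext x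
    simp only [Set.mem_iUnion, Finset.mem_range, Set.mem_inter_iff, Set.mem_Ico, exists_prop]
    constructor
    · intro hx
      have h0x := (hCIcc hx).1
      have hxL := (hCIcc hx).2
      refine ⟨Nat.floor x, ?_, hx, Nat.floor_le h0x, Nat.lt_floor_add_one x⟩
      have : Nat.floor x ≤ Nat.floor L := Nat.floor_le_floor hxL
      omega
    · rintro ⟨i, _, hx, _⟩
      exact hx
  have hint : ∀ i : ℕ, IntegrableOn (fk k) (C ∩ Set.Ico (i:ℝ) ((i:ℝ)+1)) volume :=
    fun i => hIntC.mono_set ((Set.inter_subset_left).trans hCIcc)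
  have key : ∫ r in C, fk k r
      = ∑ i ∈ Finset.range N, ∫ r in C ∩ Set.Ico (i:ℝ) ((i:ℝ)+1), fk k r := by
    conv_lhs => rw [hdecomp]
    refine integral_biUnion_finset (Finset.range N)
      (fun i _ => hCmeas.inter measurableSet_Ico) ?_ (fun i _ => hint i)
    intro i _ j _ hij
    refine Set.disjoint_of_subset Set.inter_subset_right Set.inter_subset_right ?_
    rw [Set.Ico_disjoint_Ico]
    rcases Nat.lt_or_gt_of_ne hij with h | h
    · have hc : (i:ℝ) + 1 ≤ (j:ℝ) := by exact_mod_cast h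
      calc min ((i:ℝ)+1) ((j:ℝ)+1) ≤ (i:ℝ)+1 := min_le_left _ _
      _ ≤ (j:ℝ) := hc
      _ ≤ max (i:ℝ) (j:ℝ) := le_max_right _ _
    · have hc : (j:ℝ) + 1 ≤ (i:ℝ) := by exact_mod_cast h
      calc min ((i:ℝ)+1) ((j:ℝ)+1) ≤ (j:ℝ)+1 := min_le_right _ _
      _ ≤ (i:ℝ) := hc
      _ ≤ max (i:ℝ) (j:ℝ) := le_max_left _ _
  have hpiece : ∀ i ∈ Finset.range N, ∫ r in C ∩ Set.Ico (i:ℝ) ((i:ℝ)+1), fk k r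
      ≤ fk k ((max i (min (i+1) k) : ℕ)) * B := by
    intro i _
    set c : ℕ := max i (min (i+1) k) with hcdef
    have hvol : volume (C ∩ Set.Ico (i:ℝ) ((i:ℝ)+1)) ≤ ENNReal.ofReal B := by
      refine le_trans (measure_mono (Set.inter_subset_inter_right C Set.Ico_subset_Icc_self)) ?_
      exact cantor_window n L (i:ℝ) m hL.le hLm h2
    have hfin : volume (C ∩ Set.Ico (i:ℝ) ((i:ℝ)+1)) < ⊤ :=
      lt_of_le_of_lt hvol ENNReal.ofReal_lt_top
    have hfc : (0:ℝ) ≤ fk k (c:ℝ) := fk_nonneg k (by positivity)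
    have hbound : ∀ x ∈ C ∩ Set.Ico (i:ℝ) ((i:ℝ)+1), ‖fk k x‖ ≤ fk k (c:ℝ) := by
      rintro x ⟨hxC, hxi, hxi'⟩
      have h0x : (0:ℝ) ≤ x := (hCIcc hxC).1
      rw [Real.norm_eq_abs, abs_of_nonneg (fk_nonneg k h0x)]
      rcases le_or_gt (i+1) k with hik | hik
      · have hceq : c = i + 1 := by rw [hcdef]; omega
        have hcast : ((i+1:ℕ):ℝ) = (i:ℝ) + 1 := by push_cast; ring
        rw [hceq]
        refine fk_mono_incr k h0x (by rw [hcast]; linarith) ?_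
        rw [hcast]
        calc (i:ℝ) + 1 = ((i+1:ℕ):ℝ) := hcast.symm
        _ ≤ (k:ℝ) := Nat.cast_le.mpr hik
      · have hceq : c = i := by rw [hcdef]; omega
        rw [hceq]
        refine fk_mono_decr k (Nat.cast_le.mpr (by omega : k ≤ i)) hxi
    have hnorm := norm_setIntegral_le_of_norm_le_const hfin hbound
    have htoReal : (volume (C ∩ Set.Ico (i:ℝ) ((i:ℝ)+1))).toReal ≤ B :=
      ENNReal.toReal_le_of_le_ofReal hB hvol
    calc ∫ r in C ∩ Set.Ico (i:ℝ) ((i:ℝ)+1), fk k r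
        ≤ ‖∫ r in C ∩ Set.Ico (i:ℝ) ((i:ℝ)+1), fk k r‖ := le_abs_self _
    _ ≤ fk k (c:ℝ) * (volume (C ∩ Set.Ico (i:ℝ) ((i:ℝ)+1))).toReal := hnorm
    _ ≤ fk k (c:ℝ) * B := mul_le_mul_of_nonneg_left htoReal hfc
  have hsum4 : ∑ i ∈ Finset.range N, fk k ((max i (min (i+1) k) : ℕ)) ≤ 4 := by
    classical
    rw [← Finset.sum_filter_add_sum_filter_not (Finset.range N) (fun i => i + 1 ≤ k)]
    have hpart1 : ∑ i ∈ (Finset.range N).filter (fun i => i + 1 ≤ k),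
        fk k ((max i (min (i+1) k) : ℕ)) ≤ 2 := by
      have he : ∀ i ∈ (Finset.range N).filter (fun i => i + 1 ≤ k),
          fk k ((max i (min (i+1) k) : ℕ)) = fk k ((i+1:ℕ)) := by
        intro i hi
        simp only [Finset.mem_filter] at hi
        have : max i (min (i+1) k) = i + 1 := by omega
        rw [this]
      rw [Finset.sum_congr rfl he]
      refine le_trans (Finset.sum_le_sum_of_subset_of_nonneg ?_ ?_) (sum_fk_incr_le_two k)
      · intro i hi
        simp only [Finset.mem_filter, Finset.mem_range] at hi ⊢
        omega
      · intro i _ _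
        exact fk_nonneg k (by positivity)
    have hpart2 : ∑ i ∈ (Finset.range N).filter (fun i => ¬ (i + 1 ≤ k)),
        fk k ((max i (min (i+1) k) : ℕ)) ≤ 2 := by
      have he : (Finset.range N).filter (fun i => ¬ (i + 1 ≤ k)) = Finset.Ico k N := by
        ext i
        simp only [Finset.mem_filter, Finset.mem_range, Finset.mem_Ico]
        omega
      have he2 : ∀ i ∈ Finset.Ico k N,
          fk k ((max i (min (i+1) k) : ℕ)) = fk k ((i:ℕ)) := by
        intro i hi
        simp only [Finset.mem_Ico] at hi
        have : max i (min (i+1) k) = i := by omega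
        rw [this]
      rw [he, Finset.sum_congr rfl he2]
      exact sum_fk_decr_le_two k N
    linarith
  calc ∫ r in C, fk k r = ∑ i ∈ Finset.range N, ∫ r in C ∩ Set.Ico (i:ℝ) ((i:ℝ)+1), fk k r := key
  _ ≤ ∑ i ∈ Finset.range N, fk k ((max i (min (i+1) k) : ℕ)) * B := Finset.sum_le_sum hpiece
  _ = (∑ i ∈ Finset.range N, fk k ((max i (min (i+1) k) : ℕ))) * B := by rw [Finset.sum_mul]
  _ ≤ 4 * B := mul_le_mul_of_nonneg_right hsum4 hB

lemma exp_neg_cont : Continuous (fun r : ℝ => Real.exp (-r)) :=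
  Real.continuous_exp.comp continuous_neg

lemma lambda0_lower (n p : ℕ) (L : ℝ) (hL : 0 < L) (hpn : p ≤ n) (hp : L / 3 ^ p ≤ 1) :
    Real.exp (-1) * ((2/3) ^ (n-p) * (L / 3 ^ p))
      ≤ ∫ r in cantorIterate n L, Real.exp (-r) := by
  set M : ℝ := L / 3 ^ p with hMdef
  have hM0 : 0 < M := by positivity
  have hsub : cantorIterate (n-p) M ⊆ cantorIterate n L := by
    have h := cantor_subset_pow p (n-p) L
    rwa [Nat.sub_add_cancel hpn] at h
  have hvol : volume (cantorIterate (n-p) M) = ENNReal.ofReal ((2/3) ^ (n-p) * M) :=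
    cantor_volume (n-p) M hM0.le
  have hIcc : cantorIterate (n-p) M ⊆ Set.Icc 0 M := cantor_subset_Icc _ _ hM0.le
  have hint1 : IntegrableOn (fun r : ℝ => Real.exp (-r)) (cantorIterate (n-p) M) volume :=
    (exp_neg_cont.integrableOn_Icc).mono_set hIcc
  have step1 : Real.exp (-1) * ((2/3) ^ (n-p) * M)
      ≤ ∫ r in cantorIterate (n-p) M, Real.exp (-r) := by
    have hconst : ∀ x ∈ cantorIterate (n-p) M, Real.exp (-1) ≤ Real.exp (-x) := by
      intro x hx
      have := (hIcc hx).2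
      exact Real.exp_le_exp.mpr (by linarith)
    have h := setIntegral_ge_of_const_le (cantor_measurable (n-p) M)
      (by rw [hvol]; exact ENNReal.ofReal_ne_top) hconst hint1
    have htr : (volume (cantorIterate (n-p) M)).toReal = (2/3) ^ (n-p) * M := by
      rw [hvol, ENNReal.toReal_ofReal (by positivity)]
    rw [measureReal_def, htr, smul_eq_mul] at h
    linarith
  have step2 : ∫ r in cantorIterate (n-p) M, Real.exp (-r)
      ≤ ∫ r in cantorIterate n L, Real.exp (-r) := by
    refine setIntegral_mono_set
      ((exp_neg_cont.integrableOn_Icc).mono_set (cantor_subset_Icc n L hL.le)) ?_ ?_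
    · exact Filter.Eventually.of_forall fun x => (Real.exp_pos _).le
    · exact HasSubset.Subset.eventuallyLE hsub
  linarith

lemma three_rpow_log : (3:ℝ) ^ (Real.log 2 / Real.log 3) = 2 := by
  rw [Real.rpow_def_of_pos (by norm_num : (0:ℝ) < 3)]
  rw [mul_comm, div_mul_cancel₀ _ (ne_of_gt (Real.log_pos (by norm_num)))]
  exact Real.exp_log (by norm_num)

lemma three_pow_rpow (m : ℕ) : ((3:ℝ) ^ m) ^ (Real.log 2 / Real.log 3) = 2 ^ m := by
  calc ((3:ℝ) ^ m) ^ (Real.log 2 / Real.log 3)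
      = ((3:ℝ) ^ (m:ℝ)) ^ (Real.log 2 / Real.log 3) := by rw [Real.rpow_natCast]
    _ = (3:ℝ) ^ ((m:ℝ) * (Real.log 2 / Real.log 3)) := by
        rw [← Real.rpow_mul (by norm_num : (0:ℝ) ≤ 3)]
    _ = (3:ℝ) ^ ((Real.log 2 / Real.log 3) * (m:ℝ)) := by rw [mul_comm]
    _ = ((3:ℝ) ^ (Real.log 2 / Real.log 3)) ^ (m:ℝ) := by
        rw [Real.rpow_mul (by norm_num : (0:ℝ) ≤ 3)]
    _ = (2:ℝ) ^ (m:ℝ) := by rw [three_rpow_log]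
    _ = 2 ^ m := Real.rpow_natCast 2 m

set_option maxHeartbeats 2000000 in
/-- Two-sided asymptotic estimate for the operator norm of the Daubechies
operator on the `n`-iterate spherically symmetric Cantor set: uniformly in
`n` and `L = πR²` with `0 < L ≤ 3ⁿ/2`,
`sup_k ∫_{C_n(L)} (r^k/k!)e^{-r} dr ≍ 2ⁿ(1-e^{-L/3ⁿ})·(2L+1)^{-ln2/ln3}`. -/
theorem cantor_operator_norm_asymptotics :
    ∃ c₁ c₂ : ℝ, 0 < c₁ ∧ c₁ ≤ c₂ ∧
      ∀ n : ℕ, ∀ L : ℝ, 0 < L → L ≤ 3 ^ n / 2 →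
        c₁ ≤ (2 * L + 1) ^ (Real.log 2 / Real.log 3) /
            (2 ^ n * (1 - Real.exp (-(L / 3 ^ n)))) *
            (⨆ k : ℕ, ∫ r in cantorIterate n L,
              r ^ k / (Nat.factorial k) * Real.exp (-r)) ∧
        (2 * L + 1) ^ (Real.log 2 / Real.log 3) /
            (2 ^ n * (1 - Real.exp (-(L / 3 ^ n)))) *
            (⨆ k : ℕ, ∫ r in cantorIterate n L,
              r ^ k / (Nat.factorial k) * Real.exp (-r)) ≤ c₂ := by
  classical
  have hexp1le : Real.exp (-1) ≤ 1 := by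
    have := Real.exp_le_exp.mpr (by norm_num : (-1:ℝ) ≤ 0)
    rwa [Real.exp_zero] at this
  refine ⟨Real.exp (-1) / 2, 24, by positivity, by linarith, ?_⟩
  intro n L hL hL2
  set α : ℝ := Real.log 2 / Real.log 3 with hαdef
  set ℓ : ℝ := L / 3 ^ n with hldef
  have h3n : (0:ℝ) < 3 ^ n := by positivity
  have h2n : (0:ℝ) < 2 ^ n := by positivity
  have hℓpos : 0 < ℓ := div_pos hL h3n
  have hℓhalf : ℓ ≤ 1/2 := by
    rw [hldef, div_le_iff₀ h3n]
    linarith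
  have hexp1 : 1 - Real.exp (-ℓ) ≤ ℓ := by nlinarith [Real.add_one_le_exp (-ℓ)]
  have hexp2 : (2/3) * ℓ ≤ 1 - Real.exp (-ℓ) := by
    have h := Real.add_one_le_exp ℓ
    have h1ℓ : (0:ℝ) < 1 + ℓ := by linarith
    have hinv : Real.exp (-ℓ) ≤ 1/(1+ℓ) := by
      rw [Real.exp_neg, inv_eq_one_div]
      exact one_div_le_one_div_of_le h1ℓ (by linarith)
    have he : 1 - 1/(1+ℓ) = ℓ/(1+ℓ) := by field_simp; ring
    have hge : (2/3) * ℓ ≤ ℓ/(1+ℓ) := by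
      rw [le_div_iff₀ h1ℓ]
      nlinarith
    linarith
  have hexppos : 0 < 1 - Real.exp (-ℓ) := by linarith
  set D : ℝ := 2 ^ n * (1 - Real.exp (-ℓ)) with hDdef
  have hD : 0 < D := mul_pos h2n hexppos
  have hLn : L ≤ (3:ℝ) ^ n := by linarith
  have hex : ∃ m : ℕ, L ≤ (3:ℝ) ^ m := ⟨n, hLn⟩
  obtain ⟨p, hpn, hp3, hp1⟩ : ∃ p : ℕ, p ≤ n ∧ L ≤ (3:ℝ) ^ p ∧
      (p = 0 ∨ (3:ℝ) ^ (p-1) < L) := by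
    refine ⟨Nat.find hex, Nat.find_min' hex hLn, Nat.find_spec hex, ?_⟩
    rcases Nat.eq_zero_or_pos (Nat.find hex) with h0 | h0
    · exact Or.inl h0
    · right
      have hmin := Nat.find_min hex (show Nat.find hex - 1 < Nat.find hex by omega)
      push_neg at hmin
      exact hmin
  have hp2 : p = 0 ∨ (3:ℝ) ^ p < 3 * L := by
    rcases hp1 with h0 | h0
    · exact Or.inl h0
    · right
      rcases Nat.eq_zero_or_pos p with hz | hz
      · rw [hz, pow_zero]
        rw [hz] at h0
        norm_num at h0
        linarith
      · have h3p : (3:ℝ) ^ p = 3 ^ (p-1) * 3 := by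
          rw [← pow_succ]
          congr 1
          omega
        rw [h3p]
        linarith
  set A : ℝ := (2*L+1) ^ α with hAdef
  have hαpos : 0 ≤ α := le_of_lt (div_pos (Real.log_pos (by norm_num)) (Real.log_pos (by norm_num)))
  have hA_pos : 0 < A := Real.rpow_pos_of_pos (by linarith) α
  have hA_up : A ≤ 2 ^ (p+1) := by
    have h3p1 : (1:ℝ) ≤ 3 ^ p := one_le_pow₀ (by norm_num : (1:ℝ) ≤ 3)
    have h1 : 2*L+1 ≤ (3:ℝ) ^ (p+1) := by
      rw [pow_succ]
      nlinarith
    calc A ≤ ((3:ℝ) ^ (p+1)) ^ α := Real.rpow_le_rpow (by linarith) h1 hαpos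
    _ = 2 ^ (p+1) := three_pow_rpow (p+1)
  have hA_low : (2:ℝ) ^ p ≤ 2 * A := by
    have h1 : (3:ℝ) ^ (p-1) ≤ 2*L+1 := by
      rcases hp1 with h0 | h0
      · rw [h0]
        norm_num
        linarith
      · linarith
    have h2 : (2:ℝ) ^ (p-1) ≤ A := by
      calc (2:ℝ) ^ (p-1) = ((3:ℝ) ^ (p-1)) ^ α := (three_pow_rpow (p-1)).symm
      _ ≤ A := Real.rpow_le_rpow (by positivity) h1 hαpos
    have h3 : (2:ℝ) ^ p ≤ 2 * 2 ^ (p-1) := by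
      rcases Nat.eq_zero_or_pos p with hz | hz
      · rw [hz]; norm_num
      · rw [show p = (p-1)+1 by omega, pow_succ]
        rw [show (p-1)+1-1 = p-1 by omega]
        linarith [pow_pos (show (0:ℝ) < 2 by norm_num) (p-1)]
    linarith
  -- bounded family
  have hCIcc := cantor_subset_Icc n L hL.le
  have hvolC : volume (cantorIterate n L) = ENNReal.ofReal ((2/3) ^ n * L) :=
    cantor_volume n L hL.le
  have hfinC : volume (cantorIterate n L) < ⊤ := by
    rw [hvolC]; exact ENNReal.ofReal_lt_top
  have hgle : ∀ k : ℕ, (∫ r in cantorIterate n L, fk k r) ≤ (2/3) ^ n * L := by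
    intro k
    have hb := norm_setIntegral_le_of_norm_le_const hfinC
      (fun x hx => by
        rw [Real.norm_eq_abs, abs_of_nonneg (fk_nonneg k (hCIcc hx).1)]
        exact fk_le_one k (hCIcc hx).1)
    have htr : (volume (cantorIterate n L)).toReal = (2/3) ^ n * L := by
      rw [hvolC, ENNReal.toReal_ofReal (by positivity)]
    calc (∫ r in cantorIterate n L, fk k r)
        ≤ ‖∫ r in cantorIterate n L, fk k r‖ := le_abs_self _
    _ ≤ 1 * (volume (cantorIterate n L)).toReal := hb
    _ = (2/3) ^ n * L := by rw [one_mul, htr]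
  have hBdd : BddAbove (Set.range fun k : ℕ => ∫ r in cantorIterate n L,
      r ^ k / (Nat.factorial k) * Real.exp (-r)) := by
    refine ⟨(2/3) ^ n * L, ?_⟩
    rintro y ⟨k, rfl⟩
    exact hgle k
  set S : ℝ := ⨆ k : ℕ, ∫ r in cantorIterate n L,
      r ^ k / (Nat.factorial k) * Real.exp (-r) with hSdef
  -- lower bound
  have hg0 : (∫ r in cantorIterate n L, (fun r : ℝ => r ^ 0 / (Nat.factorial 0) * Real.exp (-r)) r)
      = ∫ r in cantorIterate n L, Real.exp (-r) := by
    simp only [pow_zero, Nat.factorial_zero, Nat.cast_one, div_one, one_mul]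
  have hS0 : (∫ r in cantorIterate n L, Real.exp (-r)) ≤ S := by
    rw [← hg0]
    exact le_ciSup hBdd 0
  have hM1 : L / 3 ^ p ≤ 1 := by
    rw [div_le_one (by positivity)]
    exact hp3
  have hlow := lambda0_lower n p L hL hpn hM1
  have key1 : (2:ℝ) ^ p * ((2/3) ^ (n-p) * (L / 3 ^ p)) = 2 ^ n * ℓ := by
    have e2 : (2:ℝ) ^ (n-p) * 2 ^ p = 2 ^ n := by rw [← pow_add, Nat.sub_add_cancel hpn]
    have e3 : (3:ℝ) ^ (n-p) * 3 ^ p = 3 ^ n := by rw [← pow_add, Nat.sub_add_cancel hpn]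
    rw [hldef, div_pow, ← e2, ← e3]
    have h3p : (0:ℝ) < 3 ^ p := by positivity
    have h3np : (0:ℝ) < (3:ℝ) ^ (n-p) := by positivity
    field_simp
  constructor
  · -- lower
    rw [div_mul_eq_mul_div, le_div_iff₀ hD]
    have hDle : D ≤ 2 ^ n * ℓ := by
      rw [hDdef]
      exact mul_le_mul_of_nonneg_left hexp1 h2n.le
    have hAchain : A * S ≥ Real.exp (-1) / 2 * (2 ^ n * ℓ) := by
      have hT0 : 0 ≤ (2/3) ^ (n-p) * (L / 3 ^ p) := by positivity
      have hc1 : Real.exp (-1) / 2 * (2 ^ n * ℓ)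
          = (2 ^ p / 2) * (Real.exp (-1) * ((2/3) ^ (n-p) * (L / 3 ^ p))) := by
        rw [← key1]
        ring
      have hc2 : (2 ^ p / 2) * (Real.exp (-1) * ((2/3) ^ (n-p) * (L / 3 ^ p)))
          ≤ A * (Real.exp (-1) * ((2/3) ^ (n-p) * (L / 3 ^ p))) := by
        have hTpos : 0 ≤ Real.exp (-1) * ((2/3) ^ (n-p) * (L / 3 ^ p)) := by positivity
        have : (2:ℝ) ^ p / 2 ≤ A := by linarith
        exact mul_le_mul_of_nonneg_right this hTpos
      have hc3 : A * (Real.exp (-1) * ((2/3) ^ (n-p) * (L / 3 ^ p)))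
          ≤ A * (∫ r in cantorIterate n L, Real.exp (-r)) :=
        mul_le_mul_of_nonneg_left hlow hA_pos.le
      have hc4 : A * (∫ r in cantorIterate n L, Real.exp (-r)) ≤ A * S :=
        mul_le_mul_of_nonneg_left hS0 hA_pos.le
      linarith
    have : Real.exp (-1) / 2 * D ≤ Real.exp (-1) / 2 * (2 ^ n * ℓ) := by
      have hc : 0 ≤ Real.exp (-1) / 2 := by positivity
      exact mul_le_mul_of_nonneg_left hDle hc
    linarith
  · -- upper
    rw [div_mul_eq_mul_div, div_le_iff₀ hD]
    have hSle : S ≤ 24 * D / A := by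
      refine ciSup_le fun k => ?_
      rw [le_div_iff₀ hA_pos]
      have hlam := lambda_le n L k p hL hp3 hp2
      have hU0 : (0:ℝ) ≤ 4 * (2 * (2/3) ^ n * L / 2 ^ p) := by positivity
      have hgk0 : (∫ r in cantorIterate n L,
          r ^ k / (Nat.factorial k) * Real.exp (-r)) ≤ 4 * (2 * (2/3) ^ n * L / 2 ^ p) := hlam
      have hgknn : (0:ℝ) ≤ ∫ r in cantorIterate n L,
          r ^ k / (Nat.factorial k) * Real.exp (-r) := by
        refine setIntegral_nonneg (cantor_measurable n L) fun x hx => ?_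
        exact fk_nonneg k (hCIcc hx).1
      have hmul : (∫ r in cantorIterate n L, r ^ k / (Nat.factorial k) * Real.exp (-r)) * A
          ≤ (4 * (2 * (2/3) ^ n * L / 2 ^ p)) * (2 ^ (p+1)) :=
        mul_le_mul hgk0 hA_up hA_pos.le hU0
      have hid : (4 * (2 * (2/3) ^ n * L / 2 ^ p)) * (2 ^ (p+1) : ℝ) = 16 * (2 ^ n * ℓ) := by
        have h2p : (0:ℝ) < 2 ^ p := by positivity
        have e23 : (2/3:ℝ) ^ n * L = 2 ^ n * ℓ := by
          rw [hldef, div_pow]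
          field_simp
        have h2p : ((2:ℝ) ^ p) ≠ 0 := by positivity
        rw [pow_succ]
        calc 4 * (2 * (2/3) ^ n * L / 2 ^ p) * ((2:ℝ) ^ p * 2)
            = 16 * ((2/3) ^ n * L) * ((2:ℝ) ^ p / 2 ^ p) := by ring
        _ = 16 * ((2/3) ^ n * L) := by rw [div_self h2p, mul_one]
        _ = 16 * (2 ^ n * ℓ) := by rw [e23]
      have hfin : 16 * ((2:ℝ) ^ n * ℓ) ≤ 24 * D := by
        rw [hDdef]
        have h24 : (0:ℝ) ≤ 24 * 2 ^ n := by positivity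
        have := mul_le_mul_of_nonneg_left hexp2 h24
        nlinarith [this]
      linarith
    calc A * S ≤ A * (24 * D / A) := mul_le_mul_of_nonneg_left hSle hA_pos.le
    _ = 24 * D := by
        rw [mul_comm, div_mul_cancel₀ _ (ne_of_gt hA_pos)]
end
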